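/- arXiv:2004.04857 — 4 statements merged into one kernel-verified Lean document; each statement's English description precedes it below -/
import Mathlib

section
/- Let u ∈ H^{-s}(𝕋, ℝ) with 0 ≤ s < 1/2 and mean zero. Then for every f in the Hardy–Sobolev space H^{1/2}_+, the pairing ⟨u | f·conj(f)⟩ is well defined and satisfies |⟨u | f·conj(f)⟩| ≤ (1/2)‖f‖_{1/2}² + η_s(‖u‖_{-s})·‖f‖_0², where η_s(r) = r·(2(1+r))^α · C², α = (1+2s)/(1-2s), and C > 0 is a constant depending only on s. -/
open scoped BigOperators ComplexConjugate

noncomputable def jap (n : ℤ) : ℝ := max 1 |(n : ℝ)|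

noncomputable def hnormSq (s : ℝ) (v : ℤ → ℂ) : ℝ :=
  ∑' n : ℤ, jap n ^ (2 * s) * ‖v n‖ ^ 2

def memH (s : ℝ) (v : ℤ → ℂ) : Prop :=
  Summable fun n : ℤ => jap n ^ (2 * s) * ‖v n‖ ^ 2

noncomputable def hnorm (s : ℝ) (v : ℤ → ℂ) : ℝ := Real.sqrt (hnormSq s v)

/-- η_s(r) = r (2(1+r))^α C², α = (1+2s)/(1-2s). -/
noncomputable def etaS (s C r : ℝ) : ℝ := r * (2 * (1 + r)) ^ ((1 + 2*s)/(1 - 2*s)) * C ^ 2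


open scoped ENNReal NNReal

namespace StmtAux


lemma jap_one_le (n : ℤ) : 1 ≤ jap n := le_max_left _ _
lemma jap_pos (n : ℤ) : 0 < jap n := lt_of_lt_of_le one_pos (jap_one_le n)
lemma jap_neg (n : ℤ) : jap (-n) = jap n := by simp [jap]
lemma jap_nat (j : ℕ) : jap (j : ℤ) = max 1 (j : ℝ) := by
  rw [jap]; congr 1; rw [abs_of_nonneg]; · norm_num
  · positivity
lemma jap_mono {m n : ℤ} (hm : 0 ≤ m) (hmn : m ≤ n) : jap m ≤ jap n := by
  rw [jap, jap]
  refine max_le_max le_rfl ?_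
  rw [abs_of_nonneg (by exact_mod_cast hm), abs_of_nonneg (by exact_mod_cast hm.trans hmn)]
  exact_mod_cast hmn

noncomputable def japE (n : ℤ) : ℝ≥0∞ := ENNReal.ofReal (jap n)

lemma japE_rpow (n : ℤ) (t : ℝ) : japE n ^ t = ENNReal.ofReal (jap n ^ t) := by
  rw [japE]; exact ENNReal.ofReal_rpow_of_pos (jap_pos n)
lemma japE_ne_zero (n : ℤ) : japE n ≠ 0 := by
  simp [japE, ENNReal.ofReal_eq_zero, not_le, jap_pos n]
lemma japE_ne_top (n : ℤ) : japE n ≠ ⊤ := ENNReal.ofReal_ne_top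
lemma japE_neg (n : ℤ) : japE (-n) = japE n := by rw [japE, japE, jap_neg]
lemma japE_zero : japE 0 = 1 := by simp [japE, jap]
lemma japE_rpow_ne_top (n : ℤ) (t : ℝ) : japE n ^ t ≠ ⊤ := by
  rw [japE_rpow]; exact ENNReal.ofReal_ne_top
lemma japE_rpow_ne_zero (n : ℤ) (t : ℝ) : japE n ^ t ≠ 0 := by
  rw [japE_rpow]
  simp [ENNReal.ofReal_eq_zero, not_le, Real.rpow_pos_of_pos (jap_pos n)]
lemma japE_rpow_mul_rpow (n : ℤ) (a b : ℝ) : japE n ^ a * japE n ^ b = japE n ^ (a + b) :=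
  (ENNReal.rpow_add _ _ (japE_ne_zero n) (japE_ne_top n)).symm
lemma japE_rpow_anti {m k : ℤ} (hm : 0 ≤ m) (hmk : m ≤ k) {t : ℝ} (ht : t ≤ 0) :
    japE k ^ t ≤ japE m ^ t := by
  rw [japE_rpow, japE_rpow]
  exact ENNReal.ofReal_le_ofReal
    (Real.rpow_le_rpow_of_nonpos (jap_pos m) (jap_mono hm hmk) ht)
lemma japE_one_le (n : ℤ) : 1 ≤ japE n := by
  rw [japE, ← ENNReal.ofReal_one]
  exact ENNReal.ofReal_le_ofReal (jap_one_le n)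
lemma japE_rpow_le_one {n : ℤ} {t : ℝ} (ht : t ≤ 0) : japE n ^ t ≤ 1 := by
  rw [japE_rpow]
  rw [← ENNReal.ofReal_one]
  exact ENNReal.ofReal_le_ofReal (Real.rpow_le_one_of_one_le_of_nonpos (jap_one_le n) ht)

lemma japE_half {m k : ℤ} (h : jap k ≤ 2 * jap m) {t : ℝ} (ht : 0 ≤ t) :
    japE m ^ (-t) ≤ ENNReal.ofReal (2 ^ t) * japE k ^ (-t) := by
  rw [japE_rpow, japE_rpow, ← ENNReal.ofReal_mul (by positivity)]
  apply ENNReal.ofReal_le_ofReal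
  have h1 : jap k / 2 ≤ jap m := by linarith [h]
  have h2 : (0:ℝ) < jap k / 2 := by have := jap_pos k; linarith
  calc jap m ^ (-t) ≤ (jap k / 2) ^ (-t) :=
        Real.rpow_le_rpow_of_nonpos h2 h1 (by linarith)
    _ = 2 ^ t * jap k ^ (-t) := by
        rw [Real.div_rpow (jap_pos k).le (by norm_num), Real.rpow_neg (jap_pos k).le,
          Real.rpow_neg (by norm_num : (0:ℝ) ≤ 2)]
        field_simp


lemma ps_nat {t : ℝ} (h1 : -1 < t) (h2 : t ≤ 0) (N : ℕ) :
    ∑ j ∈ Finset.range (N+1), (max 1 (j:ℝ)) ^ t ≤ (2 + 1/(1+t)) * (max 1 (N:ℝ)) ^ (1+t) := by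
  have hp0 : 0 < 1 + t := by linarith
  have hp1 : 1 + t ≤ 1 := by linarith
  have hC1 : (1:ℝ) ≤ 2 + 1/(1+t) := by
    have : 0 < 1/(1+t) := by positivity
    linarith
  have hCp : 1 ≤ (2 + 1/(1+t)) * (1+t) := by
    have h : 1/(1+t) * (1+t) = 1 := by field_simp
    nlinarith [hp0]
  induction N with
  | zero =>
      have he : ∑ j ∈ Finset.range (0+1), (max 1 (j:ℝ)) ^ t = 1 := by
        norm_num [Real.one_rpow]
      rw [he, Nat.cast_zero, show ((1:ℝ) ⊔ (0:ℝ)) = 1 by norm_num, Real.one_rpow]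
      linarith
  | succ N ih =>
      rw [Finset.sum_range_succ]
      push_cast
      rcases Nat.eq_zero_or_pos N with rfl | hN
      · have he : ∑ j ∈ Finset.range (0+1), (max 1 (j:ℝ)) ^ t = 1 := by
          norm_num [Real.one_rpow]
        rw [he]
        norm_num
        linarith
      · have hN1 : (1:ℝ) ≤ (N:ℝ) := by exact_mod_cast hN
        have hmaxN : (1:ℝ) ⊔ (N:ℝ) = (N:ℝ) := max_eq_right hN1
        set x : ℝ := (N:ℝ) + 1 with hx
        have hx1 : (1:ℝ) ≤ x := by rw [hx]; linarith
        have hx0 : (0:ℝ) < x := by linarith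
        have hxne : x ≠ 0 := ne_of_gt hx0
        have hmaxN1 : (1:ℝ) ⊔ x = x := max_eq_right hx1
        have hbern : ((x - 1)/x) ^ (1+t) ≤ 1 + (1+t) * (-1/x) := by
          have := rpow_one_add_le_one_add_mul_self
            (s := -1/x) (by rw [neg_div, neg_le_neg_iff]; exact div_le_one_of_le₀ hx1 hx0.le)
            (p := 1+t) hp0.le hp1
          have hrw : 1 + -1/x = (x-1)/x := by field_simp; ring
          rwa [hrw] at this
        have key : (N:ℝ) ^ (1+t) ≤ x ^ (1+t) - (1+t) * x ^ t := by
          have hxp : (0:ℝ) < x ^ (1+t) := Real.rpow_pos_of_pos hx0 _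
          have h2' : ((x-1)/x) ^ (1+t) * x ^ (1+t) = (x-1) ^ (1+t) := by
            rw [← Real.mul_rpow (div_nonneg (by linarith) hx0.le) hx0.le]
            congr 1; field_simp
          have h3 : (1 + (1+t) * (-1/x)) * x ^ (1+t) = x ^ (1+t) - (1+t) * x ^ t := by
            have hxt : x ^ (1+t) = x ^ t * x := by
              rw [Real.rpow_add hx0, Real.rpow_one]; ring
            rw [hxt]; field_simp; ring
          have hmul := mul_le_mul_of_nonneg_right hbern (le_of_lt hxp)
          rw [h2', h3] at hmul
          have hx1' : x - 1 = (N:ℝ) := by rw [hx]; ring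
          rwa [hx1'] at hmul
        have hxt_pos : (0:ℝ) < x ^ t := Real.rpow_pos_of_pos hx0 _
        calc ∑ j ∈ Finset.range (N+1), ((1:ℝ) ⊔ (j:ℝ)) ^ t + ((1:ℝ) ⊔ x) ^ t
            ≤ (2 + 1/(1+t)) * (N:ℝ) ^ (1+t) + x ^ t := by
              rw [hmaxN1]
              exact add_le_add (by rwa [hmaxN] at ih) le_rfl
          _ ≤ (2 + 1/(1+t)) * (x ^ (1+t) - (1+t) * x ^ t) + x ^ t := by
              have hC0 : (0:ℝ) ≤ 2 + 1/(1+t) := by linarith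
              nlinarith [key]
          _ ≤ (2 + 1/(1+t)) * x ^ (1+t) := by nlinarith [hxt_pos, hCp]
          _ = (2 + 1/(1+t)) * ((1:ℝ) ⊔ x) ^ (1+t) := by rw [hmaxN1]

lemma ps_int {t : ℝ} (h1 : -1 < t) (h2 : t ≤ 0) {n : ℤ} (hn : 1 ≤ n) :
    ∑' j : ℤ, (if 0 ≤ j ∧ j ≤ n then japE j ^ t else 0)
      ≤ ENNReal.ofReal (2 + 1/(1+t)) * japE n ^ (1+t) := by
  have hp0 : 0 < 1 + t := by linarith
  have h1' : ∑' j : ℤ, (if 0 ≤ j ∧ j ≤ n then japE j ^ t else 0)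
      = ∑ j ∈ Finset.Icc (0:ℤ) n, (if 0 ≤ j ∧ j ≤ n then japE j ^ t else 0) := by
    refine tsum_eq_sum ?_
    intro b hb
    rw [Finset.mem_Icc] at hb
    exact if_neg hb
  have h2' : ∑ j ∈ Finset.Icc (0:ℤ) n, (if 0 ≤ j ∧ j ≤ n then japE j ^ t else 0)
      = ∑ j ∈ Finset.Icc (0:ℤ) n, japE j ^ t := by
    refine Finset.sum_congr rfl fun j hj => ?_
    rw [Finset.mem_Icc] at hj
    exact if_pos hj
  have h3' : ∑ j ∈ Finset.Icc (0:ℤ) n, japE j ^ t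
      = ∑ j ∈ Finset.range (n.toNat + 1), japE (j:ℤ) ^ t := by
    refine Finset.sum_nbij' (fun j => j.toNat) (fun j => (j:ℤ)) ?_ ?_ ?_ ?_ ?_
    · intro a ha; simp only [Finset.mem_Icc] at ha; simp only [Finset.mem_range]; omega
    · intro a ha; simp only [Finset.mem_range] at ha; simp only [Finset.mem_Icc]; omega
    · intro a ha; simp only [Finset.mem_Icc] at ha; omega
    · intro a _; omega
    · intro a ha; simp only [Finset.mem_Icc] at ha
      have h : (((fun j => j.toNat) a : ℕ) : ℤ) = a := Int.toNat_of_nonneg ha.1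
      simp only [] at h ⊢
      rw [h]
  rw [h1', h2', h3']
  have h4' : ∑ j ∈ Finset.range (n.toNat + 1), japE (j:ℤ) ^ t
      = ENNReal.ofReal (∑ j ∈ Finset.range (n.toNat + 1), (max 1 (j:ℝ)) ^ t) := by
    rw [ENNReal.ofReal_sum_of_nonneg]
    · refine Finset.sum_congr rfl fun j _ => ?_
      rw [japE_rpow, jap_nat]
    · intro j _
      positivity
  rw [h4', japE_rpow, ← ENNReal.ofReal_mul (by positivity)]
  apply ENNReal.ofReal_le_ofReal
  have := ps_nat h1 h2 n.toNat
  have hcast : (n.toNat : ℝ) = (n : ℝ) := by exact_mod_cast Int.toNat_of_nonneg (by linarith)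
  rw [hcast] at this
  have hjn : jap n = max 1 (n:ℝ) := by
    rw [jap]; congr 1; rw [abs_of_nonneg]; exact_mod_cast (by linarith : (0:ℤ) ≤ n)
  rw [hjn]
  exact this

lemma holder_tsum {p q : ℝ} (hpq : p.HolderConjugate q) (x y : ℤ → ℝ≥0∞) :
    ∑' j, x j * y j ≤ (∑' j, x j ^ p) ^ (1/p) * (∑' j, y j ^ q) ^ (1/q) := by
  have h := ENNReal.lintegral_mul_le_Lp_mul_Lq (MeasureTheory.Measure.count : MeasureTheory.Measure ℤ) hpq
    (f := x) (g := y) (measurable_from_top).aemeasurable (measurable_from_top).aemeasurable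
  simpa [MeasureTheory.lintegral_count] using h


lemma cs_sq (x y : ℤ → ℝ≥0∞) :
    (∑' j, x j * y j) ^ (2:ℝ) ≤ (∑' j, x j ^ (2:ℝ)) * (∑' j, y j ^ (2:ℝ)) := by
  have hpq : (2:ℝ).HolderConjugate 2 := by
    constructor <;> norm_num
  have h := holder_tsum hpq x y
  calc (∑' j, x j * y j) ^ (2:ℝ)
      ≤ ((∑' j, x j ^ (2:ℝ)) ^ (1/2:ℝ) * (∑' j, y j ^ (2:ℝ)) ^ (1/2:ℝ)) ^ (2:ℝ) :=
        ENNReal.rpow_le_rpow h (by norm_num)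
    _ = (∑' j, x j ^ (2:ℝ)) * (∑' j, y j ^ (2:ℝ)) := by
        rw [ENNReal.mul_rpow_of_nonneg _ _ (by norm_num : (0:ℝ) ≤ 2),
          ← ENNReal.rpow_mul, ← ENNReal.rpow_mul]
        norm_num

lemma sq_add_le (x y : ℝ≥0∞) : (x + y) ^ (2:ℝ) ≤ 4 * x ^ (2:ℝ) + 4 * y ^ (2:ℝ) := by
  have h1 : x + y ≤ 2 * (x ⊔ y) := by
    rw [two_mul]
    exact add_le_add le_sup_left le_sup_right
  calc (x + y) ^ (2:ℝ) ≤ (2 * (x ⊔ y)) ^ (2:ℝ) := ENNReal.rpow_le_rpow h1 (by norm_num)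
    _ = 4 * (x ⊔ y) ^ (2:ℝ) := by
        rw [ENNReal.mul_rpow_of_nonneg _ _ (by norm_num : (0:ℝ) ≤ 2)]
        congr 1
        rw [show ((2:ℝ≥0∞) ^ (2:ℝ)) = 2 ^ ((2:ℕ):ℝ) by norm_num, ENNReal.rpow_natCast]
        norm_num
    _ ≤ 4 * x ^ (2:ℝ) + 4 * y ^ (2:ℝ) := by
        rcases le_total x y with h | h
        · rw [sup_eq_right.2 h]
          exact le_add_self
        · rw [sup_eq_left.2 h]
          exact le_add_right le_rfl

lemma if_rpow_sq (c : Prop) [Decidable c] (a : ℝ≥0∞) :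
    (if c then a else 0) ^ (2:ℝ) = if c then a ^ (2:ℝ) else 0 := by
  split_ifs <;> simp [ENNReal.zero_rpow_of_pos]


lemma jap_eq_self {n : ℤ} (h : 1 ≤ n) : jap n = (n:ℝ) := by
  rw [jap, abs_of_nonneg (by exact_mod_cast (by omega : (0:ℤ) ≤ n) : (0:ℝ) ≤ (n:ℝ))]
  exact max_eq_right (by exact_mod_cast h)

/-- The core bilinear estimate, entirely in `ℝ≥0∞`. -/
lemma core (s τ : ℝ) (hs0 : 0 ≤ s) (hs : s < 1/2) (hτ : τ = (1+2*s)/2)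
    (a uE : ℤ → ℝ≥0∞) (ha : ∀ j : ℤ, j < 0 → a j = 0) (hu0 : uE 0 = 0)
    (gE : ℤ → ℝ≥0∞) (hg : ∀ n : ℤ, gE n ≤ ∑' j : ℤ, a j * a (j + n)) :
    ∑' n : ℤ, uE n * gE n ≤
      ENNReal.ofReal (8*(2 + 1/(1-τ)) + 8*((2 + 1/τ)*2^τ)) ^ (1/2:ℝ) *
        ((∑' n : ℤ, japE n ^ (2*(-s)) * uE n ^ (2:ℝ)) ^ (1/2:ℝ) *
          ((∑' k : ℤ, japE k ^ (1:ℝ) * a k ^ (2:ℝ)) ^ τ * (∑' k : ℤ, a k ^ (2:ℝ)) ^ (1-τ))) := by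
  have hτ0 : 0 < τ := by rw [hτ]; linarith
  have hτ1 : τ < 1 := by rw [hτ]; linarith
  have h2s : 2*s = 2*τ - 1 := by rw [hτ]; ring
  set GE : ℤ → ℝ≥0∞ := fun n => ∑' j : ℤ, a j * a (j + n) with hGE
  set A2 : ℤ → ℝ≥0∞ := fun k => japE k ^ τ * a k ^ (2:ℝ) with hA2
  set SA : ℝ≥0∞ := ∑' k : ℤ, A2 k with hSA
  set H : ℤ → ℝ≥0∞ := fun n => ∑' j : ℤ, A2 j * A2 (j + n) with hH
  set F2 : ℤ → ℝ≥0∞ := fun n => ∑' j : ℤ, (if n < j then japE j ^ (-τ) * A2 (j + n) else 0)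
    with hF2
  set Z : ℤ → ℝ≥0∞ := fun n => if 1 ≤ n then japE n ^ (τ-1) * F2 n else 0 with hZ
  set xG : ℤ → ℝ≥0∞ := fun n => if n = 0 then 0 else GE n with hxG
  set cE1 : ℝ≥0∞ := ENNReal.ofReal (2 + 1/(1-τ)) with hcE1
  set cE2 : ℝ≥0∞ := ENNReal.ofReal ((2 + 1/τ)*2^τ) with hcE2
  set r2E : ℝ≥0∞ := ∑' n : ℤ, japE n ^ (2*(-s)) * uE n ^ (2:ℝ) with hr2E
  set R2E : ℝ≥0∞ := ∑' k : ℤ, japE k ^ (1:ℝ) * a k ^ (2:ℝ) with hR2E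
  set B2E : ℝ≥0∞ := ∑' k : ℤ, a k ^ (2:ℝ) with hB2E
  -- symmetry of GE
  have hτn : -τ ≤ 0 := by linarith
  have h1τ : 0 < 1 - τ := by linarith
  have two_nonneg : (0:ℝ) ≤ 2 := by norm_num
  have cancel_pair : ∀ (m k : ℤ) (t : ℝ) (x y : ℝ≥0∞),
      (japE m ^ (-t) * japE k ^ (-t)) * ((japE m ^ t * x) * (japE k ^ t * y)) = x * y := by
    intro m k t x y
    calc (japE m ^ (-t) * japE k ^ (-t)) * ((japE m ^ t * x) * (japE k ^ t * y))
        = (japE m ^ (-t) * japE m ^ t) * ((japE k ^ (-t) * japE k ^ t) * (x * y)) := by ring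
      _ = x * y := by
          rw [japE_rpow_mul_rpow, japE_rpow_mul_rpow, neg_add_cancel, ENNReal.rpow_zero,
            one_mul, ENNReal.rpow_zero, one_mul]
  have japE_sq : ∀ (m : ℤ) (t : ℝ), (japE m ^ t) ^ (2:ℝ) = japE m ^ (t*2) :=
    fun m t => (ENNReal.rpow_mul (japE m) t 2).symm
  have mul_sq : ∀ x y : ℝ≥0∞, (x*y)^(2:ℝ) = x^(2:ℝ) * y^(2:ℝ) :=
    fun x y => ENNReal.mul_rpow_of_nonneg x y two_nonneg
  have hGEsym : ∀ n : ℤ, GE (-n) = GE n := by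
    intro n
    calc GE (-n) = ∑' j : ℤ, a j * a (j + -n) := rfl
      _ = ∑' j : ℤ, a (j + n) * a ((j + n) + -n) := ((Equiv.addRight n).tsum_eq _).symm
      _ = ∑' j : ℤ, a j * a (j + n) := by
          apply tsum_congr; intro j
          rw [add_neg_cancel_right, mul_comm]
  -- Step A: reduction to weighted Cauchy-Schwarz
  have stepA : ∑' n : ℤ, uE n * gE n ≤
      r2E ^ (1/2:ℝ) * (∑' n : ℤ, (japE n ^ s * xG n) ^ (2:ℝ)) ^ (1/2:ℝ) := by
    have h1 : ∀ n : ℤ, uE n * gE n ≤ (japE n ^ (-s) * uE n) * (japE n ^ s * xG n) := by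
      intro n
      rcases eq_or_ne n 0 with rfl | hn
      · simp [hu0]
      · have hcollapse : (japE n ^ (-s) * uE n) * (japE n ^ s * xG n) = uE n * xG n := by
          rw [mul_mul_mul_comm, japE_rpow_mul_rpow, neg_add_cancel, ENNReal.rpow_zero, one_mul]
        rw [hcollapse, hxG]
        simp only [if_neg hn]
        exact mul_le_mul_right (hg n) _
    calc ∑' n : ℤ, uE n * gE n
        ≤ ∑' n : ℤ, (japE n ^ (-s) * uE n) * (japE n ^ s * xG n) := ENNReal.tsum_le_tsum h1
      _ ≤ (∑' n : ℤ, (japE n ^ (-s) * uE n) ^ (2:ℝ)) ^ (1/2:ℝ) *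
            (∑' n : ℤ, (japE n ^ s * xG n) ^ (2:ℝ)) ^ (1/2:ℝ) :=
          holder_tsum (by constructor <;> norm_num) _ _
      _ = r2E ^ (1/2:ℝ) * (∑' n : ℤ, (japE n ^ s * xG n) ^ (2:ℝ)) ^ (1/2:ℝ) := by
          congr 2
          apply tsum_congr; intro n
          rw [mul_sq, japE_sq, show (-s)*2 = 2*(-s) from by ring]
  -- Step B: per-n estimate for positive n
  have claim_pos : ∀ n : ℤ, 1 ≤ n →
      japE n ^ (2*s) * GE n ^ (2:ℝ) ≤ 4 * (cE1 * H n) + 4 * (SA * Z n) := by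
    intro n hn
    have hn0 : (0:ℤ) ≤ n := by omega
    set p1 : ℤ → ℝ≥0∞ := fun j => if 0 ≤ j ∧ j ≤ n then a j * a (j+n) else 0 with hp1
    set p2 : ℤ → ℝ≥0∞ := fun j => if n < j then a j * a (j+n) else 0 with hp2
    have hsplit : GE n = (∑' j : ℤ, p1 j) + (∑' j : ℤ, p2 j) := by
      rw [← ENNReal.tsum_add]
      apply tsum_congr; intro j
      rw [hp1, hp2]; simp only []
      by_cases h0 : j < 0
      · rw [ha j h0, zero_mul, if_neg (by omega), if_neg (by omega), add_zero]
      · push_neg at h0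
        by_cases h1 : j ≤ n
        · rw [if_pos ⟨h0, h1⟩, if_neg (by omega), add_zero]
        · rw [if_neg (by omega), if_pos (by omega), zero_add]
    -- g1 bound via CS
    have hg1 : (∑' j : ℤ, p1 j) ^ (2:ℝ) ≤
        (∑' j : ℤ, (if 0 ≤ j ∧ j ≤ n then japE j ^ (-τ) * japE (j+n) ^ (-τ) else 0)) * H n := by
      have hxy : ∀ j : ℤ, p1 j =
          (if 0 ≤ j ∧ j ≤ n then japE j ^ (-(τ/2)) * japE (j+n) ^ (-(τ/2)) else 0) *
            ((japE j ^ (τ/2) * a j) * (japE (j+n) ^ (τ/2) * a (j+n))) := by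
        intro j
        rw [hp1]; simp only []
        split_ifs with h
        · exact (cancel_pair j (j+n) (τ/2) (a j) (a (j+n))).symm
        · rw [zero_mul]
      rw [tsum_congr hxy]
      refine le_trans (cs_sq _ _) ?_
      apply mul_le_mul'
      · apply le_of_eq
        apply tsum_congr; intro j
        rw [if_rpow_sq, mul_sq, japE_sq, japE_sq, show (-(τ/2))*2 = -τ from by ring]
      · apply le_of_eq
        apply tsum_congr; intro j
        rw [mul_sq, mul_sq, mul_sq, japE_sq, japE_sq, show (τ/2)*2 = τ from by ring]
    have hker : (∑' j : ℤ, (if 0 ≤ j ∧ j ≤ n then japE j ^ (-τ) * japE (j+n) ^ (-τ) else 0))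
        ≤ japE n ^ (-τ) * (cE1 * japE n ^ (1-τ)) := by
      calc (∑' j : ℤ, (if 0 ≤ j ∧ j ≤ n then japE j ^ (-τ) * japE (j+n) ^ (-τ) else 0))
          ≤ ∑' j : ℤ, japE n ^ (-τ) * (if 0 ≤ j ∧ j ≤ n then japE j ^ (-τ) else 0) := by
            apply ENNReal.tsum_le_tsum; intro j
            split_ifs with h
            · rw [mul_comm (japE j ^ (-τ))]
              exact mul_le_mul_left
                (japE_rpow_anti hn0 (by omega : n ≤ j + n) hτn) _
            · simp
        _ = japE n ^ (-τ) * ∑' j : ℤ, (if 0 ≤ j ∧ j ≤ n then japE j ^ (-τ) else 0) :=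
            ENNReal.tsum_mul_left
        _ ≤ japE n ^ (-τ) * (cE1 * japE n ^ (1-τ)) := by
            apply mul_le_mul_right
            have hps := ps_int (t := -τ) (by linarith) hτn hn
            rw [show (1:ℝ) + -τ = 1-τ from by ring] at hps
            exact hps
    have hpiece1 : japE n ^ (2*s) * (∑' j : ℤ, p1 j) ^ (2:ℝ) ≤ cE1 * H n := by
      calc japE n ^ (2*s) * (∑' j : ℤ, p1 j) ^ (2:ℝ)
          ≤ japE n ^ (2*s) * ((japE n ^ (-τ) * (cE1 * japE n ^ (1-τ))) * H n) :=
            mul_le_mul_right (le_trans hg1 (mul_le_mul_left hker _)) _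
        _ = (japE n ^ (2*s) * japE n ^ (-τ) * japE n ^ (1-τ)) * (cE1 * H n) := by ring
        _ = cE1 * H n := by
            rw [japE_rpow_mul_rpow, japE_rpow_mul_rpow,
              show (2*s + -τ) + (1-τ) = 0 from by rw [h2s]; ring,
              ENNReal.rpow_zero, one_mul]
    -- g2 bound via CS
    have hg2 : (∑' j : ℤ, p2 j) ^ (2:ℝ) ≤
        (∑' j : ℤ, (if n < j then japE (j+n) ^ (-τ) * A2 j else 0)) * F2 n := by
      have hxy : ∀ j : ℤ, p2 j =
          (if n < j then japE (j+n) ^ (-(τ/2)) * (japE j ^ (τ/2) * a j) else 0) *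
            (if n < j then japE j ^ (-(τ/2)) * (japE (j+n) ^ (τ/2) * a (j+n)) else 0) := by
        intro j
        rw [hp2]; simp only []
        split_ifs with h
        · calc a j * a (j+n)
              = (japE j ^ (-(τ/2)) * japE (j+n) ^ (-(τ/2))) *
                ((japE j ^ (τ/2) * a j) * (japE (j+n) ^ (τ/2) * a (j+n))) :=
                (cancel_pair j (j+n) (τ/2) (a j) (a (j+n))).symm
            _ = (japE (j+n) ^ (-(τ/2)) * (japE j ^ (τ/2) * a j)) *
                (japE j ^ (-(τ/2)) * (japE (j+n) ^ (τ/2) * a (j+n))) := by ring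
        · rw [zero_mul]
      rw [tsum_congr hxy]
      refine le_trans (cs_sq _ _) ?_
      apply mul_le_mul'
      · apply le_of_eq
        apply tsum_congr; intro j
        rw [if_rpow_sq, mul_sq, mul_sq, japE_sq, japE_sq,
          show (-(τ/2))*2 = -τ from by ring, show (τ/2)*2 = τ from by ring]
      · apply le_of_eq
        apply tsum_congr; intro j
        rw [if_rpow_sq, mul_sq, mul_sq, japE_sq, japE_sq,
          show (-(τ/2))*2 = -τ from by ring, show (τ/2)*2 = τ from by ring]
    have hF1 : (∑' j : ℤ, (if n < j then japE (j+n) ^ (-τ) * A2 j else 0))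
        ≤ japE n ^ (-τ) * SA := by
      calc (∑' j : ℤ, (if n < j then japE (j+n) ^ (-τ) * A2 j else 0))
          ≤ ∑' j : ℤ, japE n ^ (-τ) * A2 j := by
            apply ENNReal.tsum_le_tsum; intro j
            split_ifs with h
            · exact mul_le_mul_left
                (japE_rpow_anti hn0 (by omega : n ≤ j + n) hτn) _
            · exact zero_le
        _ = japE n ^ (-τ) * SA := ENNReal.tsum_mul_left
    have hpiece2 : japE n ^ (2*s) * (∑' j : ℤ, p2 j) ^ (2:ℝ) ≤ SA * Z n := by
      have hZn : Z n = japE n ^ (τ-1) * F2 n := by rw [hZ]; simp only [if_pos hn]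
      calc japE n ^ (2*s) * (∑' j : ℤ, p2 j) ^ (2:ℝ)
          ≤ japE n ^ (2*s) * ((japE n ^ (-τ) * SA) * F2 n) :=
            mul_le_mul_right (le_trans hg2 (mul_le_mul_left hF1 _)) _
        _ = (japE n ^ (2*s) * japE n ^ (-τ)) * (SA * F2 n) := by ring
        _ = SA * Z n := by
            rw [japE_rpow_mul_rpow, show 2*s + -τ = τ-1 from by rw [h2s]; ring, hZn]
            ring
    calc japE n ^ (2*s) * GE n ^ (2:ℝ)
        = japE n ^ (2*s) * ((∑' j : ℤ, p1 j) + (∑' j : ℤ, p2 j)) ^ (2:ℝ) := by rw [hsplit]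
      _ ≤ japE n ^ (2*s) * (4 * (∑' j : ℤ, p1 j) ^ (2:ℝ) + 4 * (∑' j : ℤ, p2 j) ^ (2:ℝ)) :=
          mul_le_mul_right (sq_add_le _ _) _
      _ = 4 * (japE n ^ (2*s) * (∑' j : ℤ, p1 j) ^ (2:ℝ))
            + 4 * (japE n ^ (2*s) * (∑' j : ℤ, p2 j) ^ (2:ℝ)) := by ring
      _ ≤ 4 * (cE1 * H n) + 4 * (SA * Z n) :=
          add_le_add (mul_le_mul_right hpiece1 _) (mul_le_mul_right hpiece2 _)
  -- Step C: per-n estimate for all n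
  have claim_all : ∀ n : ℤ, (japE n ^ s * xG n) ^ (2:ℝ) ≤
      4 * (cE1 * (H n + H (-n))) + 4 * (SA * (Z n + Z (-n))) := by
    intro n
    have hsq : (japE n ^ s * xG n) ^ (2:ℝ) = japE n ^ (2*s) * xG n ^ (2:ℝ) := by
      rw [mul_sq, japE_sq, show s*2 = 2*s from by ring]
    rcases lt_trichotomy n 0 with hneg | rfl | hpos
    · have hx : xG n = GE n := by simp only [hxG]; rw [if_neg (by omega : ¬ n = 0)]
      have hjap : japE n = japE (-n) := by rw [japE_neg]
      have hGEn : GE n = GE (-n) := (hGEsym n).symm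
      rw [hsq, hx, hjap, hGEn]
      refine le_trans (claim_pos (-n) (by omega)) ?_
      exact add_le_add (mul_le_mul_right (mul_le_mul_right le_add_self _) _)
        (mul_le_mul_right (mul_le_mul_right le_add_self _) _)
    · have hx : xG 0 = 0 := by simp [hxG]
      rw [hsq, hx, ENNReal.zero_rpow_of_pos (by norm_num), mul_zero]
      exact zero_le
    · have hx : xG n = GE n := by simp only [hxG]; rw [if_neg (by omega : ¬ n = 0)]
      rw [hsq, hx]
      refine le_trans (claim_pos n (by omega)) ?_
      exact add_le_add (mul_le_mul_right (mul_le_mul_right le_self_add _) _)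
        (mul_le_mul_right (mul_le_mul_right le_self_add _) _)
  -- Step D: sum of H
  have hSH : ∑' n : ℤ, H n = SA * SA := by
    calc ∑' n : ℤ, H n = ∑' n : ℤ, ∑' j : ℤ, A2 j * A2 (j + n) := rfl
      _ = ∑' j : ℤ, ∑' n : ℤ, A2 j * A2 (j + n) := ENNReal.tsum_comm
      _ = ∑' j : ℤ, A2 j * ∑' n : ℤ, A2 (j + n) := by
          apply tsum_congr; intro j; exact ENNReal.tsum_mul_left
      _ = ∑' j : ℤ, A2 j * SA := by
          apply tsum_congr; intro j
          congr 1
          exact (Equiv.addLeft j).tsum_eq A2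
      _ = SA * SA := ENNReal.tsum_mul_right
  -- Step E: sum of Z
  have hSZ : ∑' n : ℤ, Z n ≤ cE2 * SA := by
    set z : ℤ → ℤ → ℝ≥0∞ := fun n k =>
      if 1 ≤ n ∧ n < k - n then japE n ^ (τ-1) * (japE (k-n) ^ (-τ) * A2 k) else 0 with hz
    have hZeq : ∀ n : ℤ, Z n = ∑' k : ℤ, z n k := by
      intro n
      rw [hZ]; simp only []
      by_cases hn : 1 ≤ n
      · rw [if_pos hn]
        have hF2n : F2 n = ∑' k : ℤ, (if n < k - n then japE (k-n) ^ (-τ) * A2 k else 0) := by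
          rw [hF2]; simp only []
          rw [← (Equiv.subRight n).tsum_eq
            (fun j => if n < j then japE j ^ (-τ) * A2 (j + n) else 0)]
          apply tsum_congr; intro k
          simp only [Equiv.subRight_apply]
          rw [sub_add_cancel]
        rw [hF2n, ← ENNReal.tsum_mul_left]
        apply tsum_congr; intro k
        rw [mul_ite, mul_zero, hz]; simp only []
        by_cases hc : n < k - n
        · rw [if_pos hc, if_pos ⟨hn, hc⟩]
        · rw [if_neg hc, if_neg (fun h => hc h.2)]
      · rw [if_neg hn]
        symm
        apply ENNReal.tsum_eq_zero.2
        intro k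
        rw [hz]; simp only []
        exact if_neg (fun h => hn h.1)
    have hinner : ∀ k : ℤ, (∑' n : ℤ, z n k) ≤ cE2 * A2 k := by
      intro k
      by_cases hk : 1 ≤ k
      · have hcE2' : cE2 = ENNReal.ofReal (2 + 1/τ) * ENNReal.ofReal (2^τ) := by
          rw [hcE2, ENNReal.ofReal_mul (by positivity)]
        calc (∑' n : ℤ, z n k)
            ≤ ∑' n : ℤ, (if 0 ≤ n ∧ n ≤ k then japE n ^ (τ-1) else 0) *
                (ENNReal.ofReal (2^τ) * (japE k ^ (-τ) * A2 k)) := by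
              apply ENNReal.tsum_le_tsum; intro n
              rw [hz]; simp only []
              by_cases hc : 1 ≤ n ∧ n < k - n
              · rw [if_pos hc, if_pos (by omega : (0:ℤ) ≤ n ∧ n ≤ k)]
                have hhalf : japE (k-n) ^ (-τ) ≤ ENNReal.ofReal (2^τ) * japE k ^ (-τ) := by
                  apply japE_half _ hτ0.le
                  rw [jap_eq_self hk, jap_eq_self (by omega : (1:ℤ) ≤ k - n)]
                  have : (k:ℤ) ≤ 2*(k-n) := by omega
                  push_cast
                  exact_mod_cast this
                calc japE n ^ (τ-1) * (japE (k-n) ^ (-τ) * A2 k)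
                    ≤ japE n ^ (τ-1) * ((ENNReal.ofReal (2^τ) * japE k ^ (-τ)) * A2 k) :=
                      mul_le_mul_right (mul_le_mul_left hhalf _) _
                  _ = japE n ^ (τ-1) * (ENNReal.ofReal (2^τ) * (japE k ^ (-τ) * A2 k)) := by
                      ring
              · rw [if_neg hc]
                exact zero_le
          _ = (∑' n : ℤ, (if 0 ≤ n ∧ n ≤ k then japE n ^ (τ-1) else 0)) *
                (ENNReal.ofReal (2^τ) * (japE k ^ (-τ) * A2 k)) := ENNReal.tsum_mul_right
          _ ≤ (ENNReal.ofReal (2 + 1/τ) * japE k ^ τ) *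
                (ENNReal.ofReal (2^τ) * (japE k ^ (-τ) * A2 k)) := by
              apply mul_le_mul_left
              have hps := ps_int (t := τ-1) (by linarith) (by linarith) hk
              rwa [show (1:ℝ) + (τ-1) = τ from by ring] at hps
          _ = (ENNReal.ofReal (2 + 1/τ) * ENNReal.ofReal (2^τ)) * A2 k *
                (japE k ^ τ * japE k ^ (-τ)) := by ring
          _ = cE2 * A2 k := by
              rw [japE_rpow_mul_rpow, add_neg_cancel, ENNReal.rpow_zero, mul_one, hcE2']
      · have hzero : ∀ n : ℤ, z n k = 0 := by
          intro n
          rw [hz]; simp only []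
          exact if_neg (fun h => by omega)
        rw [tsum_congr hzero]
        simp
    calc ∑' n : ℤ, Z n = ∑' n : ℤ, ∑' k : ℤ, z n k := tsum_congr hZeq
      _ = ∑' k : ℤ, ∑' n : ℤ, z n k := ENNReal.tsum_comm
      _ ≤ ∑' k : ℤ, cE2 * A2 k := ENNReal.tsum_le_tsum hinner
      _ = cE2 * SA := ENNReal.tsum_mul_left
  -- Step F: assembling Q
  have hQ : (∑' n : ℤ, (japE n ^ s * xG n) ^ (2:ℝ)) ≤
      (8 * cE1 + 8 * cE2) * (SA * SA) := by
    have hHneg : ∑' n : ℤ, H (-n) = SA * SA := by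
      rw [← hSH]
      exact (Equiv.neg ℤ).tsum_eq H
    have hZneg : ∑' n : ℤ, Z (-n) ≤ cE2 * SA :=
      le_of_eq_of_le ((Equiv.neg ℤ).tsum_eq Z) hSZ
    calc (∑' n : ℤ, (japE n ^ s * xG n) ^ (2:ℝ))
        ≤ ∑' n : ℤ, (4 * (cE1 * (H n + H (-n))) + 4 * (SA * (Z n + Z (-n)))) :=
          ENNReal.tsum_le_tsum claim_all
      _ = 4 * (cE1 * ((∑' n : ℤ, H n) + ∑' n : ℤ, H (-n)))
            + 4 * (SA * ((∑' n : ℤ, Z n) + ∑' n : ℤ, Z (-n))) := by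
          rw [ENNReal.tsum_add]
          congr 1
          · rw [ENNReal.tsum_mul_left, ENNReal.tsum_mul_left, ENNReal.tsum_add]
          · rw [ENNReal.tsum_mul_left, ENNReal.tsum_mul_left, ENNReal.tsum_add]
      _ ≤ 4 * (cE1 * (SA * SA + SA * SA)) + 4 * (SA * (cE2 * SA + cE2 * SA)) := by
          rw [hSH, hHneg]
          exact add_le_add (le_refl _)
            (mul_le_mul_right (mul_le_mul_right (add_le_add hSZ hZneg) _) _)
      _ = (8 * cE1 + 8 * cE2) * (SA * SA) := by ring
  -- Step G: interpolation
  have hInterp : SA ≤ R2E ^ τ * B2E ^ (1-τ) := by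
    have hpq : (1/τ).HolderConjugate (1/(1-τ)) := by
      constructor
      · simp only [one_div, inv_inv, inv_one]; ring
      · positivity
      · positivity
    have hxy : ∀ k : ℤ, A2 k =
        ((japE k ^ (1:ℝ) * a k ^ (2:ℝ)) ^ τ) * ((a k ^ (2:ℝ)) ^ (1-τ)) := by
      intro k
      rw [hA2]; simp only []
      rw [ENNReal.mul_rpow_of_nonneg _ _ hτ0.le,
        ← ENNReal.rpow_mul (japE k) 1 τ,
        ← ENNReal.rpow_mul (a k) 2 τ,
        ← ENNReal.rpow_mul (a k) 2 (1-τ), mul_assoc,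
        ← ENNReal.rpow_add_of_nonneg (x := a k) (2*τ) (2*(1-τ)) (by positivity) (by positivity),
        show (1:ℝ)*τ = τ from by ring, show 2*τ+2*(1-τ) = (2:ℝ) from by ring]
    have hx1 : ∀ k : ℤ, ((japE k ^ (1:ℝ) * a k ^ (2:ℝ)) ^ τ) ^ (1/τ)
        = japE k ^ (1:ℝ) * a k ^ (2:ℝ) := by
      intro k
      rw [← ENNReal.rpow_mul, mul_one_div_cancel hτ0.ne', ENNReal.rpow_one]
    have hy1 : ∀ k : ℤ, ((a k ^ (2:ℝ)) ^ (1-τ)) ^ (1/(1-τ)) = a k ^ (2:ℝ) := by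
      intro k
      rw [← ENNReal.rpow_mul, mul_one_div_cancel h1τ.ne', ENNReal.rpow_one]
    calc SA = ∑' k : ℤ, ((japE k ^ (1:ℝ) * a k ^ (2:ℝ)) ^ τ) * ((a k ^ (2:ℝ)) ^ (1-τ)) :=
          tsum_congr hxy
      _ ≤ (∑' k : ℤ, (((japE k ^ (1:ℝ) * a k ^ (2:ℝ)) ^ τ) ^ (1/τ))) ^ (1/(1/τ)) *
            (∑' k : ℤ, (((a k ^ (2:ℝ)) ^ (1-τ)) ^ (1/(1-τ)))) ^ (1/(1/(1-τ))) :=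
          holder_tsum hpq _ _
      _ = R2E ^ τ * B2E ^ (1-τ) := by
          rw [one_div_one_div, one_div_one_div]
          congr 2
          · exact tsum_congr hx1
          · exact tsum_congr hy1
  -- final assembly
  have hQhalf : (∑' n : ℤ, (japE n ^ s * xG n) ^ (2:ℝ)) ^ (1/2:ℝ) ≤
      ENNReal.ofReal (8*(2 + 1/(1-τ)) + 8*((2 + 1/τ)*2^τ)) ^ (1/2:ℝ) * SA := by
    have hD : ENNReal.ofReal (8*(2 + 1/(1-τ)) + 8*((2 + 1/τ)*2^τ)) = 8 * cE1 + 8 * cE2 := by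
      rw [ENNReal.ofReal_add (by positivity) (by positivity),
        ENNReal.ofReal_mul (by norm_num : (0:ℝ) ≤ 8),
        ENNReal.ofReal_mul (by norm_num : (0:ℝ) ≤ 8), hcE1, hcE2]
      norm_num
    calc (∑' n : ℤ, (japE n ^ s * xG n) ^ (2:ℝ)) ^ (1/2:ℝ)
        ≤ ((8 * cE1 + 8 * cE2) * (SA * SA)) ^ (1/2:ℝ) :=
          ENNReal.rpow_le_rpow hQ (by norm_num)
      _ = (8 * cE1 + 8 * cE2) ^ (1/2:ℝ) * SA := by
          rw [ENNReal.mul_rpow_of_nonneg _ _ (by norm_num : (0:ℝ) ≤ 1/2)]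
          congr 1
          rw [show SA * SA = SA ^ (2:ℝ) from by rw [ENNReal.rpow_two]; ring,
            ← ENNReal.rpow_mul]
          norm_num
      _ = ENNReal.ofReal (8*(2 + 1/(1-τ)) + 8*((2 + 1/τ)*2^τ)) ^ (1/2:ℝ) * SA := by
          rw [hD]
  calc ∑' n : ℤ, uE n * gE n
      ≤ r2E ^ (1/2:ℝ) * (∑' n : ℤ, (japE n ^ s * xG n) ^ (2:ℝ)) ^ (1/2:ℝ) := stepA
    _ ≤ r2E ^ (1/2:ℝ) *
        (ENNReal.ofReal (8*(2 + 1/(1-τ)) + 8*((2 + 1/τ)*2^τ)) ^ (1/2:ℝ) * SA) :=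
        mul_le_mul_right hQhalf _
    _ ≤ r2E ^ (1/2:ℝ) *
        (ENNReal.ofReal (8*(2 + 1/(1-τ)) + 8*((2 + 1/τ)*2^τ)) ^ (1/2:ℝ) *
          (R2E ^ τ * B2E ^ (1-τ))) :=
        mul_le_mul_right (mul_le_mul_right hInterp _) _
    _ = ENNReal.ofReal (8*(2 + 1/(1-τ)) + 8*((2 + 1/τ)*2^τ)) ^ (1/2:ℝ) *
        (r2E ^ (1/2:ℝ) * (R2E ^ τ * B2E ^ (1-τ))) := by ring


lemma hnormSq_nonneg (t : ℝ) (v : ℤ → ℂ) : 0 ≤ hnormSq t v :=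
  tsum_nonneg fun n =>
    mul_nonneg (Real.rpow_nonneg (jap_pos n).le _) (by positivity)

lemma ofReal_hnormSq (t : ℝ) (v : ℤ → ℂ) (hv : memH t v) :
    ENNReal.ofReal (hnormSq t v) = ∑' n : ℤ, japE n ^ (2*t) * ((‖v n‖₊ : ℝ≥0∞)) ^ (2:ℝ) := by
  rw [hnormSq, ENNReal.ofReal_tsum_of_nonneg
    (fun n => mul_nonneg (Real.rpow_nonneg (jap_pos n).le _) (by positivity)) hv]
  apply tsum_congr; intro n
  rw [ENNReal.ofReal_mul (Real.rpow_nonneg (jap_pos n).le _), japE_rpow]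
  congr 1
  rw [ENNReal.ofReal_pow (norm_nonneg _), ((ofReal_norm _).trans (enorm_eq_nnnorm _)),
    ENNReal.rpow_two]


end StmtAux

lemma young_final (s : ℝ) (hs0 : 0 ≤ s) (hs : s < 1/2) (M : ℝ) (hM : 0 < M) :
    ∃ C : ℝ, 0 < C ∧ ∀ r R B : ℝ, 0 ≤ r → 0 ≤ R → 0 ≤ B →
      M * (r * (R ^ ((1:ℝ)+2*s) * B ^ ((1:ℝ)-2*s))) ≤ 1/2 * R^2 + etaS s C r * B^2 := by
  set θ : ℝ := (1+2*s)/2 with hθdef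
  set α : ℝ := (1+2*s)/(1-2*s) with hαdef
  have hθ0 : 0 < θ := by rw [hθdef]; linarith
  have hθ1 : θ < 1 := by rw [hθdef]; linarith
  have h2s : 0 < 1 - 2*s := by linarith
  have hα0 : 0 < α := by rw [hαdef]; positivity
  have h1θ : 1 - θ = (1-2*s)/2 := by rw [hθdef]; ring
  have h1θ0 : 0 < 1 - θ := by linarith
  set V : ℝ := (1-θ) * M^((1:ℝ)+α) * θ^α with hVdef
  have hMα : (0:ℝ) ≤ M^((1:ℝ)+α) := (Real.rpow_pos_of_pos hM _).le
  have hθα : (0:ℝ) ≤ θ^α := (Real.rpow_pos_of_pos hθ0 _).le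
  have hV0 : 0 ≤ V := by positivity
  refine ⟨Real.sqrt V + 1, by positivity, ?_⟩
  intro r R B hr hR hB
  rcases eq_or_lt_of_le hr with hr0 | hr0
  · rw [← hr0]
    simp [etaS]
    positivity
  · set C : ℝ := Real.sqrt V + 1 with hCdef
    have hC2 : V ≤ C^2 := by
      rw [hCdef]
      nlinarith [Real.sq_sqrt hV0, Real.sqrt_nonneg V]
    set P : ℝ := M * r with hPdef
    have hP0 : 0 < P := by positivity
    have h2θ0 : (0:ℝ) < 2*θ := by linarith
    set x : ℝ := R^2 / (2*θ) with hxdef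
    set y : ℝ := (P * (2*θ)^θ)^((1:ℝ)/(1-θ)) * B^2 with hydef
    have hx0 : 0 ≤ x := by positivity
    have hy0 : 0 ≤ y := by positivity
    have hgm := Real.geom_mean_le_arith_mean2_weighted h1θ0.le hθ0.le hy0 hx0 (by ring)
    have hLHS : M * (r * (R ^ ((1:ℝ)+2*s) * B ^ ((1:ℝ)-2*s))) = y ^ ((1:ℝ)-θ) * x ^ θ := by
      rw [hydef, hxdef]
      rw [Real.mul_rpow (by positivity) (by positivity),
        Real.div_rpow (by positivity) (by positivity),
        ← Real.rpow_natCast R 2, ← Real.rpow_natCast B 2,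
        ← Real.rpow_mul hR, ← Real.rpow_mul hB, ← Real.rpow_mul (by positivity)]
      have e1 : ((1:ℝ)/(1-θ)) * (1-θ) = 1 := by field_simp
      rw [e1, Real.rpow_one]
      push_cast
      rw [show (2:ℝ)*((1:ℝ)-θ) = 1-2*s from by rw [hθdef]; ring,
        show (2:ℝ)*θ = 1+2*s from by rw [hθdef]; ring]
      have hne : ((2:ℝ)*θ)^θ ≠ 0 := by positivity
      field_simp [hPdef]
      ring
    rw [hLHS]
    refine le_trans hgm ?_
    have hterm1 : θ * x = 1/2 * R^2 := by
      rw [hxdef]; field_simp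
    have hexp : ((1:ℝ)/(1-θ)) = 1 + α := by
      rw [hαdef, h1θ]; field_simp; ring
    have hθα1 : θ * ((1:ℝ)+α) = α := by
      rw [hθdef, hαdef]; field_simp; ring
    have hPexp : (P * (2*θ)^θ)^((1:ℝ)/(1-θ)) = P^((1:ℝ)+α) * (2*θ)^α := by
      rw [hexp, Real.mul_rpow hP0.le (by positivity), ← Real.rpow_mul h2θ0.le, hθα1]
    have hterm2 : (1-θ) * y ≤ etaS s C r * B^2 := by
      have hsplit : ((1:ℝ)-θ) * (P * (2*θ)^θ)^((1:ℝ)/(1-θ)) = V * ((2:ℝ)^α * (r * r^α)) := by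
        rw [hPexp, hPdef, Real.mul_rpow hM.le hr,
          show ((1:ℝ)+α) = 1 + α from rfl,
          Real.rpow_add hr0, Real.rpow_one,
          Real.mul_rpow (by norm_num : (0:ℝ) ≤ 2) hθ0.le, hVdef]
        ring
      have hrα : r^α ≤ (1+r)^α := Real.rpow_le_rpow hr (by linarith) hα0.le
      have heta : etaS s C r = C^2 * ((2:ℝ)^α * (r * (1+r)^α)) := by
        rw [etaS, ← hαdef, Real.mul_rpow (by norm_num : (0:ℝ) ≤ 2) (by linarith)]
        ring
      have hmain : V * ((2:ℝ)^α * (r * r^α)) ≤ C^2 * ((2:ℝ)^α * (r * (1+r)^α)) := by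
        have h1 : (2:ℝ)^α * (r * r^α) ≤ (2:ℝ)^α * (r * (1+r)^α) := by
          have h2α : (0:ℝ) ≤ (2:ℝ)^α := (Real.rpow_pos_of_pos two_pos _).le
          apply mul_le_mul_of_nonneg_left _ h2α
          exact mul_le_mul_of_nonneg_left hrα hr
        calc V * ((2:ℝ)^α * (r * r^α)) ≤ C^2 * ((2:ℝ)^α * (r * r^α)) := by
              apply mul_le_mul_of_nonneg_right hC2
              positivity
          _ ≤ C^2 * ((2:ℝ)^α * (r * (1+r)^α)) := by
              apply mul_le_mul_of_nonneg_left h1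
              positivity
      calc (1-θ) * y = (((1:ℝ)-θ) * (P * (2*θ)^θ)^((1:ℝ)/(1-θ))) * B^2 := by
            rw [hydef]; ring
        _ ≤ (C^2 * ((2:ℝ)^α * (r * (1+r)^α))) * B^2 := by
            rw [hsplit]
            apply mul_le_mul_of_nonneg_right hmain (by positivity)
        _ = etaS s C r * B^2 := by rw [heta]
    linarith [hterm1, hterm2]

open StmtAux in
/-- For u ∈ H^{-s}(𝕋, ℝ) of mean zero (0 ≤ s < 1/2), and f in the Hardy–Sobolev space
H^{1/2}_+, the pairing ⟨u | f·conj f⟩ (expressed via Fourier coefficients: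
⟨u|g⟩ = Σ_n û(n) conj(ĝ(n)) where ĝ(n) = Σ_k f̂(k) conj(f̂(k-n)) are the Fourier
coefficients of f·conj f) is well defined and
|⟨u | f·conj f⟩| ≤ (1/2)‖f‖_{1/2}² + η_s(‖u‖_{-s})‖f‖_0². -/
theorem stmt2 (s : ℝ) (hs0 : 0 ≤ s) (hs : s < 1/2) :
    ∃ C : ℝ, 0 < C ∧ ∀ u : ℤ → ℂ,
      (∀ n : ℤ, u (-n) = conj (u n)) → u 0 = 0 → memH (-s) u →
      ∀ f : ℤ → ℂ, (∀ n : ℤ, n < 0 → f n = 0) → memH (1/2) f →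
      (∀ n : ℤ, Summable fun k : ℤ => f k * conj (f (k - n))) ∧
      (Summable fun n : ℤ => u n * conj (∑' k : ℤ, f k * conj (f (k - n)))) ∧
      ‖∑' n : ℤ, u n * conj (∑' k : ℤ, f k * conj (f (k - n)))‖
        ≤ (1/2) * hnorm (1/2) f ^ 2 + etaS s C (hnorm (-s) u) * hnorm 0 f ^ 2 := by
  set τ : ℝ := (1+2*s)/2 with hτdef
  have hτ0 : 0 < τ := by rw [hτdef]; linarith
  have hτ1 : τ < 1 := by rw [hτdef]; linarith
  have h1τ : 0 < 1 - τ := by linarith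
  set DQ : ℝ := 8*(2 + 1/(1-τ)) + 8*((2 + 1/τ)*2^τ) with hDQdef
  have hDQ0 : 0 < DQ := by rw [hDQdef]; positivity
  set M : ℝ := Real.sqrt DQ with hMdef
  have hM0 : 0 < M := Real.sqrt_pos.2 hDQ0
  obtain ⟨C, hC0, hCy⟩ := young_final s hs0 hs M hM0
  refine ⟨C, hC0, ?_⟩
  intro u husym hu0 humem f hfneg hfmem
  -- basic summability of |f|^2
  have habs : ∀ v : ℤ → ℂ, ∀ n : ℤ, ‖v n‖ = ‖v n‖ :=
    fun v n => rfl
  have hb2 : Summable (fun k : ℤ => ‖f k‖^2) := by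
    refine Summable.of_nonneg_of_le (fun k => by positivity) (fun k => ?_) hfmem
    rw [← habs f k]
    have h1 : (1:ℝ) ≤ jap k ^ (2 * (1/2:ℝ)) :=
      Real.one_le_rpow (jap_one_le k) (by norm_num)
    nlinarith [sq_nonneg ‖f k‖, h1]
  have hb2' : ∀ n : ℤ, Summable (fun k : ℤ => ‖f (k - n)‖^2) := by
    intro n
    exact ((Equiv.subRight n).summable_iff (f := fun k : ℤ => ‖f k‖^2)).2 hb2
  have hnormsum : ∀ n : ℤ, Summable (fun k : ℤ => ‖f k * conj (f (k - n))‖) := by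
    intro n
    refine Summable.of_nonneg_of_le (fun k => norm_nonneg _) (fun k => ?_)
      (((hb2.add (hb2' n)).div_const 2))
    rw [norm_mul, RCLike.norm_conj]
    nlinarith [sq_nonneg (‖f k‖ - ‖f (k-n)‖), norm_nonneg (f k), norm_nonneg (f (k-n))]
  have goal1 : ∀ n : ℤ, Summable fun k : ℤ => f k * conj (f (k - n)) :=
    fun n => (hnormsum n).of_norm
  -- ENNReal setup
  set g : ℤ → ℂ := fun n => ∑' k : ℤ, f k * conj (f (k - n)) with hgdef
  set aE : ℤ → ℝ≥0∞ := fun k => (‖f k‖₊ : ℝ≥0∞) with haE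
  set uE : ℤ → ℝ≥0∞ := fun n => (‖u n‖₊ : ℝ≥0∞) with huE
  set gEnn : ℤ → ℝ≥0∞ := fun n => (‖g n‖₊ : ℝ≥0∞) with hgEnn
  have haEneg : ∀ j : ℤ, j < 0 → aE j = 0 := by
    intro j hj
    rw [haE]; simp only [hfneg j hj]; simp
  have huE0 : uE 0 = 0 := by rw [huE]; simp only [hu0]; simp
  have hgE : ∀ n : ℤ, gEnn n ≤ ∑' j : ℤ, aE j * aE (j + n) := by
    intro n
    have h1 : ‖g n‖ ≤ ∑' k : ℤ, ‖f k * conj (f (k - n))‖ := by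
      rw [hgdef]
      exact norm_tsum_le_tsum_norm (hnormsum n)
    have h2 : (‖g n‖₊ : ℝ≥0∞) ≤ ENNReal.ofReal (∑' k : ℤ, ‖f k * conj (f (k - n))‖) := by
      rw [← ((ofReal_norm _).trans (enorm_eq_nnnorm _))]
      exact ENNReal.ofReal_le_ofReal h1
    have h3 : ENNReal.ofReal (∑' k : ℤ, ‖f k * conj (f (k - n))‖)
        = ∑' k : ℤ, aE k * aE (k - n) := by
      rw [ENNReal.ofReal_tsum_of_nonneg (fun k => norm_nonneg _) (hnormsum n)]
      apply tsum_congr; intro k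
      rw [norm_mul, RCLike.norm_conj, ENNReal.ofReal_mul (norm_nonneg _),
        ((ofReal_norm _).trans (enorm_eq_nnnorm _)), ((ofReal_norm _).trans (enorm_eq_nnnorm _))]
    have h4 : (∑' k : ℤ, aE k * aE (k - n)) = ∑' j : ℤ, aE j * aE (j + n) := by
      rw [← (Equiv.addRight n).tsum_eq (fun k => aE k * aE (k - n))]
      apply tsum_congr; intro j
      simp only [Equiv.coe_addRight, add_sub_cancel_right]
      rw [mul_comm]
    calc gEnn n = (‖g n‖₊ : ℝ≥0∞) := rfl
      _ ≤ ENNReal.ofReal (∑' k : ℤ, ‖f k * conj (f (k - n))‖) := h2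
      _ = ∑' k : ℤ, aE k * aE (k - n) := h3
      _ = ∑' j : ℤ, aE j * aE (j + n) := h4
  have hcore := core s τ hs0 hs hτdef aE uE haEneg huE0 gEnn hgE
  -- identify the sums
  have hf0mem : memH 0 f := by
    refine Summable.of_nonneg_of_le
      (fun k => mul_nonneg (Real.rpow_nonneg (jap_pos k).le _) (by positivity))
      (fun k => ?_) hfmem
    have h1 : (1:ℝ) ≤ jap k ^ (2 * (1/2:ℝ)) :=
      Real.one_le_rpow (jap_one_le k) (by norm_num)
    have h2 : jap k ^ (2 * (0:ℝ)) = 1 := by norm_num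
    rw [h2]
    nlinarith [sq_nonneg ‖f k‖, h1]
  set r2 : ℝ := hnormSq (-s) u with hr2def
  set R2 : ℝ := hnormSq (1/2) f with hR2def
  set B2 : ℝ := hnormSq 0 f with hB2def
  have hr2_0 : 0 ≤ r2 := hnormSq_nonneg _ _
  have hR2_0 : 0 ≤ R2 := hnormSq_nonneg _ _
  have hB2_0 : 0 ≤ B2 := hnormSq_nonneg _ _
  have hidr : (∑' n : ℤ, japE n ^ (2*(-s)) * uE n ^ (2:ℝ)) = ENNReal.ofReal r2 :=
    (ofReal_hnormSq (-s) u humem).symm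
  have hidR : (∑' k : ℤ, japE k ^ (1:ℝ) * aE k ^ (2:ℝ)) = ENNReal.ofReal R2 := by
    rw [hR2def, ofReal_hnormSq (1/2) f hfmem]
    apply tsum_congr; intro k
    norm_num
    rfl
  have hidB : (∑' k : ℤ, aE k ^ (2:ℝ)) = ENNReal.ofReal B2 := by
    rw [hB2def, ofReal_hnormSq 0 f hf0mem]
    apply tsum_congr; intro k
    norm_num
    rfl
  -- the real-valued bound target
  set RR : ℝ := M * (r2 ^ (1/2:ℝ) * (R2 ^ τ * B2 ^ (1-τ))) with hRRdef
  have hRR0 : 0 ≤ RR := by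
    rw [hRRdef]; positivity
  have habstract : ∀ d rr RRb BB : ℝ, 0 ≤ d → 0 ≤ rr → 0 ≤ RRb → 0 ≤ BB →
      ENNReal.ofReal d ^ (1/2:ℝ) *
        (ENNReal.ofReal rr ^ (1/2:ℝ) * (ENNReal.ofReal RRb ^ τ * ENNReal.ofReal BB ^ (1-τ)))
      = ENNReal.ofReal (d ^ (1/2:ℝ) * (rr ^ (1/2:ℝ) * (RRb ^ τ * BB ^ (1-τ)))) := by
    intro d rr RRb BB hd hrr hRRb hBB
    rw [ENNReal.ofReal_rpow_of_nonneg hd (by norm_num : (0:ℝ) ≤ 1/2),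
      ENNReal.ofReal_rpow_of_nonneg hrr (by norm_num : (0:ℝ) ≤ 1/2),
      ENNReal.ofReal_rpow_of_nonneg hRRb hτ0.le,
      ENNReal.ofReal_rpow_of_nonneg hBB h1τ.le,
      ← ENNReal.ofReal_mul (Real.rpow_nonneg hRRb _),
      ← ENNReal.ofReal_mul (Real.rpow_nonneg hrr _),
      ← ENNReal.ofReal_mul (Real.rpow_nonneg hd _)]
  have hMeq : M = DQ ^ (1/2:ℝ) := by rw [hMdef, Real.sqrt_eq_rpow]
  have hRReq : RR = DQ ^ (1/2:ℝ) * (r2 ^ (1/2:ℝ) * (R2 ^ τ * B2 ^ (1-τ))) := by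
    rw [hRRdef, hMeq]
  have hL : (∑' n : ℤ, uE n * gEnn n) ≤ ENNReal.ofReal RR := by
    rw [hidr, hidR, hidB] at hcore
    refine le_trans hcore (le_of_eq ?_)
    rw [← hDQdef, habstract DQ r2 R2 B2 hDQ0.le hr2_0 hR2_0 hB2_0, ← hRReq]
  -- summability over n (goal 2)
  have hLfin : (∑' n : ℤ, uE n * gEnn n) ≠ ⊤ :=
    ne_top_of_le_ne_top ENNReal.ofReal_ne_top hL
  have hcoe : ∀ n : ℤ, uE n * gEnn n = ((‖u n‖₊ * ‖g n‖₊ : ℝ≥0) : ℝ≥0∞) := by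
    intro n; rw [huE, hgEnn]; simp [ENNReal.coe_mul]
  have hsum2' : Summable (fun n : ℤ => (‖u n‖₊ * ‖g n‖₊ : ℝ≥0)) := by
    rw [← ENNReal.tsum_coe_ne_top_iff_summable]
    rw [← tsum_congr hcoe]
    exact hLfin
  have hsum2r : Summable (fun n : ℤ => ‖u n‖ * ‖g n‖) := by
    have := NNReal.summable_coe.2 hsum2'
    simpa using this
  have hsum2n : Summable (fun n : ℤ => ‖u n * conj (g n)‖) := by
    refine hsum2r.congr fun n => ?_
    rw [norm_mul, RCLike.norm_conj]
  have goal2 : Summable fun n : ℤ => u n * conj (∑' k : ℤ, f k * conj (f (k - n))) :=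
    hsum2n.of_norm
  refine ⟨goal1, goal2, ?_⟩
  -- final numeric chain
  have htsum_eq : (∑' n : ℤ, ‖u n‖ * ‖g n‖) = (∑' n : ℤ, uE n * gEnn n).toReal := by
    rw [tsum_congr hcoe, ← ENNReal.coe_tsum hsum2', ENNReal.coe_toReal, NNReal.coe_tsum]
    apply tsum_congr; intro n
    simp
  have hchain : ‖∑' n : ℤ, u n * conj (g n)‖ ≤ RR := by
    calc ‖∑' n : ℤ, u n * conj (g n)‖
        = ‖∑' n : ℤ, u n * conj (g n)‖ := rfl
      _ ≤ ∑' n : ℤ, ‖u n * conj (g n)‖ := norm_tsum_le_tsum_norm hsum2n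
      _ = ∑' n : ℤ, ‖u n‖ * ‖g n‖ := by
          apply tsum_congr; intro n
          rw [norm_mul, RCLike.norm_conj]
      _ = (∑' n : ℤ, uE n * gEnn n).toReal := htsum_eq
      _ ≤ RR := ENNReal.toReal_le_of_le_ofReal hRR0 hL
  -- convert RR to hnorm quantities and apply Young
  have hr : hnorm (-s) u = r2 ^ (1/2:ℝ) := by
    rw [hnorm, Real.sqrt_eq_rpow]
  have hRpow : R2 ^ τ = hnorm (1/2) f ^ ((1:ℝ)+2*s) := by
    rw [hnorm, Real.sqrt_eq_rpow, ← Real.rpow_mul hR2_0,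
      show (1/2:ℝ) * (1+2*s) = τ from by rw [hτdef]; ring]
  have hBpow : B2 ^ (1-τ) = hnorm 0 f ^ ((1:ℝ)-2*s) := by
    rw [hnorm, Real.sqrt_eq_rpow, ← Real.rpow_mul hB2_0,
      show (1/2:ℝ) * (1-2*s) = 1-τ from by rw [hτdef]; ring]
  have hRR : RR = M * (hnorm (-s) u * (hnorm (1/2) f ^ ((1:ℝ)+2*s) * hnorm 0 f ^ ((1:ℝ)-2*s))) := by
    rw [hRRdef, hr, hRpow, hBpow]
  have hfinal := hCy (hnorm (-s) u) (hnorm (1/2) f) (hnorm 0 f)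
    (Real.sqrt_nonneg _) (Real.sqrt_nonneg _) (Real.sqrt_nonneg _)
  calc ‖∑' n : ℤ, u n * conj (∑' k : ℤ, f k * conj (f (k - n)))‖
      = ‖∑' n : ℤ, u n * conj (g n)‖ := rfl
    _ ≤ RR := hchain
    _ = M * (hnorm (-s) u * (hnorm (1/2) f ^ ((1:ℝ)+2*s) * hnorm 0 f ^ ((1:ℝ)-2*s))) := hRR
    _ ≤ 1/2 * hnorm (1/2) f ^ 2 + etaS s C (hnorm (-s) u) * hnorm 0 f ^ 2 := hfinal
end

section
/- Let u ∈ H^{-s}(𝕋, ℝ) with mean zero and 0 ≤ s < 1/2, and define the sesquilinear form Q_u⁺(f,g) = ⟨-i∂_x f | g⟩ - ⟨u | g·conj(f)⟩ + (1 + η_s(‖u‖_{-s}))⟨f | g⟩ on H^{1/2}_+. Then Q_u⁺ is positive and satisfies (1/2)‖f‖_{1/2}² ≤ Q_u⁺(f,f) ≤ (3 + 2η_s(‖u‖_{-s}))‖f‖_{1/2}² for all f ∈ H^{1/2}_+. -/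
open scoped BigOperators ComplexConjugate ENNReal NNReal

/-! ### Auxiliary lemmas -/

noncomputable def jnn (m : ℕ) : ℝ≥0∞ := ENNReal.ofReal (max 1 m)

lemma one_le_jnn (m : ℕ) : 1 ≤ jnn m := by
  rw [jnn, ENNReal.one_le_ofReal]; exact le_max_left _ _

lemma jnn_ne_zero (m : ℕ) : jnn m ≠ 0 := by
  intro h; simpa [h] using one_le_jnn m

lemma jnn_ne_top (m : ℕ) : jnn m ≠ ⊤ := ENNReal.ofReal_ne_top

lemma jnn_mono {m k : ℕ} (h : m ≤ k) : jnn m ≤ jnn k := by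
  apply ENNReal.ofReal_le_ofReal
  exact max_le_max le_rfl (by exact_mod_cast h)

lemma jnn_le_two_mul {m k : ℕ} (h : m ≤ 2 * k) : jnn m ≤ 2 * jnn k := by
  have h2 : (2:ℝ≥0∞) * jnn k = ENNReal.ofReal (2 * max 1 (k:ℝ)) := by
    rw [ENNReal.ofReal_mul (by norm_num), ENNReal.ofReal_ofNat, jnn]
  rw [jnn, h2]
  apply ENNReal.ofReal_le_ofReal
  have hm : (m:ℝ) ≤ 2*k := by exact_mod_cast h
  have h1k : (1:ℝ) ≤ max 1 (k:ℝ) := le_max_left _ _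
  have hkk : (k:ℝ) ≤ max 1 (k:ℝ) := le_max_right _ _
  apply max_le <;> nlinarith

lemma tsum_CS {ι : Type} [Countable ι] [MeasurableSpace ι] [MeasurableSingletonClass ι]
    (x y : ι → ℝ≥0∞) :
    ∑' n, x n * y n ≤ (∑' n, x n ^ (2:ℝ)) ^ ((1:ℝ)/2) * (∑' n, y n ^ (2:ℝ)) ^ ((1:ℝ)/2) := by
  have h := ENNReal.lintegral_mul_le_Lp_mul_Lq (μ := MeasureTheory.Measure.count (α := ι))
    (p := 2) (q := 2) ⟨by norm_num, by norm_num, by norm_num⟩ (f := x) (g := y)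
    (measurable_of_countable x).aemeasurable (measurable_of_countable y).aemeasurable
  simpa [MeasureTheory.lintegral_count] using h

lemma tsum_holder {ι : Type} [Countable ι] [MeasurableSpace ι] [MeasurableSingletonClass ι]
    {θ : ℝ} (h0 : 0 < θ) (h1 : θ < 1) (x y : ι → ℝ≥0∞) :
    ∑' n, x n ^ θ * y n ^ (1-θ) ≤ (∑' n, x n) ^ θ * (∑' n, y n) ^ (1-θ) := by
  have hθ : θ ≠ 0 := ne_of_gt h0
  have hθ1 : (1:ℝ) - θ ≠ 0 := by linarith
  have hpq : (1/θ).HolderConjugate (1/(1-θ)) := by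
    constructor
    · rw [one_div, one_div, inv_inv, inv_inv, inv_one]; ring
    · exact one_div_pos.2 h0
    · exact one_div_pos.2 (by linarith)
  have h := ENNReal.lintegral_mul_le_Lp_mul_Lq (μ := MeasureTheory.Measure.count (α := ι))
    hpq (f := fun n => x n ^ θ) (g := fun n => y n ^ (1-θ))
    (measurable_of_countable _).aemeasurable (measurable_of_countable _).aemeasurable
  simp only [MeasureTheory.lintegral_count, Pi.mul_apply] at h
  calc ∑' n, x n ^ θ * y n ^ (1-θ) ≤
      (∑' n, (x n ^ θ) ^ (1/θ)) ^ (1/(1/θ)) * (∑' n, (y n ^ (1-θ)) ^ (1/(1-θ))) ^ (1/(1/(1-θ))) := h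
    _ = (∑' n, x n) ^ θ * (∑' n, y n) ^ (1-θ) := by
        rw [one_div_one_div, one_div_one_div]
        congr 1
        · congr 1
          exact tsum_congr fun n => by
            rw [← ENNReal.rpow_mul, mul_one_div_cancel hθ, ENNReal.rpow_one]
        · congr 1
          exact tsum_congr fun n => by
            rw [← ENNReal.rpow_mul, mul_one_div_cancel hθ1, ENNReal.rpow_one]

lemma sum_range_rpow {β : ℝ} (h0 : 0 ≤ β) (h1 : β < 1) (m : ℕ) :
    ∑ i ∈ Finset.range m, ((i : ℝ) + 1) ^ (-β) ≤ (m : ℝ) ^ (1-β) / (1-β) := by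
  have hb : (0:ℝ) < 1 - β := by linarith
  induction m with
  | zero => simp [Real.zero_rpow (ne_of_gt hb)]
  | succ m ih =>
    rw [Finset.sum_range_succ]
    set c : ℝ := (m:ℝ) + 1 with hc
    have hcpos : (0:ℝ) < c := by positivity
    have hmnn : (0:ℝ) ≤ (m:ℝ) := Nat.cast_nonneg m
    have hbern : ((m:ℝ)/c) ^ (1-β) ≤ (1-β) * ((m:ℝ)/c) + β * 1 := by
      have := Real.geom_mean_le_arith_mean2_weighted (le_of_lt hb) h0
        (div_nonneg hmnn (le_of_lt hcpos)) zero_le_one (by ring)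
      simpa using this
    have key : (1-β) * c ^ (-β) ≤ c ^ (1-β) - (m:ℝ) ^ (1-β) := by
      have hsplit : (m:ℝ) ^ (1-β) = c ^ (1-β) * ((m:ℝ)/c) ^ (1-β) := by
        rw [Real.div_rpow hmnn (le_of_lt hcpos)]
        field_simp
      have hcb : c ^ (1-β) * (1/c) = c ^ (-β) := by
        rw [one_div, ← Real.rpow_neg_one c, ← Real.rpow_add hcpos]
        congr 1; ring
      have h2 : c ^ (1-β) - (m:ℝ) ^ (1-β) = c ^ (1-β) * (1 - ((m:ℝ)/c) ^ (1-β)) := by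
        rw [hsplit]; ring
      rw [h2]
      have h3 : (1-β) * (1/c) ≤ 1 - ((m:ℝ)/c) ^ (1-β) := by
        have : 1 - ((1-β) * ((m:ℝ)/c) + β * 1) = (1-β) * (1 - (m:ℝ)/c) := by ring
        have h4 : 1 - (m:ℝ)/c = 1/c := by rw [hc]; field_simp; ring
        nlinarith [hbern]
      calc (1-β) * c ^ (-β) = c ^ (1-β) * ((1-β) * (1/c)) := by rw [← hcb]; ring
        _ ≤ c ^ (1-β) * (1 - ((m:ℝ)/c) ^ (1-β)) := by
            apply mul_le_mul_of_nonneg_left h3 (Real.rpow_nonneg (le_of_lt hcpos) _)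
    have hfin : (m:ℝ) ^ (1-β) / (1-β) + c ^ (-β) ≤ c ^ (1-β) / (1-β) := by
      rw [div_add' _ _ _ (ne_of_gt hb), div_le_div_iff₀ hb hb]
      nlinarith [key]
    push_cast
    calc ∑ i ∈ Finset.range m, ((i : ℝ) + 1) ^ (-β) + ((m:ℝ)+1) ^ (-β)
        ≤ (m:ℝ) ^ (1-β)/(1-β) + c ^ (-β) := by exact add_le_add ih le_rfl
      _ ≤ c ^ (1-β) / (1-β) := hfin

lemma jnn_rpow_neg_anti {c : ℝ} (hc : 0 ≤ c) {m k : ℕ} (h : m ≤ k) :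
    jnn k ^ (-c) ≤ jnn m ^ (-c) := by
  rw [ENNReal.rpow_neg, ENNReal.rpow_neg]
  exact ENNReal.inv_le_inv.2 (ENNReal.rpow_le_rpow (jnn_mono h) hc)

lemma jnn_rpow_neg_le {m k : ℕ} (h : m ≤ 2 * k) {c : ℝ} (h0 : 0 ≤ c) (h1 : c ≤ 1) :
    jnn k ^ (-c) ≤ 2 * jnn m ^ (-c) := by
  have hle : jnn m ^ c ≤ 2 * jnn k ^ c := by
    calc jnn m ^ c ≤ (2 * jnn k) ^ c := ENNReal.rpow_le_rpow (jnn_le_two_mul h) h0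
      _ = 2 ^ c * jnn k ^ c := ENNReal.mul_rpow_of_nonneg _ _ h0
      _ ≤ 2 ^ (1:ℝ) * jnn k ^ c :=
          mul_le_mul_left (ENNReal.rpow_le_rpow_of_exponent_le (by norm_num) h1) _
      _ = 2 * jnn k ^ c := by rw [ENNReal.rpow_one]
  have hkc0 : jnn k ^ c ≠ 0 := by
    simp [ENNReal.rpow_eq_zero_iff, jnn_ne_zero k, jnn_ne_top k]
  have hmc0 : jnn m ^ c ≠ 0 := by
    simp [ENNReal.rpow_eq_zero_iff, jnn_ne_zero m, jnn_ne_top m]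
  rw [ENNReal.rpow_neg, ENNReal.rpow_neg]
  have hinv : (2 * jnn k ^ c)⁻¹ ≤ (jnn m ^ c)⁻¹ := ENNReal.inv_le_inv.2 hle
  have h2 : (2 * jnn k ^ c)⁻¹ = 2⁻¹ * (jnn k ^ c)⁻¹ := by
    rw [ENNReal.mul_inv (Or.inl (by norm_num)) (Or.inl (by norm_num))]
  calc (jnn k ^ c)⁻¹ = 2 * (2⁻¹ * (jnn k ^ c)⁻¹) := by
        rw [← mul_assoc, ENNReal.mul_inv_cancel (by norm_num) (by norm_num), one_mul]
    _ = 2 * (2 * jnn k ^ c)⁻¹ := by rw [h2]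
    _ ≤ 2 * (jnn m ^ c)⁻¹ := by gcongr

lemma tsum_ite_count {c : ℕ → Prop} [DecidablePred c] {m : ℕ} (h : ∀ j, c j → j < m)
    (x : ℝ≥0∞) : ∑' j : ℕ, (if c j then x else 0) ≤ (m : ℝ≥0∞) * x := by
  calc ∑' j : ℕ, (if c j then x else 0) ≤ ∑' j : ℕ, (if j < m then x else 0) := by
        apply ENNReal.tsum_le_tsum
        intro j
        by_cases hj : c j
        · simp [hj, h j hj]
        · simp [hj]
    _ = ∑ j ∈ Finset.range m, (if j < m then x else 0) := by
        apply tsum_eq_sum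
        intro j hj
        simp only [Finset.mem_range] at hj
        simp [hj]
    _ ≤ ∑ j ∈ Finset.range m, x := by
        apply Finset.sum_le_sum; intro j hj; split <;> simp
    _ = (m : ℝ≥0∞) * x := by simp [Finset.sum_const, nsmul_eq_mul]

lemma L_X2 (g : ℕ → ℝ≥0∞) :
    ∑' n : ℕ, ∑' j : ℕ, (if n+1 < j then jnn j ^ (-1:ℝ) * g (j+n+1) ^ (2:ℝ) else 0)
      ≤ 2 * ∑' j : ℕ, g j ^ (2:ℝ) := by
  set G := ∑' j : ℕ, g j ^ (2:ℝ) with hG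
  have step1 : ∀ j n : ℕ, (if n+1 < j then jnn j ^ (-1:ℝ) * g (j+n+1) ^ (2:ℝ) else 0)
      ≤ (fun m => if m+1 ≤ 2*j ∧ j < m then 2 * jnn m ^ (-1:ℝ) * g m ^ (2:ℝ) else 0) (j+n+1) := by
    intro j n
    by_cases hj : n+1 < j
    · have hcond : (j+n+1)+1 ≤ 2*j ∧ j < j+n+1 := by omega
      simp only [hj, if_true, hcond, and_self, if_true]
      have : jnn j ^ (-1:ℝ) ≤ 2 * jnn (j+n+1) ^ (-1:ℝ) :=
        jnn_rpow_neg_le (by omega) (by norm_num) (by norm_num)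
      calc jnn j ^ (-1:ℝ) * g (j+n+1) ^ (2:ℝ)
          ≤ (2 * jnn (j+n+1) ^ (-1:ℝ)) * g (j+n+1) ^ (2:ℝ) := by gcongr
        _ = 2 * jnn (j+n+1) ^ (-1:ℝ) * g (j+n+1) ^ (2:ℝ) := by ring
    · simp [hj]
  calc ∑' n : ℕ, ∑' j : ℕ, (if n+1 < j then jnn j ^ (-1:ℝ) * g (j+n+1) ^ (2:ℝ) else 0)
      = ∑' j : ℕ, ∑' n : ℕ, (if n+1 < j then jnn j ^ (-1:ℝ) * g (j+n+1) ^ (2:ℝ) else 0) :=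
        ENNReal.tsum_comm
    _ ≤ ∑' j : ℕ, ∑' m : ℕ, (if m+1 ≤ 2*j ∧ j < m then 2 * jnn m ^ (-1:ℝ) * g m ^ (2:ℝ) else 0) := by
        apply ENNReal.tsum_le_tsum
        intro j
        calc ∑' n : ℕ, (if n+1 < j then jnn j ^ (-1:ℝ) * g (j+n+1) ^ (2:ℝ) else 0)
            ≤ ∑' n : ℕ, (fun m => if m+1 ≤ 2*j ∧ j < m then 2 * jnn m ^ (-1:ℝ) * g m ^ (2:ℝ) else 0) (j+n+1) :=
              ENNReal.tsum_le_tsum (step1 j)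
          _ ≤ ∑' m : ℕ, (if m+1 ≤ 2*j ∧ j < m then 2 * jnn m ^ (-1:ℝ) * g m ^ (2:ℝ) else 0) :=
              ENNReal.tsum_comp_le_tsum_of_injective (fun a b hab => by omega) _
    _ = ∑' m : ℕ, ∑' j : ℕ, (if m+1 ≤ 2*j ∧ j < m then 2 * jnn m ^ (-1:ℝ) * g m ^ (2:ℝ) else 0) :=
        ENNReal.tsum_comm
    _ ≤ ∑' m : ℕ, 2 * g m ^ (2:ℝ) := by
        apply ENNReal.tsum_le_tsum
        intro m
        have hcount : ∑' j : ℕ, (if m+1 ≤ 2*j ∧ j < m then 2 * jnn m ^ (-1:ℝ) * g m ^ (2:ℝ) else 0)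
            ≤ (m : ℝ≥0∞) * (2 * jnn m ^ (-1:ℝ) * g m ^ (2:ℝ)) :=
          tsum_ite_count (fun j hj => hj.2) _
        refine hcount.trans ?_
        have hm : (m : ℝ≥0∞) ≤ jnn m := by
          rw [jnn, ← ENNReal.ofReal_natCast]
          exact ENNReal.ofReal_le_ofReal (le_max_right _ _)
        have : (m : ℝ≥0∞) * jnn m ^ (-1:ℝ) ≤ 1 := by
          rw [ENNReal.rpow_neg_one]
          calc (m : ℝ≥0∞) * (jnn m)⁻¹ ≤ jnn m * (jnn m)⁻¹ := by gcongr
            _ = 1 := ENNReal.mul_inv_cancel (jnn_ne_zero m) (jnn_ne_top m)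
        calc (m : ℝ≥0∞) * (2 * jnn m ^ (-1:ℝ) * g m ^ (2:ℝ))
            = ((m : ℝ≥0∞) * jnn m ^ (-1:ℝ)) * (2 * g m ^ (2:ℝ)) := by ring
          _ ≤ 1 * (2 * g m ^ (2:ℝ)) := by gcongr
          _ = 2 * g m ^ (2:ℝ) := one_mul _
    _ = 2 * G := ENNReal.tsum_mul_left

lemma jnn_succ (i : ℕ) : jnn (i+1) = ENNReal.ofReal ((i:ℝ)+1) := by
  rw [jnn]
  congr 1
  rw [max_eq_right] <;> push_cast <;> linarith

lemma Sm_bound {β : ℝ} (h0 : 0 ≤ β) (h1 : β < 1) (m : ℕ) :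
    ∑' j : ℕ, (if 2*j ≤ m then jnn j ^ (-β) else 0)
      ≤ ENNReal.ofReal (1 + 1/(1-β)) * jnn m ^ (1-β) := by
  have hb : (0:ℝ) < 1 - β := by linarith
  have hjm : ∀ k : ℕ, ENNReal.ofReal ((k:ℝ) ^ (1-β)) ≤ jnn k ^ (1-β) := by
    intro k
    have h2 : ((k:ℝ)) ^ (1-β) ≤ (max 1 (k:ℝ)) ^ (1-β) :=
      Real.rpow_le_rpow (Nat.cast_nonneg k) (le_max_right _ _) (le_of_lt hb)
    calc ENNReal.ofReal ((k:ℝ) ^ (1-β)) ≤ ENNReal.ofReal ((max 1 (k:ℝ)) ^ (1-β)) :=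
          ENNReal.ofReal_le_ofReal h2
      _ = jnn k ^ (1-β) := by
          rw [jnn, ENNReal.ofReal_rpow_of_pos (by positivity)]
  have hone : (1:ℝ≥0∞) ≤ jnn m ^ (1-β) := by
    calc (1:ℝ≥0∞) = 1 ^ (1-β) := (ENNReal.one_rpow _).symm
      _ ≤ jnn m ^ (1-β) := ENNReal.rpow_le_rpow (one_le_jnn m) (le_of_lt hb)
  have heq : ∑' j : ℕ, (if 2*j ≤ m then jnn j ^ (-β) else 0)
      = ∑ j ∈ Finset.range (m+1), (if 2*j ≤ m then jnn j ^ (-β) else 0) := by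
    apply tsum_eq_sum
    intro j hj
    simp only [Finset.mem_range] at hj
    have : ¬ (2*j ≤ m) := by omega
    simp [this]
  rw [heq, Finset.sum_range_succ']
  have h00 : (if 2*0 ≤ m then jnn 0 ^ (-β) else 0) = 1 := by
    have : jnn 0 = 1 := by rw [jnn]; simp
    simp [this]
  rw [h00]
  have hterm : ∀ i ∈ Finset.range m, (if 2*(i+1) ≤ m then jnn (i+1) ^ (-β) else 0)
      ≤ ENNReal.ofReal (((i:ℝ)+1) ^ (-β)) := by
    intro i _
    split
    · rw [jnn_succ, ENNReal.ofReal_rpow_of_pos (by positivity)]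
    · simp
  calc ∑ i ∈ Finset.range m, (if 2*(i+1) ≤ m then jnn (i+1) ^ (-β) else 0) + 1
      ≤ ∑ i ∈ Finset.range m, ENNReal.ofReal (((i:ℝ)+1) ^ (-β)) + 1 := by
        gcongr with i hi
        exact hterm i hi
    _ = ENNReal.ofReal (∑ i ∈ Finset.range m, ((i:ℝ)+1) ^ (-β)) + 1 := by
        rw [ENNReal.ofReal_sum_of_nonneg]
        intro i _; positivity
    _ ≤ ENNReal.ofReal ((m:ℝ) ^ (1-β) / (1-β)) + 1 := by
        exact add_le_add_left (ENNReal.ofReal_le_ofReal (sum_range_rpow h0 h1 m)) 1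
    _ ≤ ENNReal.ofReal (1/(1-β)) * jnn m ^ (1-β) + 1 * jnn m ^ (1-β) := by
        gcongr
        · have : (m:ℝ) ^ (1-β) / (1-β) = (1/(1-β)) * (m:ℝ) ^ (1-β) := by ring
          rw [this, ENNReal.ofReal_mul (by positivity)]
          exact mul_le_mul_right (hjm m) _
        · exact le_trans hone (by rw [one_mul])
    _ = (ENNReal.ofReal (1/(1-β)) + 1) * jnn m ^ (1-β) := by ring
    _ = ENNReal.ofReal (1 + 1/(1-β)) * jnn m ^ (1-β) := by
        congr 1
        rw [ENNReal.ofReal_add (by norm_num) (by positivity), ENNReal.ofReal_one, add_comm]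

lemma L_X1 {δ : ℝ} (hδ0 : 0 < δ) (hδ1 : δ ≤ 1/4) (g : ℕ → ℝ≥0∞) :
    ∑' n : ℕ, jnn (n+1) ^ (-(2*δ)) *
        ∑' j : ℕ, (if j ≤ n+1 then jnn j ^ (-(1-2*δ)) * g (j+n+1) ^ (2:ℝ) else 0)
      ≤ ENNReal.ofReal (2 * (1 + 1/(2*δ))) * ∑' j : ℕ, g j ^ (2:ℝ) := by
  set β : ℝ := 1 - 2*δ with hβ
  have hβ0 : 0 ≤ β := by rw [hβ]; linarith
  have hβ1 : β < 1 := by rw [hβ]; linarith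
  have h2δ : (0:ℝ) ≤ 2*δ := by linarith
  have h2δ1 : 2*δ ≤ 1 := by linarith
  set G := ∑' j : ℕ, g j ^ (2:ℝ) with hG
  have hH : ∀ j n : ℕ, jnn (n+1) ^ (-(2*δ)) * (if j ≤ n+1 then jnn j ^ (-β) * g (j+n+1) ^ (2:ℝ) else 0)
      ≤ (fun m => (if 2*j ≤ m then jnn j ^ (-β) else 0) * (2 * (jnn m ^ (-(2*δ)) * g m ^ (2:ℝ)))) (j+n+1) := by
    intro j n
    by_cases hj : j ≤ n+1
    · have hcond : 2*j ≤ j+n+1 := by omega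
      simp only [hj, if_true, hcond, if_true]
      have hb : jnn (n+1) ^ (-(2*δ)) ≤ 2 * jnn (j+n+1) ^ (-(2*δ)) :=
        jnn_rpow_neg_le (by omega) h2δ h2δ1
      calc jnn (n+1) ^ (-(2*δ)) * (jnn j ^ (-β) * g (j+n+1) ^ (2:ℝ))
          ≤ (2 * jnn (j+n+1) ^ (-(2*δ))) * (jnn j ^ (-β) * g (j+n+1) ^ (2:ℝ)) := by gcongr
        _ = jnn j ^ (-β) * (2 * (jnn (j+n+1) ^ (-(2*δ)) * g (j+n+1) ^ (2:ℝ))) := by ring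
    · simp [hj]
  calc ∑' n : ℕ, jnn (n+1) ^ (-(2*δ)) *
        ∑' j : ℕ, (if j ≤ n+1 then jnn j ^ (-β) * g (j+n+1) ^ (2:ℝ) else 0)
      = ∑' n : ℕ, ∑' j : ℕ, jnn (n+1) ^ (-(2*δ)) *
          (if j ≤ n+1 then jnn j ^ (-β) * g (j+n+1) ^ (2:ℝ) else 0) := by
        exact tsum_congr fun n => ENNReal.tsum_mul_left.symm
    _ = ∑' j : ℕ, ∑' n : ℕ, jnn (n+1) ^ (-(2*δ)) *
          (if j ≤ n+1 then jnn j ^ (-β) * g (j+n+1) ^ (2:ℝ) else 0) := ENNReal.tsum_comm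
    _ ≤ ∑' j : ℕ, ∑' m : ℕ,
          (if 2*j ≤ m then jnn j ^ (-β) else 0) * (2 * (jnn m ^ (-(2*δ)) * g m ^ (2:ℝ))) := by
        apply ENNReal.tsum_le_tsum
        intro j
        calc ∑' n : ℕ, jnn (n+1) ^ (-(2*δ)) * (if j ≤ n+1 then jnn j ^ (-β) * g (j+n+1) ^ (2:ℝ) else 0)
            ≤ ∑' n : ℕ, (fun m => (if 2*j ≤ m then jnn j ^ (-β) else 0) *
                (2 * (jnn m ^ (-(2*δ)) * g m ^ (2:ℝ)))) (j+n+1) := ENNReal.tsum_le_tsum (hH j)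
          _ ≤ ∑' m : ℕ, (if 2*j ≤ m then jnn j ^ (-β) else 0) *
                (2 * (jnn m ^ (-(2*δ)) * g m ^ (2:ℝ))) :=
              ENNReal.tsum_comp_le_tsum_of_injective (fun a b hab => by omega) _
    _ = ∑' m : ℕ, ∑' j : ℕ,
          (if 2*j ≤ m then jnn j ^ (-β) else 0) * (2 * (jnn m ^ (-(2*δ)) * g m ^ (2:ℝ))) :=
        ENNReal.tsum_comm
    _ ≤ ∑' m : ℕ, ENNReal.ofReal (2 * (1 + 1/(2*δ))) * g m ^ (2:ℝ) := by
        apply ENNReal.tsum_le_tsum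
        intro m
        rw [ENNReal.tsum_mul_right]
        have hS := Sm_bound hβ0 hβ1 m
        have h1mβ : 1 - β = 2*δ := by rw [hβ]; ring
        rw [h1mβ] at hS
        calc (∑' j : ℕ, (if 2*j ≤ m then jnn j ^ (-β) else 0)) * (2 * (jnn m ^ (-(2*δ)) * g m ^ (2:ℝ)))
            ≤ (ENNReal.ofReal (1 + 1/(2*δ)) * jnn m ^ (2*δ)) * (2 * (jnn m ^ (-(2*δ)) * g m ^ (2:ℝ))) := by
              gcongr
          _ = ENNReal.ofReal (1 + 1/(2*δ)) * 2 * (jnn m ^ (2*δ) * jnn m ^ (-(2*δ))) * g m ^ (2:ℝ) := by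
              ring
          _ = ENNReal.ofReal (2 * (1 + 1/(2*δ))) * g m ^ (2:ℝ) := by
              rw [← ENNReal.rpow_add _ _ (jnn_ne_zero m) (jnn_ne_top m)]
              simp only [add_neg_cancel, ENNReal.rpow_zero, mul_one]
              rw [ENNReal.ofReal_mul (by norm_num), ENNReal.ofReal_ofNat]
              ring
    _ = ENNReal.ofReal (2 * (1 + 1/(2*δ))) * G := ENNReal.tsum_mul_left

lemma rpow_two_eq (x : ℝ≥0∞) : x ^ (2:ℝ) = x * x := by
  rw [show (2:ℝ) = ((2:ℕ):ℝ) by norm_num, ENNReal.rpow_natCast, pow_two]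

lemma half_sq (z : ℝ≥0∞) : (z ^ ((1:ℝ)/2)) ^ (2:ℝ) = z := by
  rw [← ENNReal.rpow_mul]; norm_num

lemma add_rpow_two_le (x y : ℝ≥0∞) : (x+y)^(2:ℝ) ≤ 4 * x^(2:ℝ) + 4*y^(2:ℝ) := by
  have h4 : (2:ℝ≥0∞)^(2:ℝ) = 4 := by
    rw [show (2:ℝ) = ((2:ℕ):ℝ) by norm_num, ENNReal.rpow_natCast]; norm_num
  rcases le_total x y with h|h
  · calc (x+y)^(2:ℝ) ≤ (2*y)^(2:ℝ) := by
          apply ENNReal.rpow_le_rpow _ (by norm_num)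
          rw [two_mul]; exact add_le_add_left h y
      _ = 4 * y^(2:ℝ) := by rw [ENNReal.mul_rpow_of_nonneg _ _ (by norm_num), h4]
      _ ≤ 4 * x^(2:ℝ) + 4*y^(2:ℝ) := le_add_self
  · calc (x+y)^(2:ℝ) ≤ (2*x)^(2:ℝ) := by
          apply ENNReal.rpow_le_rpow _ (by norm_num)
          rw [two_mul]; exact add_le_add_right h x
      _ = 4 * x^(2:ℝ) := by rw [ENNReal.mul_rpow_of_nonneg _ _ (by norm_num), h4]
      _ ≤ 4 * x^(2:ℝ) + 4*y^(2:ℝ) := le_add_right le_rfl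

lemma core_bilinear {δ : ℝ} (hδ0 : 0 < δ) (hδ1 : δ ≤ 1/4) (g : ℕ → ℝ≥0∞) :
    ∑' n : ℕ, (∑' j : ℕ, jnn (j+n+1) ^ (-δ) * jnn j ^ (-(1/2 - δ)) * g j * g (j+n+1)) ^ (2:ℝ)
      ≤ ENNReal.ofReal (16 + 4/δ) * (∑' j : ℕ, g j ^ (2:ℝ)) ^ (2:ℝ) := by
  set s₁ : ℝ := 1/2 - δ with hs₁
  set β : ℝ := 1 - 2*δ with hβ
  set G := ∑' j : ℕ, g j ^ (2:ℝ) with hG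
  set R₁ : ℕ → ℝ≥0∞ := fun n => ∑' j : ℕ, (if j ≤ n+1 then jnn j ^ (-β) * g (j+n+1) ^ (2:ℝ) else 0)
    with hR₁
  set R₂ : ℕ → ℝ≥0∞ := fun n => ∑' j : ℕ, (if n+1 < j then jnn j ^ (-1:ℝ) * g (j+n+1) ^ (2:ℝ) else 0)
    with hR₂
  -- pointwise bound on the inner sum
  have key : ∀ n : ℕ, (∑' j : ℕ, jnn (j+n+1) ^ (-δ) * jnn j ^ (-s₁) * g j * g (j+n+1))
      ≤ jnn (n+1) ^ (-δ) * (G ^ ((1:ℝ)/2) * R₁ n ^ ((1:ℝ)/2)) + G ^ ((1:ℝ)/2) * R₂ n ^ ((1:ℝ)/2) := by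
    intro n
    have hsplit : ∀ j : ℕ, jnn (j+n+1) ^ (-δ) * jnn j ^ (-s₁) * g j * g (j+n+1)
        ≤ (if j ≤ n+1 then jnn (n+1) ^ (-δ) * (g j * (jnn j ^ (-s₁) * g (j+n+1))) else 0)
          + (if n+1 < j then g j * (jnn j ^ (-(1/2):ℝ) * g (j+n+1)) else 0) := by
      intro j
      by_cases hj : j ≤ n+1
      · have h1 : jnn (j+n+1) ^ (-δ) ≤ jnn (n+1) ^ (-δ) :=
          jnn_rpow_neg_anti (le_of_lt hδ0) (by omega)
        have : jnn (j+n+1) ^ (-δ) * jnn j ^ (-s₁) * g j * g (j+n+1)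
            ≤ jnn (n+1) ^ (-δ) * (g j * (jnn j ^ (-s₁) * g (j+n+1))) := by
          calc jnn (j+n+1) ^ (-δ) * jnn j ^ (-s₁) * g j * g (j+n+1)
              ≤ jnn (n+1) ^ (-δ) * jnn j ^ (-s₁) * g j * g (j+n+1) := by gcongr
            _ = jnn (n+1) ^ (-δ) * (g j * (jnn j ^ (-s₁) * g (j+n+1))) := by ring
        simpa [hj, show ¬ (n+1 < j) by omega] using this
      · have h1 : jnn (j+n+1) ^ (-δ) ≤ jnn j ^ (-δ) :=
          jnn_rpow_neg_anti (le_of_lt hδ0) (by omega)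
        have h2 : jnn j ^ (-δ) * jnn j ^ (-s₁) = jnn j ^ (-(1/2):ℝ) := by
          rw [← ENNReal.rpow_add _ _ (jnn_ne_zero j) (jnn_ne_top j)]
          congr 1
          rw [hs₁]; ring
        have : jnn (j+n+1) ^ (-δ) * jnn j ^ (-s₁) * g j * g (j+n+1)
            ≤ g j * (jnn j ^ (-(1/2):ℝ) * g (j+n+1)) := by
          calc jnn (j+n+1) ^ (-δ) * jnn j ^ (-s₁) * g j * g (j+n+1)
              ≤ jnn j ^ (-δ) * jnn j ^ (-s₁) * g j * g (j+n+1) := by gcongr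
            _ = (jnn j ^ (-δ) * jnn j ^ (-s₁)) * (g j * g (j+n+1)) := by ring
            _ = g j * (jnn j ^ (-(1/2):ℝ) * g (j+n+1)) := by rw [h2]; ring
        simpa [hj, show (n+1 < j) by omega] using this
    calc (∑' j : ℕ, jnn (j+n+1) ^ (-δ) * jnn j ^ (-s₁) * g j * g (j+n+1))
        ≤ ∑' j : ℕ, ((if j ≤ n+1 then jnn (n+1) ^ (-δ) * (g j * (jnn j ^ (-s₁) * g (j+n+1))) else 0)
          + (if n+1 < j then g j * (jnn j ^ (-(1/2):ℝ) * g (j+n+1)) else 0)) :=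
          ENNReal.tsum_le_tsum hsplit
      _ = (∑' j : ℕ, (if j ≤ n+1 then jnn (n+1) ^ (-δ) * (g j * (jnn j ^ (-s₁) * g (j+n+1))) else 0))
          + ∑' j : ℕ, (if n+1 < j then g j * (jnn j ^ (-(1/2):ℝ) * g (j+n+1)) else 0) :=
          ENNReal.tsum_add
      _ ≤ jnn (n+1) ^ (-δ) * (G ^ ((1:ℝ)/2) * R₁ n ^ ((1:ℝ)/2)) + G ^ ((1:ℝ)/2) * R₂ n ^ ((1:ℝ)/2) := by
          gcongr ?_ + ?_
          · -- first sum: pull out constant then CS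
            have hpull : (∑' j : ℕ, (if j ≤ n+1 then jnn (n+1) ^ (-δ) * (g j * (jnn j ^ (-s₁) * g (j+n+1))) else 0))
                = jnn (n+1) ^ (-δ) * ∑' j : ℕ, (if j ≤ n+1 then g j * (jnn j ^ (-s₁) * g (j+n+1)) else 0) := by
              rw [← ENNReal.tsum_mul_left]
              exact tsum_congr fun j => by split <;> simp
            rw [hpull]
            gcongr
            have hprod : (∑' j : ℕ, (if j ≤ n+1 then g j * (jnn j ^ (-s₁) * g (j+n+1)) else 0))
                = ∑' j : ℕ, (if j ≤ n+1 then g j else 0) * (if j ≤ n+1 then jnn j ^ (-s₁) * g (j+n+1) else 0) := by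
              exact tsum_congr fun j => by split <;> simp
            rw [hprod]
            refine (tsum_CS _ _).trans ?_
            gcongr
            · apply ENNReal.tsum_le_tsum
              intro j
              apply ENNReal.rpow_le_rpow _ (by norm_num)
              split <;> simp
            · refine le_of_eq (tsum_congr fun j => ?_)
              split
              · rw [ENNReal.mul_rpow_of_nonneg _ _ (by norm_num : (0:ℝ) ≤ 2),
                  ← ENNReal.rpow_mul]
                congr 2
                rw [hβ, hs₁]; ring
              · simp
          · -- second sum: CS
            have hprod : (∑' j : ℕ, (if n+1 < j then g j * (jnn j ^ (-(1/2):ℝ) * g (j+n+1)) else 0))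
                = ∑' j : ℕ, (if n+1 < j then g j else 0) * (if n+1 < j then jnn j ^ (-(1/2):ℝ) * g (j+n+1) else 0) := by
              exact tsum_congr fun j => by split <;> simp
            rw [hprod]
            refine (tsum_CS _ _).trans ?_
            gcongr
            · apply ENNReal.tsum_le_tsum
              intro j
              apply ENNReal.rpow_le_rpow _ (by norm_num)
              split <;> simp
            · refine le_of_eq (tsum_congr fun j => ?_)
              split
              · rw [ENNReal.mul_rpow_of_nonneg _ _ (by norm_num : (0:ℝ) ≤ 2),
                  ← ENNReal.rpow_mul]
                norm_num
              · simp
  -- now sum the squares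
  calc ∑' n : ℕ, (∑' j : ℕ, jnn (j+n+1) ^ (-δ) * jnn j ^ (-s₁) * g j * g (j+n+1)) ^ (2:ℝ)
      ≤ ∑' n : ℕ, (4 * (jnn (n+1) ^ (-(2*δ)) * (G * R₁ n)) + 4 * (G * R₂ n)) := by
        apply ENNReal.tsum_le_tsum
        intro n
        refine le_trans (ENNReal.rpow_le_rpow (key n) (by norm_num)) ?_
        refine le_trans (add_rpow_two_le _ _) ?_
        apply add_le_add
        · apply le_of_eq
          congr 1
          rw [ENNReal.mul_rpow_of_nonneg _ _ (by norm_num : (0:ℝ) ≤ 2),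
            ENNReal.mul_rpow_of_nonneg _ _ (by norm_num : (0:ℝ) ≤ 2), half_sq, half_sq,
            ← ENNReal.rpow_mul]
          congr 2
          ring
        · apply le_of_eq
          congr 1
          rw [ENNReal.mul_rpow_of_nonneg _ _ (by norm_num : (0:ℝ) ≤ 2), half_sq, half_sq]
    _ = 4 * G * (∑' n : ℕ, jnn (n+1) ^ (-(2*δ)) * R₁ n) + 4 * G * (∑' n : ℕ, R₂ n) := by
        rw [ENNReal.tsum_add]
        congr 1
        · rw [← ENNReal.tsum_mul_left]
          apply tsum_congr
          intro n
          ring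
        · rw [← ENNReal.tsum_mul_left]
          apply tsum_congr
          intro n
          ring
    _ ≤ 4 * G * (ENNReal.ofReal (2 * (1 + 1/(2*δ))) * G) + 4 * G * (2 * G) := by
        gcongr
        · exact L_X1 hδ0 hδ1 g
        · exact L_X2 g
    _ ≤ ENNReal.ofReal (16 + 4/δ) * G ^ (2:ℝ) := by
        rw [rpow_two_eq]
        have h8 : (8:ℝ≥0∞) = ENNReal.ofReal 8 := by norm_num
        have hc : 4 * ENNReal.ofReal (2 * (1 + 1/(2*δ))) + 8 = ENNReal.ofReal (16 + 4/δ) := by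
          rw [show (4:ℝ≥0∞) = ENNReal.ofReal 4 by norm_num, h8,
            ← ENNReal.ofReal_mul (by norm_num), ← ENNReal.ofReal_add (by positivity) (by norm_num)]
          congr 1
          field_simp
          ring
        calc 4 * G * (ENNReal.ofReal (2 * (1 + 1/(2*δ))) * G) + 4 * G * (2 * G)
            = (4 * ENNReal.ofReal (2 * (1 + 1/(2*δ))) + 8) * (G * G) := by ring
          _ = ENNReal.ofReal (16 + 4/δ) * (G * G) := by rw [hc]
          _ ≤ ENNReal.ofReal (16 + 4/δ) * (G * G) := le_rfl

noncomputable def JE (n : ℤ) : ℝ≥0∞ := ENNReal.ofReal (jap n)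

lemma JE_natCast (j : ℕ) : JE (j : ℤ) = jnn j := by
  rw [JE, jnn, jap]
  congr 1
  rw [Int.cast_natCast, abs_of_nonneg (Nat.cast_nonneg j)]
lemma JE_succ (n : ℕ) : JE ((n : ℤ) + 1) = jnn (n + 1) := by
  rw [show ((n:ℤ)+1) = ((n+1 : ℕ) : ℤ) by push_cast; ring, JE_natCast]
lemma JE_neg (n : ℤ) : JE (-n) = JE n := by
  rw [JE, JE, jap, jap]; push_cast; rw [abs_neg]
lemma JE_ne_zero (n : ℤ) : JE n ≠ 0 := by
  have : (1:ℝ≥0∞) ≤ JE n := by rw [JE, ENNReal.one_le_ofReal, jap]; exact le_max_left _ _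
  intro h; simpa [h] using this
lemma JE_ne_top (n : ℤ) : JE n ≠ ⊤ := ENNReal.ofReal_ne_top

lemma master1 {s δ : ℝ} (hδ : δ = (1-2*s)/4) (hs0 : 0 ≤ s) (hs : s < 1/2)
    (a v : ℤ → ℝ≥0∞) (ha : ∀ n : ℤ, n < 0 → a n = 0) (hv : ∀ n : ℤ, v (-n) = v n)
    (hv0 : v 0 = 0) :
    ∑' n : ℤ, v n * ∑' k : ℤ, a k * a (k-n)
      ≤ 2 * (∑' n : ℤ, JE n ^ (-(2*s)) * v n ^ (2:ℝ)) ^ ((1:ℝ)/2) *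
        ENNReal.ofReal (16+4/δ) ^ ((1:ℝ)/2) *
        ∑' j : ℤ, JE j ^ (2*(1/2 - δ)) * a j ^ (2:ℝ) := by
  have hδ0 : 0 < δ := by rw [hδ]; linarith
  have hδ1 : δ ≤ 1/4 := by rw [hδ]; linarith
  set s₁ : ℝ := 1/2 - δ with hs₁
  have hss₁ : s = s₁ - δ := by rw [hs₁, hδ]; ring
  set B : ℤ → ℝ≥0∞ := fun n => ∑' k : ℤ, a k * a (k-n) with hB
  set aa : ℕ → ℝ≥0∞ := fun j => a (j : ℤ) with haa
  set g : ℕ → ℝ≥0∞ := fun j => jnn j ^ s₁ * aa j with hg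
  set G := ∑' j : ℕ, g j ^ (2:ℝ) with hG
  -- B at positive argument
  have hBpos : ∀ n : ℕ, B ((n:ℤ)+1) = ∑' j : ℕ, aa (j+n+1) * aa j := by
    intro n
    set m : ℤ := (n:ℤ)+1 with hm
    have h1 : B m = ∑' k : ℤ, a (k+m) * a k := by
      rw [hB]
      refine ((Equiv.addRight m).tsum_eq (fun k => a k * a (k-m))).symm.trans ?_
      apply tsum_congr
      intro k
      simp [Equiv.coe_addRight, add_sub_cancel_right]
    rw [h1, tsum_of_nat_of_neg_add_one ENNReal.summable ENNReal.summable]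
    have h2 : ∑' (k:ℕ), a (-((k:ℤ)+1)+m) * a (-((k:ℤ)+1)) = 0 := by
      apply ENNReal.tsum_eq_zero.2
      intro k
      rw [ha (-((k:ℤ)+1)) (by omega), mul_zero]
    rw [h2, add_zero]
    apply tsum_congr
    intro j
    have : ((j:ℤ)+m) = ((j+n+1 : ℕ) : ℤ) := by rw [hm]; push_cast; ring
    rw [this]
  -- B symmetric
  have hBsymm : ∀ n : ℤ, B (-n) = B n := by
    intro n
    have h1 : B (-n) = ∑' k : ℤ, a k * a (k+n) := by
      rw [hB]
      apply tsum_congr; intro k; rw [sub_neg_eq_add]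
    have h2 : ∑' k : ℤ, a (k-n) * a k = ∑' k : ℤ, a k * a (k+n) := by
      refine ((Equiv.addRight n).tsum_eq (fun k => a (k-n) * a k)).symm.trans ?_
      apply tsum_congr
      intro k
      simp [Equiv.coe_addRight, add_sub_cancel_right]
    rw [h1, ← h2, hB]
    apply tsum_congr; intro k; rw [mul_comm]
  -- split the ℤ-sum
  have hsplit : ∑' n : ℤ, v n * B n = 2 * ∑' n : ℕ, v ((n:ℤ)+1) * B ((n:ℤ)+1) := by
    rw [tsum_of_add_one_of_neg_add_one ENNReal.summable ENNReal.summable]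
    have hz : v (0:ℤ) * B 0 = 0 := by rw [hv0, zero_mul]
    have hneg : ∀ n : ℕ, v (-((n:ℤ)+1)) * B (-((n:ℤ)+1)) = v ((n:ℤ)+1) * B ((n:ℤ)+1) := by
      intro n
      rw [hv ((n:ℤ)+1), hBsymm ((n:ℤ)+1)]
    calc (∑' n : ℕ, v ((n:ℤ)+1) * B ((n:ℤ)+1)) + v (0:ℤ) * B 0
          + ∑' n : ℕ, v (-((n:ℤ)+1)) * B (-((n:ℤ)+1))
        = (∑' n : ℕ, v ((n:ℤ)+1) * B ((n:ℤ)+1)) + 0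
          + ∑' n : ℕ, v ((n:ℤ)+1) * B ((n:ℤ)+1) := by
          rw [hz]; congr 1; exact tsum_congr hneg
      _ = 2 * ∑' n : ℕ, v ((n:ℤ)+1) * B ((n:ℤ)+1) := by ring
  -- bound the ℕ-sum by CS
  set X : ℕ → ℝ≥0∞ := fun n => JE ((n:ℤ)+1) ^ (-s) * v ((n:ℤ)+1) with hX
  set Y : ℕ → ℝ≥0∞ := fun n => jnn (n+1) ^ s * B ((n:ℤ)+1) with hY
  have hfact : ∀ n : ℕ, v ((n:ℤ)+1) * B ((n:ℤ)+1) = X n * Y n := by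
    intro n
    rw [hX, hY]
    have : JE ((n:ℤ)+1) ^ (-s) * v ((n:ℤ)+1) * (jnn (n+1) ^ s * B ((n:ℤ)+1))
        = (JE ((n:ℤ)+1) ^ (-s) * jnn (n+1) ^ s) * (v ((n:ℤ)+1) * B ((n:ℤ)+1)) := by ring
    rw [this, JE_succ, ← ENNReal.rpow_add _ _ (jnn_ne_zero _) (jnn_ne_top _)]
    simp
  -- Y n bounded via core
  have hYle : ∀ n : ℕ, Y n ≤ ∑' j : ℕ, jnn (j+n+1) ^ (-δ) * jnn j ^ (-s₁) * g j * g (j+n+1) := by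
    intro n
    simp only [hY]
    rw [hBpos n, ← ENNReal.tsum_mul_left]
    apply ENNReal.tsum_le_tsum
    intro j
    have h1 : jnn (n+1) ^ s ≤ jnn (j+n+1) ^ s := ENNReal.rpow_le_rpow (jnn_mono (by omega)) hs0
    have h2 : jnn (j+n+1) ^ (-δ) * jnn j ^ (-s₁) * g j * g (j+n+1)
        = jnn (j+n+1) ^ s * (aa (j+n+1) * aa j) := by
      rw [hg]
      have e1 : jnn (j+n+1) ^ (-δ) * jnn j ^ (-s₁) * (jnn j ^ s₁ * aa j)
          * (jnn (j+n+1) ^ s₁ * aa (j+n+1))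
          = (jnn (j+n+1) ^ (-δ) * jnn (j+n+1) ^ s₁) * (jnn j ^ (-s₁) * jnn j ^ s₁)
            * (aa (j+n+1) * aa j) := by ring
      rw [e1, ← ENNReal.rpow_add _ _ (jnn_ne_zero _) (jnn_ne_top _),
        ← ENNReal.rpow_add _ _ (jnn_ne_zero _) (jnn_ne_top _)]
      rw [show -δ + s₁ = s by rw [hss₁]; ring]
      simp
    rw [h2]
    exact mul_le_mul_left h1 _
  have hYsq : ∑' n : ℕ, Y n ^ (2:ℝ) ≤ ENNReal.ofReal (16+4/δ) * G ^ (2:ℝ) := by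
    refine le_trans ?_ (core_bilinear hδ0 hδ1 g)
    apply ENNReal.tsum_le_tsum
    intro n
    exact ENNReal.rpow_le_rpow (hYle n) (by norm_num)
  have hXsq : ∑' n : ℕ, X n ^ (2:ℝ) ≤ ∑' n : ℤ, JE n ^ (-(2*s)) * v n ^ (2:ℝ) := by
    have h1 : ∀ n : ℕ, X n ^ (2:ℝ) = (fun m : ℤ => JE m ^ (-(2*s)) * v m ^ (2:ℝ)) ((n:ℤ)+1) := by
      intro n
      rw [hX, ENNReal.mul_rpow_of_nonneg _ _ (by norm_num : (0:ℝ) ≤ 2), ← ENNReal.rpow_mul]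
      congr 2
      ring
    calc ∑' n : ℕ, X n ^ (2:ℝ)
        = ∑' n : ℕ, (fun m : ℤ => JE m ^ (-(2*s)) * v m ^ (2:ℝ)) ((n:ℤ)+1) := tsum_congr h1
      _ ≤ ∑' n : ℤ, JE n ^ (-(2*s)) * v n ^ (2:ℝ) :=
          ENNReal.tsum_comp_le_tsum_of_injective (fun x y hxy => by omega) _
  have hGle : G ≤ ∑' j : ℤ, JE j ^ (2*s₁) * a j ^ (2:ℝ) := by
    have h1 : ∀ j : ℕ, g j ^ (2:ℝ) = (fun m : ℤ => JE m ^ (2*s₁) * a m ^ (2:ℝ)) ((j:ℤ)) := by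
      intro j
      show g j ^ (2:ℝ) = JE (j:ℤ) ^ (2*s₁) * a (j:ℤ) ^ (2:ℝ)
      rw [hg]
      simp only []
      rw [ENNReal.mul_rpow_of_nonneg _ _ (by norm_num : (0:ℝ) ≤ 2), ← ENNReal.rpow_mul,
        JE_natCast]
      congr 2
      ring
    calc G = ∑' j : ℕ, (fun m : ℤ => JE m ^ (2*s₁) * a m ^ (2:ℝ)) ((j:ℤ)) := tsum_congr h1
      _ ≤ ∑' j : ℤ, JE j ^ (2*s₁) * a j ^ (2:ℝ) :=
          ENNReal.tsum_comp_le_tsum_of_injective (fun x y hxy => by omega) _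
  -- put it together
  calc ∑' n : ℤ, v n * B n = 2 * ∑' n : ℕ, X n * Y n := by
        rw [hsplit]; congr 1; exact tsum_congr hfact
    _ ≤ 2 * ((∑' n : ℕ, X n ^ (2:ℝ)) ^ ((1:ℝ)/2) * (∑' n : ℕ, Y n ^ (2:ℝ)) ^ ((1:ℝ)/2)) := by
        gcongr
        exact tsum_CS X Y
    _ ≤ 2 * ((∑' n : ℤ, JE n ^ (-(2*s)) * v n ^ (2:ℝ)) ^ ((1:ℝ)/2) *
          (ENNReal.ofReal (16+4/δ) * G ^ (2:ℝ)) ^ ((1:ℝ)/2)) := by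
        gcongr
    _ = 2 * (∑' n : ℤ, JE n ^ (-(2*s)) * v n ^ (2:ℝ)) ^ ((1:ℝ)/2) *
          ENNReal.ofReal (16+4/δ) ^ ((1:ℝ)/2) * G := by
        rw [ENNReal.mul_rpow_of_nonneg _ _ (by norm_num : (0:ℝ) ≤ 1/2), ← ENNReal.rpow_mul]
        rw [show (2:ℝ) * (1/2) = 1 by norm_num, ENNReal.rpow_one]
        ring
    _ ≤ 2 * (∑' n : ℤ, JE n ^ (-(2*s)) * v n ^ (2:ℝ)) ^ ((1:ℝ)/2) *
          ENNReal.ofReal (16+4/δ) ^ ((1:ℝ)/2) *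
          ∑' j : ℤ, JE j ^ (2*(1/2 - δ)) * a j ^ (2:ℝ) := by
        gcongr

lemma interp {θ : ℝ} (h0 : 0 < θ) (h1 : θ < 1) (a : ℤ → ℝ≥0∞) :
    ∑' j : ℤ, JE j ^ θ * a j ^ (2:ℝ)
      ≤ (∑' j : ℤ, JE j * a j ^ (2:ℝ)) ^ θ * (∑' j : ℤ, a j ^ (2:ℝ)) ^ (1-θ) := by
  have key : ∀ j : ℤ, JE j ^ θ * a j ^ (2:ℝ)
      = (JE j * a j ^ (2:ℝ)) ^ θ * (a j ^ (2:ℝ)) ^ (1-θ) := by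
    intro j
    rw [ENNReal.mul_rpow_of_nonneg _ _ (le_of_lt h0), mul_assoc]
    congr 1
    rw [← ENNReal.rpow_add_of_nonneg _ _ (le_of_lt h0) (by linarith : (0:ℝ) ≤ 1-θ)]
    rw [show θ + (1-θ) = 1 by ring, ENNReal.rpow_one]
  calc ∑' j : ℤ, JE j ^ θ * a j ^ (2:ℝ)
      = ∑' j : ℤ, (JE j * a j ^ (2:ℝ)) ^ θ * (a j ^ (2:ℝ)) ^ (1-θ) := tsum_congr key
    _ ≤ (∑' j : ℤ, JE j * a j ^ (2:ℝ)) ^ θ * (∑' j : ℤ, a j ^ (2:ℝ)) ^ (1-θ) :=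
        tsum_holder h0 h1 _ _

noncomputable def CC (s : ℝ) : ℝ := (2 * Real.sqrt (16 + 16/(1-2*s))) ^ ((1:ℝ)/(1-2*s))

lemma Kr_pos {s : ℝ} (hs : s < 1/2) : 0 < 16 + 16/(1-2*s) := by
  have h : (0:ℝ) < 1-2*s := by linarith
  have := div_pos (by norm_num : (0:ℝ) < 16) h
  linarith

lemma CC_pos {s : ℝ} (hs : s < 1/2) : 0 < CC s := by
  apply Real.rpow_pos_of_pos
  have := Real.sqrt_pos.2 (Kr_pos hs)
  linarith

lemma etaS_nonneg {s C r : ℝ} (hr : 0 ≤ r) : 0 ≤ etaS s C r := by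
  rw [etaS]
  have h1 : (0:ℝ) ≤ (2 * (1 + r)) ^ ((1 + 2*s)/(1 - 2*s)) :=
    Real.rpow_nonneg (by linarith) _
  positivity

lemma young_eta {s : ℝ} (hs0 : 0 ≤ s) (hs : s < 1/2) (r A P : ℝ)
    (hr : 0 ≤ r) (hA : 0 ≤ A) (hP : 0 ≤ P) :
    2 * Real.sqrt (16 + 16/(1-2*s)) * r * (A ^ ((1+2*s)/2) * P ^ (1 - (1+2*s)/2))
      ≤ 1/2 * A + etaS s (CC s) r * P := by
  have h12 : (0:ℝ) < 1-2*s := by linarith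
  set K := Real.sqrt (16 + 16/(1-2*s)) with hK
  have hKpos : 0 < K := Real.sqrt_pos.2 (Kr_pos hs)
  set θ : ℝ := (1+2*s)/2 with hθ
  have hθ0 : 0 < θ := by rw [hθ]; linarith
  have hθ1 : θ < 1 := by rw [hθ]; linarith
  set E : ℝ := (1+2*s)/(1-2*s) with hE
  have hE0 : 0 ≤ E := by
    rw [hE]; positivity
  rcases eq_or_lt_of_le hr with hr0 | hrpos
  · rw [← hr0]
    have hAP : (0:ℝ) ≤ A ^ ((1+2*s)/2) * P ^ (1 - (1+2*s)/2) := by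
      have := Real.rpow_nonneg hA ((1+2*s)/2)
      have := Real.rpow_nonneg hP (1 - (1+2*s)/2)
      positivity
    have heta : 0 ≤ etaS s (CC s) 0 := etaS_nonneg le_rfl
    have : 2 * K * 0 * (A ^ ((1+2*s)/2) * P ^ (1 - (1+2*s)/2)) = 0 := by ring
    rw [this]
    have := mul_nonneg heta hP
    linarith
  · set M : ℝ := 2*K*r with hM
    have hMpos : 0 < M := by rw [hM]; positivity
    set c : ℝ := M ^ ((2:ℝ)/(1-2*s)) * 2 ^ E with hc
    have hcpos : 0 < c := by
      rw [hc]
      have := Real.rpow_pos_of_pos hMpos ((2:ℝ)/(1-2*s))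
      have := Real.rpow_pos_of_pos (by norm_num : (0:ℝ) < 2) E
      positivity
    have h2θ : (0:ℝ) < 2 ^ θ := Real.rpow_pos_of_pos (by norm_num) θ
    -- the exact-form identity
    have hident : M * (A ^ θ * P ^ (1-θ)) = (A/2) ^ θ * (c*P) ^ (1-θ) := by
      have e1 : (A/2 : ℝ) ^ θ = A ^ θ / 2 ^ θ := Real.div_rpow hA (by norm_num) θ
      have e2 : (c*P) ^ (1-θ) = c ^ (1-θ) * P ^ (1-θ) :=
        Real.mul_rpow (le_of_lt hcpos) hP
      have e3 : c ^ (1-θ) = M * 2 ^ θ := by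
        rw [hc, Real.mul_rpow (Real.rpow_nonneg (le_of_lt hMpos) _)
          (Real.rpow_nonneg (by norm_num) _), ← Real.rpow_mul (le_of_lt hMpos),
          ← Real.rpow_mul (by norm_num : (0:ℝ) ≤ 2)]
        rw [show (2:ℝ)/(1-2*s) * (1-θ) = 1 by rw [hθ]; field_simp; ring,
          show E * (1-θ) = θ by rw [hE, hθ]; field_simp; ring, Real.rpow_one]
      rw [e1, e2, e3]
      field_simp
    have hgeom : (A/2) ^ θ * (c*P) ^ (1-θ) ≤ θ * (A/2) + (1-θ) * (c*P) :=
      Real.geom_mean_le_arith_mean2_weighted (le_of_lt hθ0) (by linarith)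
        (by linarith) (by positivity) (by ring)
    have hceta : c ≤ etaS s (CC s) r := by
      have e4 : M ^ ((2:ℝ)/(1-2*s)) = (2*K) ^ ((2:ℝ)/(1-2*s)) * r ^ ((2:ℝ)/(1-2*s)) := by
        rw [hM]; exact Real.mul_rpow (by positivity) (le_of_lt hrpos)
      have e5 : (2*K) ^ ((2:ℝ)/(1-2*s)) = CC s ^ 2 := by
        rw [CC, ← hK, ← Real.rpow_natCast ((2*K) ^ ((1:ℝ)/(1-2*s))) 2,
          ← Real.rpow_mul (by positivity)]
        congr 1
        push_cast
        field_simp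
      have e6 : r ^ ((2:ℝ)/(1-2*s)) = r * r ^ E := by
        rw [show (2:ℝ)/(1-2*s) = 1 + E by rw [hE]; field_simp; ring, Real.rpow_add hrpos,
          Real.rpow_one]
      have e7 : r ^ E ≤ (1+r) ^ E := Real.rpow_le_rpow hr (by linarith) hE0
      have e8 : (2:ℝ) ^ E * (1+r) ^ E = (2*(1+r)) ^ E :=
        (Real.mul_rpow (by norm_num) (by linarith)).symm
      rw [hc, e4, e5, e6, etaS]
      calc CC s ^ 2 * (r * r ^ E) * 2 ^ E ≤ CC s ^ 2 * (r * (1+r) ^ E) * 2 ^ E := by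
            have h9 : (0:ℝ) ≤ CC s ^ 2 := sq_nonneg _
            have h10 : (0:ℝ) ≤ 2 ^ E := Real.rpow_nonneg (by norm_num) E
            have h11 : (0:ℝ) ≤ r := hr
            gcongr
        _ = r * (2 * (1+r)) ^ E * CC s ^ 2 := by rw [← e8]; ring
        _ = r * (2 * (1+r)) ^ ((1+2*s)/(1-2*s)) * CC s ^ 2 := by rw [hE]
    calc 2 * K * r * (A ^ θ * P ^ (1-θ)) = M * (A ^ θ * P ^ (1-θ)) := by rw [hM]
      _ = (A/2) ^ θ * (c*P) ^ (1-θ) := hident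
      _ ≤ θ * (A/2) + (1-θ) * (c*P) := hgeom
      _ ≤ 1/2 * A + etaS s (CC s) r * P := by
          apply add_le_add
          · have h13 : θ * (A/2) ≤ 1 * (A/2) :=
              mul_le_mul_of_nonneg_right (le_of_lt hθ1) (by linarith)
            linarith
          · have h14 : (1-θ) * (c*P) ≤ 1 * (c*P) :=
              mul_le_mul_of_nonneg_right (by linarith) (by positivity)
            have h15 : c * P ≤ etaS s (CC s) r * P := mul_le_mul_of_nonneg_right hceta hP
            linarith

lemma ofReal_sq_abs (z : ℂ) :
    ENNReal.ofReal (‖z‖ ^ 2) = ENNReal.ofReal (‖z‖) ^ (2:ℝ) := by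
  rw [ENNReal.ofReal_rpow_of_nonneg (norm_nonneg z) (by norm_num : (0:ℝ) ≤ 2)]
  congr 1
  rw [show ((2:ℝ)) = ((2:ℕ):ℝ) by norm_num, Real.rpow_natCast]

lemma japos (n : ℤ) : (0:ℝ) < jap n := lt_of_lt_of_le one_pos (le_max_left _ _)

lemma B_bound (f : ℤ → ℂ) (hP : Summable fun k : ℤ => ‖f k‖^2) (n : ℤ) :
    Summable (fun k : ℤ => f k * conj (f (k - n))) ∧
    ENNReal.ofReal ‖∑' k : ℤ, f k * conj (f (k-n))‖
      ≤ ∑' k : ℤ, ENNReal.ofReal (‖f k‖) * ENNReal.ofReal (‖f (k-n)‖) := by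
  have hshift : Summable (fun k : ℤ => ‖f (k-n)‖^2) :=
    ((Equiv.subRight n).summable_iff (f := fun k : ℤ => ‖f k‖^2)).mpr hP
  have hnormeq : ∀ k : ℤ, ‖f k * conj (f (k-n))‖ = ‖f k‖ * ‖f (k-n)‖ := by
    intro k
    rw [norm_mul, Complex.norm_conj]
  have hsum_norm : Summable (fun k : ℤ => ‖f k * conj (f (k-n))‖) := by
    apply Summable.of_nonneg_of_le (fun k => norm_nonneg _) (fun k => ?_) (hP.add hshift)
    rw [hnormeq k]
    nlinarith [sq_nonneg (‖f k‖ - ‖f (k-n)‖),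
      norm_nonneg (f k), norm_nonneg (f (k-n))]
  refine ⟨hsum_norm.of_norm, ?_⟩
  calc ENNReal.ofReal ‖∑' k : ℤ, f k * conj (f (k-n))‖
      ≤ ENNReal.ofReal (∑' k : ℤ, ‖f k * conj (f (k-n))‖) :=
        ENNReal.ofReal_le_ofReal (norm_tsum_le_tsum_norm hsum_norm)
    _ = ∑' k : ℤ, ENNReal.ofReal ‖f k * conj (f (k-n))‖ :=
        ENNReal.ofReal_tsum_of_nonneg (fun k => norm_nonneg _) hsum_norm
    _ = ∑' k : ℤ, ENNReal.ofReal (‖f k‖) * ENNReal.ofReal (‖f (k-n)‖) := by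
        refine tsum_congr fun k => ?_
        rw [hnormeq k, ENNReal.ofReal_mul (norm_nonneg _)]

lemma T_conj (u f : ℤ → ℂ) (hu : ∀ n : ℤ, u (-n) = conj (u n)) :
    conj (∑' n : ℤ, u n * conj (∑' k : ℤ, f k * conj (f (k - n)))) =
      ∑' n : ℤ, u n * conj (∑' k : ℤ, f k * conj (f (k - n))) := by
  set B : ℤ → ℂ := fun n => ∑' k : ℤ, f k * conj (f (k - n)) with hB
  have hBconj : ∀ n : ℤ, B (-n) = conj (B n) := by
    intro n
    have h1 : conj (B n) = ∑' k : ℤ, conj (f k) * f (k-n) := by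
      rw [hB]
      calc conj (∑' k : ℤ, f k * conj (f (k - n)))
          = ∑' k : ℤ, conj (f k * conj (f (k - n))) := by
            exact (tsum_star (f := fun k : ℤ => f k * conj (f (k - n)))).symm ▸ rfl
        _ = ∑' k : ℤ, conj (f k) * f (k-n) := by
            refine tsum_congr fun k => ?_
            rw [map_mul, RingHomCompTriple.comp_apply]
            simp
    have h2 : ∑' k : ℤ, conj (f k) * f (k-n) = ∑' k : ℤ, conj (f (k+n)) * f k := by
      refine (((Equiv.addRight n).tsum_eq (fun k => conj (f k) * f (k-n))).symm).trans ?_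
      refine tsum_congr fun k => ?_
      simp [Equiv.coe_addRight, add_sub_cancel_right]
    rw [h1, h2, hB]
    refine tsum_congr fun k => ?_
    rw [sub_neg_eq_add, mul_comm]
  calc conj (∑' n : ℤ, u n * conj (B n))
      = ∑' n : ℤ, conj (u n * conj (B n)) := by
        exact (tsum_star (f := fun n : ℤ => u n * conj (B n))).symm ▸ rfl
    _ = ∑' n : ℤ, conj (u n) * B n := by
        refine tsum_congr fun n => ?_
        rw [map_mul]
        simp
    _ = ∑' n : ℤ, conj (u (-n)) * B (-n) := by
        exact ((Equiv.neg ℤ).tsum_eq (fun n => conj (u n) * B n)).symm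
    _ = ∑' n : ℤ, u n * conj (B n) := by
        refine tsum_congr fun n => ?_
        rw [hu n, hBconj n]
        simp

/-- For u ∈ H^{-s}(𝕋, ℝ) of mean zero, 0 ≤ s < 1/2, the quadratic form
Q_u⁺(f,f) = ⟨-i∂_x f|f⟩ - ⟨u | f·conj f⟩ + (1+η_s(‖u‖_{-s}))⟨f|f⟩ on H^{1/2}_+
(expressed via Fourier coefficients) is real, positive, and satisfies
(1/2)‖f‖_{1/2}² ≤ Q_u⁺(f,f) ≤ (3 + 2η_s(‖u‖_{-s}))‖f‖_{1/2}². -/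
theorem stmt3 (s : ℝ) (hs0 : 0 ≤ s) (hs : s < 1/2) :
    ∃ C : ℝ, 0 < C ∧ ∀ u : ℤ → ℂ,
      (∀ n : ℤ, u (-n) = conj (u n)) → u 0 = 0 → memH (-s) u →
      ∀ f : ℤ → ℂ, (∀ n : ℤ, n < 0 → f n = 0) → memH (1/2) f →
      ∀ η : ℝ, η = etaS s C (hnorm (-s) u) →
      ∀ Q : ℂ, Q = (∑' n : ℤ, (n : ℂ) * (f n * conj (f n)))
          - (∑' n : ℤ, u n * conj (∑' k : ℤ, f k * conj (f (k - n))))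
          + ((1 + η : ℝ) : ℂ) * ∑' n : ℤ, f n * conj (f n) →
      Q.im = 0 ∧ (1/2) * hnorm (1/2) f ^ 2 ≤ Q.re ∧ Q.re ≤ (3 + 2*η) * hnorm (1/2) f ^ 2 := by
  have h12 : (0:ℝ) < 1 - 2*s := by linarith
  refine ⟨CC s, CC_pos hs, ?_⟩
  intro u hu hu0 hU f hf hF η hη Q hQ
  set θ : ℝ := (1+2*s)/2 with hθ
  have hθ0 : 0 < θ := by rw [hθ]; linarith
  have hθ1 : θ < 1 := by rw [hθ]; linarith
  -- real quantities
  set A : ℝ := hnormSq (1/2) f with hA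
  set P : ℝ := ∑' n : ℤ, ‖f n‖^2 with hP
  set r : ℝ := hnorm (-s) u with hr
  set Dr : ℝ := ∑' n : ℤ, (n:ℝ) * ‖f n‖^2 with hDr
  have hjap1 : ∀ n : ℤ, (1:ℝ) ≤ jap n := fun n => le_max_left _ _
  have hjapD : ∀ n : ℤ, |(n:ℝ)| ≤ jap n := fun n => le_max_right _ _
  have habs0 : ∀ n : ℤ, (0:ℝ) ≤ ‖f n‖^2 := fun n => sq_nonneg _
  -- summabilities
  have hSf1 : Summable (fun n : ℤ => jap n * ‖f n‖^2) := by
    refine (summable_congr fun n => ?_).1 hF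
    norm_num
  have hAeq : A = ∑' n : ℤ, jap n * ‖f n‖^2 := by
    rw [hA, hnormSq]
    refine tsum_congr fun n => ?_
    norm_num
  have hSfP : Summable (fun n : ℤ => ‖f n‖^2) := by
    refine Summable.of_nonneg_of_le habs0 (fun n => ?_) hSf1
    nlinarith [hjap1 n, habs0 n]
  have hSD : Summable (fun n : ℤ => (n:ℝ) * ‖f n‖^2) := by
    have habsle : ∀ n : ℤ, |(n:ℝ) * ‖f n‖^2| ≤ jap n * ‖f n‖^2 := by
      intro n
      rw [abs_mul, abs_of_nonneg (habs0 n)]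
      exact mul_le_mul_of_nonneg_right (hjapD n) (habs0 n)
    exact Summable.of_abs (Summable.of_nonneg_of_le (fun n => abs_nonneg _) habsle hSf1)
  have hA0 : 0 ≤ A := by
    rw [hAeq]
    exact tsum_nonneg fun n => mul_nonneg (le_trans zero_le_one (hjap1 n)) (habs0 n)
  have hP0 : 0 ≤ P := by
    rw [hP]; exact tsum_nonneg habs0
  have hr0 : 0 ≤ r := Real.sqrt_nonneg _
  have hη0 : 0 ≤ η := by rw [hη]; exact etaS_nonneg hr0
  -- pointwise comparisons
  have hPA : P ≤ A := by
    rw [hP, hAeq]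
    refine Summable.tsum_le_tsum (fun n => ?_) hSfP hSf1
    nlinarith [hjap1 n, habs0 n]
  have hDrA : Dr ≤ A := by
    rw [hDr, hAeq]
    refine Summable.tsum_le_tsum (fun n => ?_) hSD hSf1
    exact mul_le_mul_of_nonneg_right (le_trans (le_abs_self _) (hjapD n)) (habs0 n)
  have hADrP : A ≤ Dr + P := by
    rw [hDr, hAeq, hP, ← Summable.tsum_add hSD hSfP]
    refine Summable.tsum_le_tsum (fun n => ?_) hSf1 (hSD.add hSfP)
    rcases lt_or_ge n 0 with hn | hn
    · simp [hf n hn]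
    · have hn' : (0:ℝ) ≤ (n:ℝ) := by exact_mod_cast hn
      have h1 : jap n ≤ (n:ℝ) + 1 := by
        rw [jap, abs_of_nonneg hn']
        rcases le_total 1 ((n:ℝ)) with h | h
        · rw [max_eq_right h]; linarith
        · rw [max_eq_left h]; linarith
      nlinarith [habs0 n]
  -- D and P as complex sums
  have hDsum : (∑' n : ℤ, (n:ℂ) * (f n * conj (f n))) = ((Dr : ℝ) : ℂ) := by
    rw [hDr, Complex.ofReal_tsum]
    refine tsum_congr fun n => ?_
    rw [Complex.mul_conj, Complex.normSq_eq_norm_sq]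
    push_cast
    ring
  have hPsum : (∑' n : ℤ, f n * conj (f n)) = ((P : ℝ) : ℂ) := by
    rw [hP, Complex.ofReal_tsum]
    refine tsum_congr fun n => ?_
    rw [Complex.mul_conj, Complex.normSq_eq_norm_sq]
  set B : ℤ → ℂ := fun n => ∑' k : ℤ, f k * conj (f (k - n)) with hB
  set T : ℂ := ∑' n : ℤ, u n * conj (B n) with hT
  have hTconj : conj T = T := T_conj u f hu
  have hTim : T.im = 0 := by
    have := congrArg Complex.im hTconj
    simp only [Complex.conj_im] at this
    linarith
  -- ennreal part
  set av : ℤ → ℝ≥0∞ := fun n => ENNReal.ofReal (‖f n‖) with hav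
  set vv : ℤ → ℝ≥0∞ := fun n => ENNReal.ofReal (‖u n‖) with hvv
  have hav0 : ∀ n : ℤ, n < 0 → av n = 0 := by
    intro n hn
    rw [hav]
    simp [hf n hn]
  have hvsymm : ∀ n : ℤ, vv (-n) = vv n := by
    intro n
    rw [hvv]
    simp only []
    rw [hu n]
    rw [Complex.norm_conj]
  have hvv0 : vv 0 = 0 := by rw [hvv]; simp [hu0]
  have hmaster := master1 (δ := (1-2*s)/4) rfl hs0 hs av vv hav0 hvsymm hvv0
  -- conversions of the three ennreal sums
  have hUconv : (∑' n : ℤ, JE n ^ (-(2*s)) * vv n ^ (2:ℝ)) = ENNReal.ofReal (r^2) := by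
    have hrsq : r^2 = hnormSq (-s) u := Real.sq_sqrt (tsum_nonneg fun n =>
      mul_nonneg (Real.rpow_nonneg (le_of_lt (japos n)) _) (sq_nonneg _))
    rw [hrsq, hnormSq, ENNReal.ofReal_tsum_of_nonneg (fun n =>
      mul_nonneg (Real.rpow_nonneg (le_of_lt (japos n)) _) (sq_nonneg _)) hU]
    refine tsum_congr fun n => ?_
    rw [ENNReal.ofReal_mul (Real.rpow_nonneg (le_of_lt (japos n)) _), ofReal_sq_abs,
      ← ENNReal.ofReal_rpow_of_pos (japos n)]
    rw [show (2 : ℝ) * (-s) = -(2*s) by ring]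
    rfl
  have hAconv : (∑' j : ℤ, JE j * av j ^ (2:ℝ)) = ENNReal.ofReal A := by
    rw [hAeq, ENNReal.ofReal_tsum_of_nonneg (fun n =>
      mul_nonneg (le_of_lt (japos n)) (sq_nonneg _)) hSf1]
    refine tsum_congr fun n => ?_
    rw [ENNReal.ofReal_mul (le_of_lt (japos n)), ofReal_sq_abs]
    rfl
  have hPconv : (∑' j : ℤ, av j ^ (2:ℝ)) = ENNReal.ofReal P := by
    rw [hP, ENNReal.ofReal_tsum_of_nonneg habs0 hSfP]
    refine tsum_congr fun n => ?_
    rw [ofReal_sq_abs]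
  have hGexp : (2:ℝ)*(1/2 - (1-2*s)/4) = θ := by rw [hθ]; ring
  have hKrconv : (16 + 4/((1-2*s)/4) : ℝ) = 16 + 16/(1-2*s) := by
    field_simp
    ring
  -- the master inequality, converted
  set Kr : ℝ := 16 + 16/(1-2*s) with hKr
  have hKrpos : (0:ℝ) < Kr := by
    rw [hKr]
    have := div_pos (by norm_num : (0:ℝ) < 16) h12
    linarith
  have hchain : (∑' n : ℤ, vv n * ∑' k : ℤ, av k * av (k-n))
      ≤ ENNReal.ofReal (2 * Real.sqrt Kr * r * (A ^ θ * P ^ (1-θ))) := by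
    calc (∑' n : ℤ, vv n * ∑' k : ℤ, av k * av (k-n))
        ≤ 2 * (∑' n : ℤ, JE n ^ (-(2*s)) * vv n ^ (2:ℝ)) ^ ((1:ℝ)/2) *
          ENNReal.ofReal (16+4/((1-2*s)/4)) ^ ((1:ℝ)/2) *
          ∑' j : ℤ, JE j ^ (2*(1/2 - (1-2*s)/4)) * av j ^ (2:ℝ) := hmaster
      _ = 2 * ENNReal.ofReal (r^2) ^ ((1:ℝ)/2) * ENNReal.ofReal Kr ^ ((1:ℝ)/2) *
          ∑' j : ℤ, JE j ^ θ * av j ^ (2:ℝ) := by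
          rw [hUconv, hKrconv, hGexp]
      _ ≤ 2 * ENNReal.ofReal (r^2) ^ ((1:ℝ)/2) * ENNReal.ofReal Kr ^ ((1:ℝ)/2) *
          ((∑' j : ℤ, JE j * av j ^ (2:ℝ)) ^ θ * (∑' j : ℤ, av j ^ (2:ℝ)) ^ (1-θ)) := by
          gcongr
          exact interp hθ0 hθ1 av
      _ = ENNReal.ofReal (2 * Real.sqrt Kr * r * (A ^ θ * P ^ (1-θ))) := by
          rw [hAconv, hPconv]
          rw [ENNReal.ofReal_rpow_of_nonneg (sq_nonneg r) (by norm_num : (0:ℝ) ≤ 1/2),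
            ENNReal.ofReal_rpow_of_pos hKrpos,
            ENNReal.ofReal_rpow_of_nonneg hA0 (le_of_lt hθ0),
            ENNReal.ofReal_rpow_of_nonneg hP0 (by linarith)]
          rw [show ((r^2) ^ ((1:ℝ)/2)) = r by
            rw [← Real.sqrt_eq_rpow, Real.sqrt_sq hr0]]
          rw [show (Kr ^ ((1:ℝ)/2)) = Real.sqrt Kr by rw [← Real.sqrt_eq_rpow]]
          symm
          rw [ENNReal.ofReal_mul (show (0:ℝ) ≤ 2*Real.sqrt Kr*r by positivity),
            ENNReal.ofReal_mul (show (0:ℝ) ≤ 2*Real.sqrt Kr by positivity),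
            ENNReal.ofReal_mul (show (0:ℝ) ≤ 2 by norm_num),
            ENNReal.ofReal_mul (Real.rpow_nonneg hA0 θ), ENNReal.ofReal_ofNat]
          ring
  have hfinal_real : 2 * Real.sqrt Kr * r * (A ^ θ * P ^ (1-θ)) ≤ 1/2 * A + η * P := by
    rw [hη, hr, hθ]
    exact young_eta hs0 hs _ A P hr0 hA0 hP0
  -- bound the term sums
  have hTsum_en : (∑' n : ℤ, ENNReal.ofReal ‖u n * conj (B n)‖)
      ≤ ENNReal.ofReal (1/2 * A + η * P) := by
    calc (∑' n : ℤ, ENNReal.ofReal ‖u n * conj (B n)‖)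
        ≤ ∑' n : ℤ, vv n * ∑' k : ℤ, av k * av (k-n) := by
          refine ENNReal.tsum_le_tsum fun n => ?_
          rw [norm_mul, ENNReal.ofReal_mul (norm_nonneg _)]
          have h1 : ENNReal.ofReal ‖u n‖ = vv n := by rw [hvv]
          have h2 : ENNReal.ofReal ‖conj (B n)‖ ≤ ∑' k : ℤ, av k * av (k-n) := by
            have h3 : ‖conj (B n)‖ = ‖B n‖ := by
              rw [Complex.norm_conj]
            rw [h3]
            simp only [hB]
            exact (B_bound f hSfP n).2
          rw [h1]
          exact mul_le_mul_right h2 _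
      _ ≤ ENNReal.ofReal (2 * Real.sqrt Kr * r * (A ^ θ * P ^ (1-θ))) := hchain
      _ ≤ ENNReal.ofReal (1/2 * A + η * P) := ENNReal.ofReal_le_ofReal hfinal_real
  -- summability of the norms
  have hsum_norms : Summable (fun n : ℤ => ‖u n * conj (B n)‖) := by
    have hne : (∑' n : ℤ, ENNReal.ofReal ‖u n * conj (B n)‖) ≠ ⊤ :=
      ne_top_of_le_ne_top ENNReal.ofReal_ne_top hTsum_en
    have heq : ∀ n : ℤ, ENNReal.ofReal ‖u n * conj (B n)‖ = ((‖u n * conj (B n)‖₊ : ℝ≥0) : ℝ≥0∞) :=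
      fun n => ofReal_norm _
    rw [tsum_congr heq] at hne
    have h4 := ENNReal.tsum_coe_ne_top_iff_summable.1 hne
    have h5 := NNReal.summable_coe.2 h4
    refine (summable_congr fun n => ?_).1 h5
    exact coe_nnnorm _
  have hRHS0 : (0:ℝ) ≤ 1/2 * A + η * P := add_nonneg (by linarith) (mul_nonneg hη0 hP0)
  have hTb : ∑' n : ℤ, ‖u n * conj (B n)‖ ≤ 1/2 * A + η * P := by
    rw [← ENNReal.ofReal_le_ofReal_iff hRHS0]
    exact le_trans (le_of_eq (ENNReal.ofReal_tsum_of_nonneg (fun n => norm_nonneg _) hsum_norms))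
      hTsum_en
  have hTnorm : ‖T‖ ≤ 1/2 * A + η * P := by
    rw [hT]
    exact le_trans (norm_tsum_le_tsum_norm hsum_norms) hTb
  have hTre : |T.re| ≤ 1/2 * A + η * P := by
    have h6 := Complex.abs_re_le_norm T
    linarith
  -- compute Q.re, Q.im
  rw [hDsum, hPsum] at hQ
  have hQre : Q.re = Dr - T.re + (1+η) * P := by
    rw [hQ]
    simp [Complex.sub_re, Complex.add_re, Complex.ofReal_re, Complex.mul_re, Complex.ofReal_im]
  have hQim : Q.im = 0 := by
    rw [hQ]
    simp [Complex.sub_im, Complex.add_im, Complex.ofReal_im, Complex.mul_im, Complex.ofReal_re,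
      hTim]
  have hhn : hnorm (1/2) f ^ 2 = A := by
    have h0 : (0:ℝ) ≤ hnormSq (1/2) f := hA ▸ hA0
    show Real.sqrt (hnormSq (1/2) f) ^ 2 = A
    rw [Real.sq_sqrt h0, hA]
  refine ⟨hQim, ?_, ?_⟩
  · rw [hhn, hQre]
    have h1 : T.re ≤ 1/2*A + η*P := le_trans (le_abs_self _) hTre
    have e1 : (1+η)*P = P + η*P := by ring
    rw [e1]
    linarith only [h1, hADrP]
  · rw [hhn, hQre]
    have h1 : -(1/2*A + η*P) ≤ T.re := by
      have h7 := neg_abs_le T.re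
      linarith only [h7, hTre]
    have h2 : (1+2*η)*P ≤ (1+2*η)*A := mul_le_mul_of_nonneg_left hPA (by linarith only [hη0])
    have e1 : (1+η)*P = P + η*P := by ring
    have e2 : (3+2*η)*A = 3*A + 2*(η*A) := by ring
    have e3 : (1+2*η)*P = P + 2*(η*P) := by ring
    have e4 : (1+2*η)*A = A + 2*(η*A) := by ring
    rw [e1, e2]
    rw [e3, e4] at h2
    linarith only [hDrA, h1, h2, hA0]
end

section
/- Let (λ_n)_{n≥0} be a strictly increasing real sequence with λ_p - λ_{p-1} = 1 + γ_p where γ_p ≥ 0 and Σ_p γ_p < ∞, and λ_0 ≤ 0 ≤ λ_n for all n large. Define κ_n = (λ_n - λ_0)^{-1} · Π_{p≥1, p≠n} (1 - γ_p/(λ_p - λ_n)) for n ≥ 1. Then each factor satisfies 1 - γ_p/(λ_p - λ_n) = (λ_{p-1} + 1 - λ_n)/(λ_p - λ_n) > 0, the infinite product converges absolutely, and 0 < κ_n ≤ e^{-λ_0}/n for every n ≥ 1, using λ_n - λ_0 = n + Σ_{k=1}^n γ_k ≥ n. -/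
open scoped BigOperators

lemma stmt5_tele (lam γ : ℕ → ℝ) (hgap : ∀ p : ℕ, lam (p + 1) - lam p = 1 + γ (p + 1)) :
    ∀ p d : ℕ, lam (p + d) - lam p = d + ∑ j ∈ Finset.range d, γ (p + j + 1) := by
  intro p d
  induction d with
  | zero => simp
  | succ d ih =>
    rw [Finset.sum_range_succ, show p + (d + 1) = (p + d) + 1 by ring]
    have h := hgap (p + d)
    push_cast
    linarith

/-- Let (λ_n)_{n≥0} be strictly increasing with λ_p - λ_{p-1} = 1 + γ_p, γ_p ≥ 0 summable,
λ_n = n - Σ_{k>n} γ_k, λ_0 ≤ 0 and 0 ≤ λ_n for all large n. With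
κ_n = (λ_n - λ_0)⁻¹ Π_{p≥1, p≠n} (1 - γ_p/(λ_p - λ_n)), each factor equals
(λ_{p-1} + 1 - λ_n)/(λ_p - λ_n) > 0, the infinite product converges, λ_n - λ_0 = n + Σ_{k=1}^n γ_k ≥ n,
and 0 < κ_n ≤ e^{-λ_0}/n for every n ≥ 1. -/
theorem stmt5 (lam γ : ℕ → ℝ)
    (hmono : StrictMono lam)
    (hgap : ∀ p : ℕ, lam (p + 1) - lam p = 1 + γ (p + 1))
    (hγpos : ∀ p : ℕ, 0 ≤ γ (p + 1))
    (hsum : Summable fun p : ℕ => γ (p + 1))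
    (hlam : ∀ n : ℕ, lam n = n - ∑' k : ℕ, γ (n + 1 + k))
    (hlam0 : lam 0 ≤ 0) (hposlarge : ∃ N : ℕ, ∀ n ≥ N, 0 ≤ lam n) :
    ∀ n : ℕ, 1 ≤ n →
      (∀ p : ℕ, 1 ≤ p → p ≠ n →
        1 - γ p / (lam p - lam n) = (lam (p - 1) + 1 - lam n) / (lam p - lam n) ∧
        0 < 1 - γ p / (lam p - lam n)) ∧
      Multipliable (fun p : {p : ℕ // 1 ≤ p ∧ p ≠ n} => 1 - γ (p : ℕ) / (lam (p : ℕ) - lam n)) ∧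
      (lam n - lam 0 = n + ∑ k ∈ Finset.Icc 1 n, γ k ∧ (n : ℝ) ≤ lam n - lam 0) ∧
      (0 < (lam n - lam 0)⁻¹ *
          ∏' p : {p : ℕ // 1 ≤ p ∧ p ≠ n}, (1 - γ (p : ℕ) / (lam (p : ℕ) - lam n)) ∧
        (lam n - lam 0)⁻¹ *
          ∏' p : {p : ℕ // 1 ≤ p ∧ p ≠ n}, (1 - γ (p : ℕ) / (lam (p : ℕ) - lam n))
          ≤ Real.exp (-lam 0) / n) := by
  intro n hn
  -- nonnegativity of γ p for p ≥ 1
  have hγnn : ∀ p : ℕ, 1 ≤ p → 0 ≤ γ p := by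
    intro p hp
    have := hγpos (p - 1)
    rwa [Nat.sub_add_cancel hp] at this
  -- telescoping differences
  have hdiff : ∀ p d : ℕ, (d : ℝ) ≤ lam (p + d) - lam p := by
    intro p d
    rw [stmt5_tele lam γ hgap]
    have h0 : 0 ≤ ∑ j ∈ Finset.range d, γ (p + j + 1) :=
      Finset.sum_nonneg fun j _ => hγpos (p + j)
    linarith
  have hγeq : ∀ p : ℕ, 1 ≤ p → γ p = lam p - lam (p - 1) - 1 := by
    intro p hp
    have := hgap (p - 1)
    rw [Nat.sub_add_cancel hp] at this
    linarith
  -- -λ₀ = total sum of γ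
  have hsum0 : -lam 0 = ∑' k : ℕ, γ (k + 1) := by
    have h0 := hlam 0
    have he : (∑' k : ℕ, γ (0 + 1 + k)) = ∑' k : ℕ, γ (k + 1) := by
      apply tsum_congr; intro k; congr 1; omega
    rw [he] at h0
    push_cast at h0
    linarith
  -- key per-factor facts
  have key : ∀ p : ℕ, 1 ≤ p → p ≠ n →
      (1 - γ p / (lam p - lam n) = (lam (p - 1) + 1 - lam n) / (lam p - lam n)) ∧
      0 < 1 - γ p / (lam p - lam n) ∧
      1 - γ p / (lam p - lam n) ≤ 1 + γ p ∧
      1 ≤ (1 + γ p) * (1 - γ p / (lam p - lam n)) := by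
    intro p hp hpn
    have hγp : 0 ≤ γ p := hγnn p hp
    have hne : lam p - lam n ≠ 0 :=
      sub_ne_zero.mpr fun h => hpn (hmono.injective h)
    have heq : 1 - γ p / (lam p - lam n) = (lam (p - 1) + 1 - lam n) / (lam p - lam n) := by
      rw [hγeq p hp]
      field_simp
      ring
    rcases lt_or_gt_of_ne hpn with hlt | hgt
    · -- p < n
      have hD : (↑(n - p) : ℝ) ≤ lam n - lam p := by
        have := hdiff p (n - p)
        rwa [Nat.add_sub_cancel' hlt.le] at this
      have hD1 : (1 : ℝ) ≤ lam n - lam p := by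
        refine le_trans ?_ hD
        exact_mod_cast Nat.one_le_iff_ne_zero.mpr (by omega)
      have hD0 : (0 : ℝ) < lam n - lam p := lt_of_lt_of_le one_pos hD1
      have hval : γ p / (lam p - lam n) = -(γ p / (lam n - lam p)) := by
        rw [show lam p - lam n = -(lam n - lam p) by ring, div_neg]
      have htD : γ p / (lam n - lam p) * (lam n - lam p) = γ p :=
        div_mul_cancel₀ _ hD0.ne'
      have ht0 : 0 ≤ γ p / (lam n - lam p) := div_nonneg hγp hD0.le
      have htle : γ p / (lam n - lam p) ≤ γ p := by nlinarith
      refine ⟨heq, ?_, ?_, ?_⟩ <;> rw [hval] <;> nlinarith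
    · -- p > n
      have h2 : lam p - lam (p - 1) = 1 + γ p := by
        have := hgap (p - 1)
        rwa [Nat.sub_add_cancel hp] at this
      have h1 : (↑(p - 1 - n) : ℝ) ≤ lam (p - 1) - lam n := by
        have := hdiff n (p - 1 - n)
        rwa [Nat.add_sub_cancel' (by omega)] at this
      have h1' : (0 : ℝ) ≤ lam (p - 1) - lam n :=
        le_trans (by exact_mod_cast Nat.zero_le _) h1
      have hE1 : 1 + γ p ≤ lam p - lam n := by linarith
      have hE0 : (0 : ℝ) < lam p - lam n := by linarith
      have hsE : γ p / (lam p - lam n) * (lam p - lam n) = γ p :=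
        div_mul_cancel₀ _ hE0.ne'
      have hs0 : 0 ≤ γ p / (lam p - lam n) := div_nonneg hγp hE0.le
      refine ⟨heq, ?_, ?_, ?_⟩
      · nlinarith
      · nlinarith
      · nlinarith [mul_nonneg hs0 (sub_nonneg.mpr hE1)]
  -- summability over the subtype
  have hinj : Function.Injective (fun p : {p : ℕ // 1 ≤ p ∧ p ≠ n} => (p : ℕ) - 1) := by
    intro a b hab
    have ha := a.2.1
    have hb := b.2.1
    exact Subtype.ext (by simp only at hab; omega)
  have hγsub : Summable (fun p : {p : ℕ // 1 ≤ p ∧ p ≠ n} => γ (p : ℕ)) := by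
    have h := hsum.comp_injective hinj
    exact h.congr fun p => by
      simp only [Function.comp_apply]
      rw [Nat.sub_add_cancel p.2.1]
  have hlogle : ∀ p : {p : ℕ // 1 ≤ p ∧ p ≠ n},
      Real.log (1 - γ (p : ℕ) / (lam (p : ℕ) - lam n)) ≤ γ (p : ℕ) := by
    intro p
    obtain ⟨-, hpos, hub, -⟩ := key p p.2.1 p.2.2
    have := Real.log_le_sub_one_of_pos hpos
    linarith
  have hlog : Summable (fun p : {p : ℕ // 1 ≤ p ∧ p ≠ n} =>
      Real.log (1 - γ (p : ℕ) / (lam (p : ℕ) - lam n))) := by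
    apply Summable.of_norm_bounded hγsub
    intro p
    obtain ⟨-, hpos, hub, hlb⟩ := key p p.2.1 p.2.2
    have hγp : 0 ≤ γ (p : ℕ) := hγnn p p.2.1
    have h1 : (0 : ℝ) < 1 + γ (p : ℕ) := by linarith
    rw [Real.norm_eq_abs, abs_le]
    constructor
    · have h2 : (1 + γ (p : ℕ))⁻¹ ≤ 1 - γ (p : ℕ) / (lam (p : ℕ) - lam n) := by
        have h3 := mul_le_mul_of_nonneg_left hlb (inv_nonneg.mpr h1.le)
        rwa [mul_one, inv_mul_cancel_left₀ h1.ne'] at h3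
      have h4 := Real.log_le_log (inv_pos.mpr h1) h2
      rw [Real.log_inv] at h4
      have h5 := Real.log_le_sub_one_of_pos h1
      linarith
    · exact hlogle p
  -- the product as an exponential
  have hprod : HasProd (fun p : {p : ℕ // 1 ≤ p ∧ p ≠ n} =>
      1 - γ (p : ℕ) / (lam (p : ℕ) - lam n))
      (Real.exp (∑' p : {p : ℕ // 1 ≤ p ∧ p ≠ n},
        Real.log (1 - γ (p : ℕ) / (lam (p : ℕ) - lam n)))) := by
    have h := hlog.hasSum.rexp
    have hfe : (Real.exp ∘ fun p : {p : ℕ // 1 ≤ p ∧ p ≠ n} =>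
        Real.log (1 - γ (p : ℕ) / (lam (p : ℕ) - lam n)))
        = fun p : {p : ℕ // 1 ≤ p ∧ p ≠ n} => 1 - γ (p : ℕ) / (lam (p : ℕ) - lam n) :=
      funext fun p => Real.exp_log (key p p.2.1 p.2.2).2.1
    rwa [hfe] at h
  -- sum of logs bounded by -λ₀
  have hSle : (∑' p : {p : ℕ // 1 ≤ p ∧ p ≠ n},
      Real.log (1 - γ (p : ℕ) / (lam (p : ℕ) - lam n))) ≤ -lam 0 := by
    have hA : (∑' p : {p : ℕ // 1 ≤ p ∧ p ≠ n},
        Real.log (1 - γ (p : ℕ) / (lam (p : ℕ) - lam n)))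
        ≤ ∑' p : {p : ℕ // 1 ≤ p ∧ p ≠ n}, γ (p : ℕ) :=
      Summable.tsum_le_tsum hlogle hlog hγsub
    have hB : (∑' p : {p : ℕ // 1 ≤ p ∧ p ≠ n}, γ (p : ℕ)) ≤ ∑' k : ℕ, γ (k + 1) := by
      refine Summable.tsum_le_tsum_of_inj _ hinj (fun c _ => hγpos c)
        (fun p => ?_) hγsub hsum
      rw [Nat.sub_add_cancel p.2.1]
    rw [hsum0]
    linarith
  -- part (c)
  have hc : lam n - lam 0 = n + ∑ k ∈ Finset.Icc 1 n, γ k := by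
    have h := stmt5_tele lam γ hgap 0 n
    simp only [Nat.zero_add] at h
    rw [h]
    congr 1
    rw [show Finset.Icc 1 n = Finset.Ico 1 (n + 1) by rw [Finset.Ico_add_one_right_eq_Icc],
      Finset.sum_Ico_eq_sum_range]
    simp [Nat.add_comm]
  have hcn : (n : ℝ) ≤ lam n - lam 0 := by
    rw [hc]
    have : 0 ≤ ∑ k ∈ Finset.Icc 1 n, γ k :=
      Finset.sum_nonneg fun k hk => hγnn k (Finset.mem_Icc.mp hk).1
    linarith
  have hn1 : (1 : ℝ) ≤ (n : ℝ) := by exact_mod_cast hn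
  have hL0 : (0 : ℝ) < lam n - lam 0 := lt_of_lt_of_le (by linarith) hcn
  refine ⟨fun p hp hpn => ⟨(key p hp hpn).1, (key p hp hpn).2.1⟩, ⟨_, hprod⟩, ⟨hc, hcn⟩, ?_, ?_⟩
  · rw [hprod.tprod_eq]
    exact mul_pos (inv_pos.mpr hL0) (Real.exp_pos _)
  · rw [hprod.tprod_eq]
    have h1 : (lam n - lam 0)⁻¹ ≤ (n : ℝ)⁻¹ :=
      inv_anti₀ (by linarith) hcn
    have h2 : Real.exp (∑' p : {p : ℕ // 1 ≤ p ∧ p ≠ n},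
        Real.log (1 - γ (p : ℕ) / (lam (p : ℕ) - lam n))) ≤ Real.exp (-lam 0) :=
      Real.exp_le_exp.mpr hSle
    calc (lam n - lam 0)⁻¹ * Real.exp (∑' p : {p : ℕ // 1 ≤ p ∧ p ≠ n},
          Real.log (1 - γ (p : ℕ) / (lam (p : ℕ) - lam n)))
        ≤ (n : ℝ)⁻¹ * Real.exp (-lam 0) :=
          mul_le_mul h1 h2 (Real.exp_pos _).le (by positivity)
      _ = Real.exp (-lam 0) / n := by rw [div_eq_mul_inv, mul_comm]
end

section
/- For 0 < ε < q < 1, define F(μ, ε, q) = εq ∫₀^q (t^ε/(q-t)^ε) · (q^μ(1-q²)^ε - t^μ(1-qt)^ε)/(t(q-t)) dt for μ > 0. If F(μ₀, ε, q) = 0 for some μ₀ > 0, then ∂F/∂μ(μ₀, ε, q) = εq ∫₀^q (t^ε/(q-t)^ε) · (t^μ₀(1-qt)^ε/(t(q-t))) · log(q/t) dt > 0. Consequently, μ ↦ F(μ, ε, q) has at most one zero in (0, ∞). -/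
open scoped BigOperators
open Set MeasureTheory intervalIntegral

lemma aux_exp (u : ℝ) (hu : 0 ≤ u) : Real.exp u - 1 ≤ u * Real.exp u := by
  have h1 := Real.add_one_le_exp (-u)
  have h2 : Real.exp (-u) = (Real.exp u)⁻¹ := Real.exp_neg u
  have h3 : 0 < Real.exp u := Real.exp_pos u
  rw [h2] at h1
  have h4 := mul_le_mul_of_nonneg_right h1 h3.le
  rw [inv_mul_cancel₀ h3.ne'] at h4
  nlinarith

lemma aux_rpow_sub_one_le {x m : ℝ} (hx : 1 ≤ x) (hm : 0 ≤ m) :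
    x ^ m - 1 ≤ m * Real.log x * x ^ m := by
  have hx0 : 0 < x := lt_of_lt_of_le zero_lt_one hx
  have hlog : 0 ≤ Real.log x := Real.log_nonneg hx
  have hdef : x ^ m = Real.exp (Real.log x * m) := Real.rpow_def_of_pos hx0 m
  have := aux_exp (Real.log x * m) (mul_nonneg hlog hm)
  rw [hdef]; nlinarith [this]

lemma aux_rpow_diff {x y e : ℝ} (hy : 0 < y) (hxy : y ≤ x) (he0 : 0 ≤ e) (he1 : e ≤ 1) :
    x ^ e - y ^ e ≤ y ^ (e - 1) * (x - y) := by
  have hx0 : 0 < x := lt_of_lt_of_le hy hxy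
  have hdiv1 : 1 ≤ x / y := (one_le_div hy).2 hxy
  have h1 : (x / y) ^ e ≤ x / y := by
    calc (x / y) ^ e ≤ (x / y) ^ (1 : ℝ) := Real.rpow_le_rpow_of_exponent_le hdiv1 he1
    _ = x / y := Real.rpow_one _
  have h2 : x ^ e = (x / y) ^ e * y ^ e := by
    rw [Real.div_rpow hx0.le hy.le]
    field_simp
  have hy_e : 0 < y ^ e := Real.rpow_pos_of_pos hy e
  have h3 : x ^ e - y ^ e = ((x / y) ^ e - 1) * y ^ e := by rw [h2]; ring
  have h4 : ((x / y) ^ e - 1) * y ^ e ≤ (x / y - 1) * y ^ e :=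
    mul_le_mul_of_nonneg_right (by linarith) hy_e.le
  have h5 : (x / y - 1) * y ^ e = y ^ (e - 1) * (x - y) := by
    rw [Real.rpow_sub hy, Real.rpow_one]
    field_simp
  linarith

set_option maxHeartbeats 1000000 in
lemma aux_num_bound (ε q a b : ℝ) (hε : 0 < ε) (hε1 : ε ≤ 1) (hq0 : 0 < q) (hq1 : q < 1)
    (ha : 0 < a) (hab : a ≤ b) :
    ∃ M : ℝ, 0 ≤ M ∧ ∀ t ∈ Set.Ioo (0:ℝ) q, ∀ μ ∈ Set.Icc a b,
      |q ^ μ * (1 - q ^ 2) ^ ε - t ^ μ * (1 - q * t) ^ ε| ≤ M * (q - t) ∧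
      |q ^ μ * Real.log q * (1 - q ^ 2) ^ ε - t ^ μ * Real.log t * (1 - q * t) ^ ε| ≤ M * (q - t) := by
  have hb : 0 < b := lt_of_lt_of_le ha hab
  have hq2 : 0 < 1 - q ^ 2 := by nlinarith
  set C₁ : ℝ := (1 - q ^ 2) ^ (ε - 1) * q with hC₁
  set C₂ : ℝ := (2 / q) * (1 + b * 2 ^ b) with hC₂
  set C₃ : ℝ := (2 / q) * (1 + 1 / a) with hC₃
  have h2b : (0:ℝ) < 2 ^ b := Real.rpow_pos_of_pos two_pos b
  have hC₁0 : 0 ≤ C₁ := mul_nonneg (Real.rpow_nonneg hq2.le _) hq0.le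
  have hC₂0 : 0 ≤ C₂ := by positivity
  have hC₃0 : 0 ≤ C₃ := by positivity
  set M₁ : ℝ := C₁ + C₂ with hM₁
  have hM₁0 : 0 ≤ M₁ := add_nonneg hC₁0 hC₂0
  refine ⟨(1 + |Real.log q|) * M₁ + C₃, by positivity, ?_⟩
  rintro t ⟨ht0, htq⟩ μ ⟨hμa, hμb⟩
  have hμ0 : 0 < μ := lt_of_lt_of_le ha hμa
  have hqt1 : 1 - q ^ 2 ≤ 1 - q * t := by nlinarith
  have hqtpos : 0 < 1 - q * t := lt_of_lt_of_le hq2 hqt1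
  have hA0 : 0 ≤ (1 - q ^ 2) ^ ε := Real.rpow_nonneg hq2.le _
  have hB0 : 0 ≤ (1 - q * t) ^ ε := Real.rpow_nonneg hqtpos.le _
  have hA1 : (1 - q ^ 2) ^ ε ≤ 1 := Real.rpow_le_one hq2.le (by nlinarith) hε.le
  have hB1 : (1 - q * t) ^ ε ≤ 1 := Real.rpow_le_one hqtpos.le (by nlinarith) hε.le
  have hqμ0 : 0 ≤ q ^ μ := Real.rpow_nonneg hq0.le _
  have htμ0 : 0 ≤ t ^ μ := Real.rpow_nonneg ht0.le _
  have hqμ1 : q ^ μ ≤ 1 := Real.rpow_le_one hq0.le hq1.le hμ0.le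
  have htμ1 : t ^ μ ≤ 1 := Real.rpow_le_one ht0.le (by linarith) hμ0.le
  have htμqμ : t ^ μ ≤ q ^ μ := Real.rpow_le_rpow ht0.le htq.le hμ0.le
  have hqt : 0 < q - t := by linarith
  -- step 1
  have step1 : (1 - q * t) ^ ε - (1 - q ^ 2) ^ ε ≤ C₁ * (q - t) := by
    have := aux_rpow_diff hq2 hqt1 hε.le hε1
    calc (1 - q * t) ^ ε - (1 - q ^ 2) ^ ε
        ≤ (1 - q ^ 2) ^ (ε - 1) * ((1 - q * t) - (1 - q ^ 2)) := this
      _ = C₁ * (q - t) := by rw [hC₁]; ring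
  have step1' : 0 ≤ (1 - q * t) ^ ε - (1 - q ^ 2) ^ ε := by
    have := Real.rpow_le_rpow hq2.le hqt1 hε.le
    linarith
  -- step 2
  have step2 : q ^ μ - t ^ μ ≤ C₂ * (q - t) := by
    rcases le_or_gt t (q / 2) with hhalf | hhalf
    · have h1 : q ^ μ - t ^ μ ≤ 1 := by linarith
      have h2 : (1:ℝ) ≤ (2 / q) * (q - t) := by
        rw [div_mul_eq_mul_div, le_div_iff₀ hq0]; linarith
      have h3 : (2 / q) * (q - t) ≤ C₂ * (q - t) := by
        apply mul_le_mul_of_nonneg_right _ hqt.le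
        have e : C₂ = 2 / q + (2 / q) * (b * 2 ^ b) := by rw [hC₂]; ring
        have e2 : 0 ≤ (2 / q) * (b * 2 ^ b) := by positivity
        linarith
      linarith
    · have hqt1' : 1 ≤ q / t := (one_le_div ht0).2 htq.le
      have hqt2 : q / t ≤ 2 := by rw [div_le_iff₀ ht0]; linarith
      have hS2 := aux_rpow_sub_one_le hqt1' hμ0.le
      have hlog : Real.log (q / t) ≤ (q - t) / t := by
        have h2 := Real.log_le_sub_one_of_pos (show (0:ℝ) < q / t by positivity)
        have h3 : q / t - 1 = (q - t) / t := by field_simp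
        linarith
      have hlog0 : 0 ≤ Real.log (q / t) := Real.log_nonneg hqt1'
      have hpow : (q / t) ^ μ ≤ 2 ^ b :=
        (Real.rpow_le_rpow_of_exponent_le hqt1' hμb).trans
          (Real.rpow_le_rpow (by positivity) hqt2 (le_of_lt hb))
      have hpow0 : 0 < (q / t) ^ μ := Real.rpow_pos_of_pos (by positivity) μ
      have key : q ^ μ = t ^ μ * (q / t) ^ μ := by
        rw [Real.div_rpow hq0.le ht0.le]
        field_simp
      have h4 : q ^ μ - t ^ μ = t ^ μ * ((q / t) ^ μ - 1) := by rw [key]; ring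
      have h50 : 0 ≤ (q / t) ^ μ - 1 := by
        have h : (1:ℝ) = 1 ^ μ := (Real.one_rpow μ).symm
        rw [h]
        have := Real.rpow_le_rpow zero_le_one hqt1' hμ0.le
        simpa using this
      have h5 : t ^ μ * ((q / t) ^ μ - 1) ≤ (q / t) ^ μ - 1 := by
        have := mul_nonneg (by linarith : (0:ℝ) ≤ 1 - t ^ μ) h50
        nlinarith
      have h6 : μ * Real.log (q / t) * (q / t) ^ μ ≤ b * ((q - t) / t) * 2 ^ b := by
        have e1 : μ * Real.log (q / t) ≤ b * ((q - t) / t) :=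
          mul_le_mul (by linarith) hlog hlog0 hb.le
        exact mul_le_mul e1 hpow hpow0.le (mul_nonneg hb.le (div_nonneg hqt.le ht0.le))
      have hinv : 1 / t ≤ 2 / q := by
        rw [div_le_div_iff₀ ht0 hq0]; linarith
      have h7 : b * ((q - t) / t) * 2 ^ b ≤ b * 2 ^ b * ((2 / q) * (q - t)) := by
        have h := mul_le_mul_of_nonneg_left hinv hqt.le
        have h' := mul_le_mul_of_nonneg_left h (mul_nonneg hb.le h2b.le)
        calc b * ((q - t) / t) * 2 ^ b = b * 2 ^ b * ((q - t) * (1 / t)) := by ring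
          _ ≤ b * 2 ^ b * ((q - t) * (2 / q)) := h'
          _ = b * 2 ^ b * ((2 / q) * (q - t)) := by ring
      have h8 : b * 2 ^ b * ((2 / q) * (q - t)) ≤ C₂ * (q - t) := by
        have e : C₂ * (q - t) - b * 2 ^ b * ((2 / q) * (q - t)) = (2 / q) * (q - t) := by
          rw [hC₂]; ring
        have e2 : 0 ≤ (2 / q) * (q - t) := by positivity
        linarith
      linarith
  have step2' : 0 ≤ q ^ μ - t ^ μ := by linarith
  -- num1
  have num1 : |q ^ μ * (1 - q ^ 2) ^ ε - t ^ μ * (1 - q * t) ^ ε| ≤ M₁ * (q - t) := by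
    have decomp : q ^ μ * (1 - q ^ 2) ^ ε - t ^ μ * (1 - q * t) ^ ε
        = q ^ μ * ((1 - q ^ 2) ^ ε - (1 - q * t) ^ ε) + (q ^ μ - t ^ μ) * (1 - q * t) ^ ε := by
      ring
    rw [decomp, abs_le]
    have hCq : 0 ≤ C₁ * (q - t) := mul_nonneg hC₁0 hqt.le
    constructor
    · have e1a := mul_le_mul_of_nonneg_left step1 hqμ0
      have e1b := mul_le_mul_of_nonneg_right hqμ1 hCq
      have e2 : 0 ≤ (q ^ μ - t ^ μ) * (1 - q * t) ^ ε := mul_nonneg step2' hB0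
      rw [hM₁]; nlinarith
    · have e1 : q ^ μ * ((1 - q ^ 2) ^ ε - (1 - q * t) ^ ε) ≤ 0 :=
        mul_nonpos_of_nonneg_of_nonpos hqμ0 (by linarith)
      have e2a := mul_le_mul_of_nonneg_left hB1 step2'
      rw [hM₁]; nlinarith
  -- step 3
  have hlogt : Real.log t < Real.log q := Real.log_lt_log ht0 htq
  have step3 : 0 ≤ t ^ μ * (1 - q * t) ^ ε * (Real.log q - Real.log t) ∧
      t ^ μ * (1 - q * t) ^ ε * (Real.log q - Real.log t) ≤ C₃ * (q - t) := by
    constructor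
    · exact mul_nonneg (mul_nonneg htμ0 hB0) (by linarith)
    · rcases le_or_gt (q / 2) t with hhalf | hhalf
      · have hlog : Real.log q - Real.log t ≤ (2 / q) * (q - t) := by
          have h1 : Real.log q - Real.log t = Real.log (q / t) := (Real.log_div hq0.ne' ht0.ne').symm
          have h2 := Real.log_le_sub_one_of_pos (show (0:ℝ) < q / t by positivity)
          have h3 : q / t - 1 = (q - t) / t := by field_simp
          have hinv : 1 / t ≤ 2 / q := by rw [div_le_div_iff₀ ht0 hq0]; linarith
          have h4 : (q - t) / t ≤ (2 / q) * (q - t) := by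
            have h := mul_le_mul_of_nonneg_left hinv hqt.le
            calc (q - t) / t = (q - t) * (1 / t) := by ring
              _ ≤ (q - t) * (2 / q) := h
              _ = (2 / q) * (q - t) := by ring
          rw [h1]; linarith
        have hb1 : t ^ μ * (1 - q * t) ^ ε ≤ 1 := by nlinarith
        have hb0 : 0 ≤ t ^ μ * (1 - q * t) ^ ε := mul_nonneg htμ0 hB0
        calc t ^ μ * (1 - q * t) ^ ε * (Real.log q - Real.log t)
            ≤ 1 * ((2 / q) * (q - t)) := mul_le_mul hb1 hlog (by linarith) zero_le_one
          _ ≤ C₃ * (q - t) := by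
              have e : C₃ * (q - t) - 1 * ((2 / q) * (q - t)) = (2 / q) * (1 / a) * (q - t) := by
                rw [hC₃]; ring
              have e2 : 0 ≤ (2 / q) * (1 / a) * (q - t) := by positivity
              linarith
      · have ht1 : t ≤ 1 := by linarith
        have htμa : t ^ μ ≤ t ^ a := Real.rpow_le_rpow_of_exponent_ge ht0 ht1 hμa
        have hta0 : 0 < t ^ a := Real.rpow_pos_of_pos ht0 a
        have htna : 0 < t ^ (-a) := Real.rpow_pos_of_pos ht0 (-a)
        have hlogq0 : Real.log q ≤ 0 := Real.log_nonpos hq0.le hq1.le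
        have hlogt' : -Real.log t ≤ t ^ (-a) / a := by
          have h1 : Real.log (t ^ (-a)) = -a * Real.log t := Real.log_rpow ht0 (-a)
          have h2 := Real.log_le_sub_one_of_pos htna
          rw [h1] at h2
          rw [le_div_iff₀ ha]
          nlinarith
        have hprod : t ^ a * t ^ (-a) = 1 := by
          rw [← Real.rpow_add ht0]; simp
        have key : t ^ μ * (1 - q * t) ^ ε * (Real.log q - Real.log t) ≤ 1 / a := by
          have e1 : Real.log q - Real.log t ≤ -Real.log t := by linarith
          have e2 : t ^ μ * (1 - q * t) ^ ε ≤ t ^ a := by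
            calc t ^ μ * (1 - q * t) ^ ε ≤ t ^ μ * 1 :=
                  mul_le_mul_of_nonneg_left hB1 htμ0
              _ = t ^ μ := mul_one _
              _ ≤ t ^ a := htμa
          have e3 : 0 ≤ Real.log q - Real.log t := by linarith
          have e4 : t ^ μ * (1 - q * t) ^ ε * (Real.log q - Real.log t)
              ≤ t ^ a * (t ^ (-a) / a) :=
            mul_le_mul e2 (le_trans e1 hlogt') e3 hta0.le
          have e5 : t ^ a * (t ^ (-a) / a) = 1 / a := by
            rw [mul_div_assoc', hprod]
          linarith
        have hfin : (1:ℝ) / a ≤ C₃ * (q - t) := by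
          have h1 : (1:ℝ) ≤ (2 / q) * (q - t) := by
            rw [div_mul_eq_mul_div, le_div_iff₀ hq0]; linarith
          have h2 := mul_nonneg (sub_nonneg.2 h1) (one_div_pos.2 ha).le
          have e : C₃ * (q - t) = (2 / q) * (q - t) + ((2 / q) * (q - t)) * (1 / a) := by
            rw [hC₃]; ring
          nlinarith
        linarith
  refine ⟨?_, ?_⟩
  · have e : ((1 + |Real.log q|) * M₁ + C₃) * (q - t) - M₁ * (q - t)
        = (|Real.log q| * M₁ + C₃) * (q - t) := by ring
    have e2 : 0 ≤ (|Real.log q| * M₁ + C₃) * (q - t) :=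
      mul_nonneg (add_nonneg (mul_nonneg (abs_nonneg _) hM₁0) hC₃0) hqt.le
    linarith [num1]
  · have decomp : q ^ μ * Real.log q * (1 - q ^ 2) ^ ε - t ^ μ * Real.log t * (1 - q * t) ^ ε
        = Real.log q * (q ^ μ * (1 - q ^ 2) ^ ε - t ^ μ * (1 - q * t) ^ ε)
          + t ^ μ * (1 - q * t) ^ ε * (Real.log q - Real.log t) := by ring
    rw [decomp]
    have habs : |Real.log q * (q ^ μ * (1 - q ^ 2) ^ ε - t ^ μ * (1 - q * t) ^ ε)|
        ≤ |Real.log q| * (M₁ * (q - t)) := by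
      rw [abs_mul]
      exact mul_le_mul_of_nonneg_left num1 (abs_nonneg _)
    have e : ((1 + |Real.log q|) * M₁ + C₃) * (q - t)
        = M₁ * (q - t) + (|Real.log q| * (M₁ * (q - t)) + C₃ * (q - t)) := by ring
    have e2 : 0 ≤ M₁ * (q - t) := mul_nonneg hM₁0 hqt.le
    calc |Real.log q * (q ^ μ * (1 - q ^ 2) ^ ε - t ^ μ * (1 - q * t) ^ ε)
          + t ^ μ * (1 - q * t) ^ ε * (Real.log q - Real.log t)|
        ≤ |Real.log q * (q ^ μ * (1 - q ^ 2) ^ ε - t ^ μ * (1 - q * t) ^ ε)|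
          + |t ^ μ * (1 - q * t) ^ ε * (Real.log q - Real.log t)| := abs_add_le _ _
      _ ≤ |Real.log q| * (M₁ * (q - t)) + C₃ * (q - t) := by
          have := step3.1
          gcongr
          · rw [abs_of_nonneg step3.1]; exact step3.2
      _ ≤ ((1 + |Real.log q|) * M₁ + C₃) * (q - t) := by rw [e]; linarith

lemma aux_bound_int (ε q : ℝ) (hε : 0 < ε) (hε1 : ε < 1) (hq0 : 0 < q) :
    IntervalIntegrable (fun t => t ^ (ε - 1) * (q - t) ^ (-ε)) volume 0 q := by
  have hq2 : 0 < q / 2 := by linarith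
  have hcont : ContinuousOn (fun t : ℝ => t ^ (ε - 1) * (q - t) ^ (-ε)) (Set.Ioo 0 q) := by
    intro t ht
    apply ContinuousWithinAt.mul
    · exact (Real.continuousAt_rpow_const t (ε - 1) (Or.inl ht.1.ne')).continuousWithinAt
    · exact ((Real.continuousAt_rpow_const (q - t) (-ε)
        (Or.inl (sub_ne_zero.2 ht.2.ne'))).comp
        ((continuous_const.sub continuous_id).continuousAt)).continuousWithinAt
  have hmeas : ∀ a b : ℝ, 0 ≤ a → b ≤ q → a ≤ b →
      AEStronglyMeasurable (fun t : ℝ => t ^ (ε - 1) * (q - t) ^ (-ε))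
        (volume.restrict (Set.uIoc a b)) := by
    intro a b h0 hbq hab
    rw [Set.uIoc_of_le hab, ← Measure.restrict_congr_set Ioo_ae_eq_Ioc]
    exact ((hcont.mono (Set.Ioo_subset_Ioo h0 hbq)).aestronglyMeasurable
      measurableSet_Ioo)
  apply IntervalIntegrable.trans (b := q / 2)
  · -- on (0, q/2]
    have base : IntervalIntegrable (fun t : ℝ => t ^ (ε - 1)) volume 0 (q / 2) :=
      intervalIntegral.intervalIntegrable_rpow' (by linarith)
    apply (base.const_mul ((q / 2) ^ (-ε))).mono_fun'
      (hmeas 0 (q / 2) le_rfl (by linarith) hq2.le)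
    rw [Filter.EventuallyLE, ae_restrict_iff' measurableSet_uIoc]
    filter_upwards with t ht
    rw [Set.uIoc_of_le hq2.le] at ht
    have ht0 : 0 < t := ht.1
    have htq : t ≤ q / 2 := ht.2
    have h1 : 0 ≤ t ^ (ε - 1) := Real.rpow_nonneg ht0.le _
    have h2 : (q - t) ^ (-ε) ≤ (q / 2) ^ (-ε) :=
      Real.rpow_le_rpow_of_nonpos hq2 (by linarith) (by linarith)
    have h3 : 0 ≤ (q - t) ^ (-ε) := Real.rpow_nonneg (by linarith) _
    simp only [norm_mul, Real.norm_eq_abs, abs_of_nonneg h1, abs_of_nonneg h3]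
    calc t ^ (ε - 1) * (q - t) ^ (-ε) ≤ t ^ (ε - 1) * (q / 2) ^ (-ε) :=
          mul_le_mul_of_nonneg_left h2 h1
      _ = (q / 2) ^ (-ε) * t ^ (ε - 1) := mul_comm _ _
  · -- on (q/2, q]
    have base : IntervalIntegrable (fun x : ℝ => x ^ (-ε)) volume 0 (q / 2) :=
      intervalIntegral.intervalIntegrable_rpow' (by linarith)
    have comp : IntervalIntegrable (fun x : ℝ => (q - x) ^ (-ε)) volume (q / 2) q := by
      have h2 : q - q / 2 = q / 2 := by ring
      simpa [h2] using (base.comp_sub_left q).symm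
    apply (comp.const_mul ((q / 2) ^ (ε - 1))).mono_fun'
      (hmeas (q / 2) q hq2.le le_rfl (by linarith))
    rw [Filter.EventuallyLE, ae_restrict_iff' measurableSet_uIoc]
    filter_upwards with t ht
    rw [Set.uIoc_of_le (by linarith : q / 2 ≤ q)] at ht
    have ht0 : q / 2 < t := ht.1
    have htq : t ≤ q := ht.2
    have h1 : t ^ (ε - 1) ≤ (q / 2) ^ (ε - 1) :=
      Real.rpow_le_rpow_of_nonpos hq2 ht0.le (by linarith)
    have h2 : 0 ≤ (q - t) ^ (-ε) := Real.rpow_nonneg (by linarith) _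
    have h3 : 0 ≤ t ^ (ε - 1) := Real.rpow_nonneg (by linarith) _
    simp only [norm_mul, Real.norm_eq_abs, abs_of_nonneg h2, abs_of_nonneg h3]
    calc t ^ (ε - 1) * (q - t) ^ (-ε) ≤ (q / 2) ^ (ε - 1) * (q - t) ^ (-ε) :=
          mul_le_mul_of_nonneg_right h1 h2

noncomputable def phiI (ε q μ t : ℝ) : ℝ :=
  t ^ ε / (q - t) ^ ε * ((q ^ μ * (1 - q ^ 2) ^ ε - t ^ μ * (1 - q * t) ^ ε) / (t * (q - t)))

noncomputable def psiI (ε q μ t : ℝ) : ℝ :=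
  t ^ ε / (q - t) ^ ε *
    ((q ^ μ * Real.log q * (1 - q ^ 2) ^ ε - t ^ μ * Real.log t * (1 - q * t) ^ ε) / (t * (q - t)))

lemma aux_aesm {q : ℝ} {f : ℝ → ℝ} (hf : ContinuousOn f (Set.Ioo 0 q))
    {a b : ℝ} (h0 : 0 ≤ a) (hb : b ≤ q) (hab : a ≤ b) :
    AEStronglyMeasurable f (volume.restrict (Set.uIoc a b)) := by
  rw [Set.uIoc_of_le hab, ← Measure.restrict_congr_set Ioo_ae_eq_Ioc]
  exact (hf.mono (Set.Ioo_subset_Ioo h0 hb)).aestronglyMeasurable measurableSet_Ioo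

lemma aux_rpow_contOn {q c : ℝ} : ContinuousOn (fun t : ℝ => t ^ c) (Set.Ioo 0 q) :=
  fun t ht => (continuousAt_id.rpow_const (Or.inl ht.1.ne')).continuousWithinAt

lemma aux_sub_rpow_contOn {q c : ℝ} : ContinuousOn (fun t : ℝ => (q - t) ^ c) (Set.Ioo 0 q) :=
  fun t ht => (((continuous_const.sub continuous_id).continuousAt).rpow_const
    (Or.inl (sub_ne_zero.2 ht.2.ne'))).continuousWithinAt

lemma aux_phi_cont (ε q μ : ℝ) (hq1 : q < 1) :
    ContinuousOn (phiI ε q μ) (Set.Ioo 0 q) := by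
  intro t ht
  have ht0 := ht.1
  have htq := ht.2
  have hne : (q - t) ^ ε ≠ 0 := by
    have : (0:ℝ) < q - t := by linarith
    exact (Real.rpow_pos_of_pos this ε).ne'
  apply ContinuousWithinAt.mul
  · exact (aux_rpow_contOn t ht).div (aux_sub_rpow_contOn t ht) hne
  · apply ContinuousWithinAt.div
    · apply ContinuousWithinAt.sub
      · exact continuousWithinAt_const.mul continuousWithinAt_const
      · exact (aux_rpow_contOn t ht).mul
          (((continuous_const.sub (continuous_const.mul continuous_id)).continuousAt.rpow_const
            (Or.inl (by show 1 - q * t ≠ 0; nlinarith))).continuousWithinAt)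
    · exact (continuousWithinAt_id.mul (continuousWithinAt_const.sub continuousWithinAt_id))
    · have : (0:ℝ) < t * (q - t) := mul_pos ht0 (by linarith)
      exact this.ne'

lemma aux_psi_cont (ε q μ : ℝ) (hq1 : q < 1) :
    ContinuousOn (psiI ε q μ) (Set.Ioo 0 q) := by
  intro t ht
  have ht0 := ht.1
  have htq := ht.2
  have hne : (q - t) ^ ε ≠ 0 := by
    have : (0:ℝ) < q - t := by linarith
    exact (Real.rpow_pos_of_pos this ε).ne'
  apply ContinuousWithinAt.mul
  · exact (aux_rpow_contOn t ht).div (aux_sub_rpow_contOn t ht) hne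
  · apply ContinuousWithinAt.div
    · apply ContinuousWithinAt.sub
      · exact continuousWithinAt_const
      · apply ContinuousWithinAt.mul
        · exact (aux_rpow_contOn t ht).mul
            (Real.continuousAt_log ht0.ne').continuousWithinAt
        · exact (((continuous_const.sub (continuous_const.mul continuous_id)).continuousAt.rpow_const
            (Or.inl (by show 1 - q * t ≠ 0; nlinarith))).continuousWithinAt)
    · exact (continuousWithinAt_id.mul (continuousWithinAt_const.sub continuousWithinAt_id))
    · have : (0:ℝ) < t * (q - t) := mul_pos ht0 (by linarith)
      exact this.ne'

lemma aux_abs_le (ε q : ℝ) (hε : 0 < ε) (hq0 : 0 < q) {M t X : ℝ} (hM : 0 ≤ M)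
    (ht : t ∈ Set.Ioc (0:ℝ) q) (hX : |X| ≤ M * (q - t)) :
    |t ^ ε / (q - t) ^ ε * (X / (t * (q - t)))| ≤ M * (t ^ (ε - 1) * (q - t) ^ (-ε)) := by
  rcases eq_or_lt_of_le ht.2 with heq | hlt
  · subst heq
    simp [Real.zero_rpow hε.ne', Real.zero_rpow (neg_ne_zero.mpr hε.ne'), sub_self]
  · have ht0 : 0 < t := ht.1
    have hqt : 0 < q - t := by linarith
    have hP : 0 < t ^ ε / (q - t) ^ ε :=
      div_pos (Real.rpow_pos_of_pos ht0 ε) (Real.rpow_pos_of_pos hqt ε)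
    have hD : 0 < t * (q - t) := mul_pos ht0 hqt
    rw [abs_mul, abs_of_pos hP, abs_div, abs_of_pos hD]
    have step : t ^ ε / (q - t) ^ ε * (|X| / (t * (q - t)))
        ≤ t ^ ε / (q - t) ^ ε * ((M * (q - t)) / (t * (q - t))) := by
      gcongr
    have eqn : t ^ ε / (q - t) ^ ε * ((M * (q - t)) / (t * (q - t)))
        = M * (t ^ (ε - 1) * (q - t) ^ (-ε)) := by
      rw [Real.rpow_sub_one ht0.ne', Real.rpow_neg hqt.le]
      have h1 : (q - t) ^ ε ≠ 0 := (Real.rpow_pos_of_pos hqt ε).ne'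
      field_simp
    calc t ^ ε / (q - t) ^ ε * (|X| / (t * (q - t)))
        ≤ t ^ ε / (q - t) ^ ε * ((M * (q - t)) / (t * (q - t))) := step
      _ = M * (t ^ (ε - 1) * (q - t) ^ (-ε)) := eqn



/-- F(μ, ε, q) = εq ∫₀^q (t^ε/(q-t)^ε)·(q^μ(1-q²)^ε - t^μ(1-qt)^ε)/(t(q-t)) dt. -/
noncomputable def Falt (μ ε q : ℝ) : ℝ :=
  ε * q * ∫ t in (0:ℝ)..q,
    (t ^ ε / (q - t) ^ ε) * ((q ^ μ * (1 - q ^ 2) ^ ε - t ^ μ * (1 - q * t) ^ ε) / (t * (q - t)))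

/-- For 0 < ε < q < 1: if F(μ₀, ε, q) = 0 for some μ₀ > 0, then
∂F/∂μ(μ₀, ε, q) = εq ∫₀^q (t^ε/(q-t)^ε)·(t^{μ₀}(1-qt)^ε/(t(q-t)))·log(q/t) dt > 0.
Consequently, μ ↦ F(μ, ε, q) has at most one zero in (0, ∞). -/
theorem stmt11 (ε q : ℝ) (hε : 0 < ε) (hεq : ε < q) (hq : q < 1) :
    (∀ μ₀ : ℝ, 0 < μ₀ → Falt μ₀ ε q = 0 →
      deriv (fun μ : ℝ => Falt μ ε q) μ₀
          = ε * q * ∫ t in (0:ℝ)..q,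
              (t ^ ε / (q - t) ^ ε) * (t ^ μ₀ * (1 - q * t) ^ ε / (t * (q - t)))
                * Real.log (q / t) ∧
      0 < ε * q * ∫ t in (0:ℝ)..q,
              (t ^ ε / (q - t) ^ ε) * (t ^ μ₀ * (1 - q * t) ^ ε / (t * (q - t)))
                * Real.log (q / t)) ∧
    ∀ μ₁ μ₂ : ℝ, 0 < μ₁ → 0 < μ₂ → Falt μ₁ ε q = 0 → Falt μ₂ ε q = 0 → μ₁ = μ₂ := by
  have hq0 : 0 < q := hε.trans hεq
  have hε1 : ε < 1 := hεq.trans hq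
  have hFalt : ∀ μ, Falt μ ε q = ε * q * ∫ t in (0:ℝ)..q, phiI ε q μ t := fun _ => rfl
  have hεq0 : ε * q ≠ 0 := by positivity
  -- integrability of phi
  have phi_int : ∀ μ : ℝ, 0 < μ → IntervalIntegrable (phiI ε q μ) volume 0 q := by
    intro μ hμ
    obtain ⟨M, hM0, hM⟩ := aux_num_bound ε q μ μ hε hε1.le hq0 hq hμ le_rfl
    apply ((aux_bound_int ε q hε hε1 hq0).const_mul M).mono_fun'
      (aux_aesm (aux_phi_cont ε q μ hq) le_rfl le_rfl hq0.le)
    rw [Filter.EventuallyLE, ae_restrict_iff' measurableSet_uIoc]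
    filter_upwards with t ht
    rw [Set.uIoc_of_le hq0.le] at ht
    show ‖phiI ε q μ t‖ ≤ M * (t ^ (ε - 1) * (q - t) ^ (-ε))
    rw [Real.norm_eq_abs]
    apply aux_abs_le ε q hε hq0 hM0 ht
    rcases eq_or_lt_of_le ht.2 with heq | hlt
    · subst heq
      have hqq : t * t = t ^ 2 := (sq t).symm
      rw [hqq]
      simp
    · exact (hM t ⟨ht.1, hlt⟩ μ ⟨le_rfl, le_rfl⟩).1
  -- zero integral from zero Falt
  have int_zero : ∀ μ : ℝ, Falt μ ε q = 0 → (∫ t in (0:ℝ)..q, phiI ε q μ t) = 0 := by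
    intro μ h
    rw [hFalt] at h
    rcases mul_eq_zero.mp h with h' | h'
    · exact absurd h' hεq0
    · exact h'
  constructor
  · -- derivative part
    intro μ₀ hμ₀ hzero
    obtain ⟨M, hM0, hM⟩ := aux_num_bound ε q (μ₀ / 2) (3 * μ₀ / 2) hε hε1.le hq0 hq
      (by linarith) (by linarith)
    have hball : Metric.ball μ₀ (μ₀ / 2) ⊆ Set.Icc (μ₀ / 2) (3 * μ₀ / 2) := by
      intro x hx
      rw [Metric.mem_ball, Real.dist_eq, abs_sub_lt_iff] at hx
      exact ⟨by linarith [hx.1, hx.2], by linarith [hx.1, hx.2]⟩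
    have key := intervalIntegral.hasDerivAt_integral_of_dominated_loc_of_deriv_le
      (F := fun μ t => phiI ε q μ t) (F' := fun μ t => psiI ε q μ t) (x₀ := μ₀)
      (a := 0) (b := q) (bound := fun t => M * (t ^ (ε - 1) * (q - t) ^ (-ε)))
      (Metric.ball_mem_nhds μ₀ (by linarith : (0:ℝ) < μ₀ / 2))
      (Filter.Eventually.of_forall
        (fun μ => aux_aesm (aux_phi_cont ε q μ hq) le_rfl le_rfl hq0.le))
      (phi_int μ₀ hμ₀)
      (aux_aesm (aux_psi_cont ε q μ₀ hq) le_rfl le_rfl hq0.le)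
      ?_ ((aux_bound_int ε q hε hε1 hq0).const_mul M) ?_
    rotate_left
    · -- h_bound
      apply Filter.Eventually.of_forall
      intro t ht x hx
      rw [Set.uIoc_of_le hq0.le] at ht
      show ‖psiI ε q x t‖ ≤ M * (t ^ (ε - 1) * (q - t) ^ (-ε))
      rw [Real.norm_eq_abs]
      apply aux_abs_le ε q hε hq0 hM0 ht
      rcases eq_or_lt_of_le ht.2 with heq | hlt
      · subst heq
        have hqq : t * t = t ^ 2 := (sq t).symm
        rw [hqq]
        simp
      · exact (hM t ⟨ht.1, hlt⟩ x (hball hx)).2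
    · -- h_diff
      apply Filter.Eventually.of_forall
      intro t ht x _
      rw [Set.uIoc_of_le hq0.le] at ht
      have h1 := (Real.hasStrictDerivAt_const_rpow hq0 x).hasDerivAt
      have h2 := (Real.hasStrictDerivAt_const_rpow ht.1 x).hasDerivAt
      exact (((h1.mul_const ((1 - q ^ 2) ^ ε)).sub
        (h2.mul_const ((1 - q * t) ^ ε))).div_const (t * (q - t))).const_mul
        (t ^ ε / (q - t) ^ ε)
    -- use key
    have hT_eq : Set.EqOn (psiI ε q μ₀)
        (fun t => Real.log q * phiI ε q μ₀ t +
          t ^ ε / (q - t) ^ ε * (t ^ μ₀ * (1 - q * t) ^ ε / (t * (q - t))) * Real.log (q / t))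
        (Set.uIcc 0 q) := by
      intro t ht
      rcases eq_or_ne t 0 with rfl | ht0
      · simp [psiI, phiI, Real.zero_rpow hε.ne']
      · simp only [psiI, phiI]
        rw [Real.log_div hq0.ne' ht0]
        ring
    have hphi_cm : IntervalIntegrable (fun t => Real.log q * phiI ε q μ₀ t) volume 0 q :=
      (phi_int μ₀ hμ₀).const_mul (Real.log q)
    have hT_int : IntervalIntegrable
        (fun t => t ^ ε / (q - t) ^ ε * (t ^ μ₀ * (1 - q * t) ^ ε / (t * (q - t)))
          * Real.log (q / t)) volume 0 q := by
      apply (key.1.sub hphi_cm).congr_ae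
      rw [Filter.EventuallyEq, ae_restrict_iff' measurableSet_uIoc]
      apply Filter.Eventually.of_forall
      intro t ht
      have ht' : t ∈ Set.uIcc 0 q := Set.uIoc_subset_uIcc ht
      have := hT_eq ht'
      simp only at this ⊢
      linarith [this]
    have hint_eq : (∫ t in (0:ℝ)..q, psiI ε q μ₀ t)
        = ∫ t in (0:ℝ)..q,
            t ^ ε / (q - t) ^ ε * (t ^ μ₀ * (1 - q * t) ^ ε / (t * (q - t)))
              * Real.log (q / t) := by
      rw [intervalIntegral.integral_congr hT_eq,
        intervalIntegral.integral_add hphi_cm hT_int,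
        intervalIntegral.integral_const_mul, int_zero μ₀ hzero, mul_zero, zero_add]
    have hD : HasDerivAt (fun μ : ℝ => Falt μ ε q)
        (ε * q * ∫ t in (0:ℝ)..q, psiI ε q μ₀ t) μ₀ := by
      have heq : (fun μ : ℝ => Falt μ ε q)
          = fun μ => ε * q * ∫ t in (0:ℝ)..q, phiI ε q μ t := funext fun μ => hFalt μ
      rw [heq]
      exact key.2.const_mul (ε * q)
    constructor
    · rw [hD.deriv, hint_eq]
    · apply mul_pos (mul_pos hε hq0)
      apply intervalIntegral_pos_of_pos_on hT_int _ hq0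
      intro t ht
      have ht0 := ht.1
      have htq := ht.2
      have hqt : 0 < q - t := by linarith
      have h1 : 0 < t ^ ε / (q - t) ^ ε :=
        div_pos (Real.rpow_pos_of_pos ht0 ε) (Real.rpow_pos_of_pos hqt ε)
      have h2 : 0 < t ^ μ₀ * (1 - q * t) ^ ε / (t * (q - t)) :=
        div_pos (mul_pos (Real.rpow_pos_of_pos ht0 μ₀)
          (Real.rpow_pos_of_pos (by nlinarith) ε)) (mul_pos ht0 hqt)
      have h3 : 0 < Real.log (q / t) := Real.log_pos ((one_lt_div ht0).2 htq)
      positivity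
  · -- uniqueness
    have keylt : ∀ a b : ℝ, 0 < a → 0 < b → Falt a ε q = 0 → Falt b ε q = 0 → a < b → False := by
      intro a b ha0 hb0 hza hzb hab
      have hIa := int_zero a hza
      have hIb := int_zero b hzb
      have hd_int : IntervalIntegrable
          (fun t => q ^ a * phiI ε q b t - q ^ b * phiI ε q a t) volume 0 q :=
        ((phi_int b hb0).const_mul (q ^ a)).sub ((phi_int a ha0).const_mul (q ^ b))
      have hd_pos : ∀ t ∈ Set.Ioo (0:ℝ) q,
          0 < q ^ a * phiI ε q b t - q ^ b * phiI ε q a t := by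
        intro t ht
        have ht0 := ht.1
        have htq := ht.2
        have hqt : 0 < q - t := by linarith
        have expand : q ^ a * phiI ε q b t - q ^ b * phiI ε q a t
            = t ^ ε / (q - t) ^ ε *
              ((1 - q * t) ^ ε * (q ^ b * t ^ a - q ^ a * t ^ b) / (t * (q - t))) := by
          simp only [phiI]
          ring
        rw [expand]
        have hlt : t ^ (b - a) < q ^ (b - a) :=
          Real.rpow_lt_rpow ht0.le htq (by linarith)
        have hqb : q ^ b = q ^ a * q ^ (b - a) := by
          rw [← Real.rpow_add hq0]; ring_nf
        have htb : t ^ b = t ^ a * t ^ (b - a) := by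
          rw [← Real.rpow_add ht0]; ring_nf
        have hpos : 0 < q ^ b * t ^ a - q ^ a * t ^ b := by
          rw [hqb, htb]
          have h1 : 0 < q ^ a := Real.rpow_pos_of_pos hq0 a
          have h2 : 0 < t ^ a := Real.rpow_pos_of_pos ht0 a
          have : q ^ a * q ^ (b - a) * t ^ a - q ^ a * (t ^ a * t ^ (b - a))
              = q ^ a * t ^ a * (q ^ (b - a) - t ^ (b - a)) := by ring
          rw [this]
          exact mul_pos (mul_pos h1 h2) (by linarith)
        exact mul_pos
          (div_pos (Real.rpow_pos_of_pos ht0 ε) (Real.rpow_pos_of_pos hqt ε))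
          (div_pos (mul_pos (Real.rpow_pos_of_pos (by nlinarith) ε) hpos)
            (mul_pos ht0 hqt))
      have hpos := intervalIntegral_pos_of_pos_on hd_int hd_pos hq0
      have hzero : (∫ t in (0:ℝ)..q,
          (q ^ a * phiI ε q b t - q ^ b * phiI ε q a t)) = 0 := by
        rw [intervalIntegral.integral_sub ((phi_int b hb0).const_mul (q ^ a))
          ((phi_int a ha0).const_mul (q ^ b)),
          intervalIntegral.integral_const_mul, intervalIntegral.integral_const_mul,
          hIa, hIb]
        ring
      linarith
    intro μ₁ μ₂ h1 h2 hz1 hz2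
    rcases lt_trichotomy μ₁ μ₂ with hlt | heq | hlt
    · exact absurd (keylt μ₁ μ₂ h1 h2 hz1 hz2 hlt) (not_false)
    · exact heq
    · exact absurd (keylt μ₂ μ₁ h2 h1 hz2 hz1 hlt) (not_false)
end
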